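/- arXiv:1702.00458 — 10 statements merged into one kernel-verified Lean document; each statement's English description precedes it below -/
import Mathlib

section
/- Let h : ℝ^d → ℝ be differentiable and even, let Φ(θ,w) = h(θ − w), and fix w₁,…,w_k ∈ ℝ^d, a ∈ ℝ^k, b ∈ ℝ^k. Then for every i and every θ = (θ₁,…,θ_k) ∈ (ℝ^d)^k, the gradient of L with respect to θ_i equals ∇_{θ_i} L(θ) = 2 Σ_{j≠i} a_i a_j ∇h(θ_i − θ_j) + 2 Σ_{j=1}^k a_i b_j ∇h(θ_i − w_j). Consequently, a differentiable curve t ↦ (θ₁(t),…,θ_k(t)) satisfies the gradient-flow equations dθ_i/dt = −∇_{θ_i}(L/2)(θ(t)) for all i if and only if it satisfies the electron–proton dynamics dθ_i/dt = −Σ_{j≠i} a_i a_j ∇h(θ_i − θ_j) − Σ_{j=1}^k a_i b_j ∇h(θ_i − w_j) for all i (i.e., pairwise forces given by the potential 2Φ, with the particles w₁,…,w_k of charges b_j held fixed and moving particles θ_i of charges a_i). -/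
open Finset
open InnerProductSpace

section Helpers
variable {F : Type*} [NormedAddCommGroup F] [InnerProductSpace ℝ F] [CompleteSpace F]

theorem sg_add {f g : F → ℝ} {f' g' : F} {x : F} (hf : HasGradientAt f f' x)
    (hg : HasGradientAt g g' x) : HasGradientAt (fun y => f y + g y) (f' + g') x := by
  rw [hasGradientAt_iff_hasFDerivAt, map_add]
  exact hf.hasFDerivAt.add hg.hasFDerivAt

theorem sg_const_mul {f : F → ℝ} {f' : F} {x : F} (c : ℝ) (hf : HasGradientAt f f' x) :
    HasGradientAt (fun y => c * f y) (c • f') x := by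
  rw [hasGradientAt_iff_hasFDerivAt]
  have h1 : (toDual ℝ F) (c • f') = c • (toDual ℝ F) f' := by
    ext z; simp [inner_smul_left]
  rw [h1]
  exact hf.hasFDerivAt.const_mul c

theorem sg_sum {ι : Type*} (s : Finset ι) {f : ι → F → ℝ} {f' : ι → F} {x : F}
    (hf : ∀ i ∈ s, HasGradientAt (f i) (f' i) x) :
    HasGradientAt (fun y => ∑ i ∈ s, f i y) (∑ i ∈ s, f' i) x := by
  rw [hasGradientAt_iff_hasFDerivAt, map_sum]
  exact HasFDerivAt.fun_sum fun i hi => (hf i hi).hasFDerivAt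

theorem sg_sub_right {g : F → ℝ} (hg : Differentiable ℝ g) (c x : F) :
    HasGradientAt (fun y => g (y - c)) (gradient g (x - c)) x := by
  rw [hasGradientAt_iff_hasFDerivAt]
  have h1 : HasFDerivAt g (toDual ℝ F (gradient g (x - c))) (x - c) :=
    (hg (x - c)).hasGradientAt.hasFDerivAt
  have h2 : HasFDerivAt (fun y : F => y - c) (ContinuousLinearMap.id ℝ F) x :=
    (hasFDerivAt_id x).sub_const c
  simpa [Function.comp_def] using h1.comp x h2

theorem sg_grad_neg {g : F → ℝ} (hg : Differentiable ℝ g) (he : ∀ x, g (-x) = g x)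
    (y : F) : gradient g (-y) = -gradient g y := by
  have h1 : HasFDerivAt g (toDual ℝ F (gradient g y)) ((fun x : F => -x) (-y)) := by
    simpa using (hg y).hasGradientAt.hasFDerivAt
  have h2 : HasFDerivAt (fun x : F => -x) (-(ContinuousLinearMap.id ℝ F)) (-y) := by
    exact (hasFDerivAt_id (-y : F)).neg
  have h3 := h1.comp (-y) h2
  have hfun : g ∘ Neg.neg = g := funext he
  rw [hfun] at h3
  have hD : (toDual ℝ F (gradient g y)).comp (-(ContinuousLinearMap.id ℝ F))
      = toDual ℝ F (-gradient g y) := by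
    ext z; simp
  rw [hD] at h3
  simpa [gradient] using h3.hasGradientAt.gradient

theorem sg_sub_left {g : F → ℝ} (hg : Differentiable ℝ g) (he : ∀ x, g (-x) = g x)
    (c x : F) : HasGradientAt (fun y => g (c - y)) (gradient g (x - c)) x := by
  rw [hasGradientAt_iff_hasFDerivAt]
  have h1 : HasFDerivAt g (toDual ℝ F (gradient g (c - x))) ((fun y : F => c - y) x) :=
    (hg (c - x)).hasGradientAt.hasFDerivAt
  have h2 : HasFDerivAt (fun y : F => c - y) (-(ContinuousLinearMap.id ℝ F)) x := by
    simpa using ((hasFDerivAt_id x).const_sub c)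
  have h3 := h1.comp x h2
  have hD : (toDual ℝ F (gradient g (c - x))).comp (-(ContinuousLinearMap.id ℝ F))
      = toDual ℝ F (gradient g (x - c)) := by
    have : gradient g (x - c) = -gradient g (c - x) := by
      rw [← sg_grad_neg hg he, neg_sub]
    rw [this]; ext z; simp
  rw [hD] at h3
  exact h3

end Helpers

theorem sg_key {d k : ℕ} (h : EuclideanSpace ℝ (Fin d) → ℝ)
    (hdiff : Differentiable ℝ h) (heven : ∀ x, h (-x) = h x)
    (w : Fin k → EuclideanSpace ℝ (Fin d)) (a b : Fin k → ℝ)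
    (θ : Fin k → EuclideanSpace ℝ (Fin d)) (i : Fin k) :
    HasGradientAt (fun x => ∑ i', ∑ j',
      (a i' * a j' * h (Function.update θ i x i' - Function.update θ i x j')
        + 2 * (a i' * b j') * h (Function.update θ i x i' - w j')
        + b i' * b j' * h (w i' - w j')))
      ((2:ℝ) • (∑ j ∈ Finset.univ.erase i, (a i * a j) • gradient h (θ i - θ j))
        + (2:ℝ) • ∑ j, (a i * b j) • gradient h (θ i - w j)) (θ i) := by
  classical
  set G : Fin k → Fin k → EuclideanSpace ℝ (Fin d) := fun i' j' =>
    (if i' = i ∧ j' ≠ i then (a i' * a j') • gradient h (θ i - θ j') else 0)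
    + (if j' = i ∧ i' ≠ i then (a i' * a i) • gradient h (θ i - θ i') else 0)
    + (if i' = i then (2 * (a i' * b j')) • gradient h (θ i - w j') else 0) with hGdef
  have hG : ∀ i' j', HasGradientAt (fun x =>
      a i' * a j' * h (Function.update θ i x i' - Function.update θ i x j')
        + 2 * (a i' * b j') * h (Function.update θ i x i' - w j')
        + b i' * b j' * h (w i' - w j')) (G i' j') (θ i) := by
    intro i' j'
    by_cases hi' : i' = i
    · by_cases hj' : j' = i
      · have hfun : (fun x =>
            a i' * a j' * h (Function.update θ i x i' - Function.update θ i x j')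
              + 2 * (a i' * b j') * h (Function.update θ i x i' - w j')
              + b i' * b j' * h (w i' - w j'))
            = fun x : EuclideanSpace ℝ (Fin d) =>
              a i * a i * h 0 + 2 * (a i * b i) * h (x - w i) + b i * b i * h 0 := by
          funext x
          rw [hi', hj', Function.update_self, sub_self, sub_self]
        have hGv : G i' j' = (0 + (2 * (a i * b i)) • gradient h (θ i - w i)) + 0 := by
          simp [hGdef, hi', hj']
        rw [hfun, hGv]
        exact sg_add (sg_add (hasGradientAt_const _ _)
          (sg_const_mul _ (sg_sub_right hdiff (w i) (θ i)))) (hasGradientAt_const _ _)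
      · have hfun : (fun x =>
            a i' * a j' * h (Function.update θ i x i' - Function.update θ i x j')
              + 2 * (a i' * b j') * h (Function.update θ i x i' - w j')
              + b i' * b j' * h (w i' - w j'))
            = fun x : EuclideanSpace ℝ (Fin d) =>
              a i * a j' * h (x - θ j') + 2 * (a i * b j') * h (x - w j')
                + b i * b j' * h (w i - w j') := by
          funext x
          rw [hi', Function.update_self, Function.update_of_ne hj']
        have hGv : G i' j' = ((a i * a j') • gradient h (θ i - θ j')
            + (2 * (a i * b j')) • gradient h (θ i - w j')) + 0 := by
          simp [hGdef, hi', hj']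
        rw [hfun, hGv]
        exact sg_add (sg_add (sg_const_mul _ (sg_sub_right hdiff (θ j') (θ i)))
          (sg_const_mul _ (sg_sub_right hdiff (w j') (θ i)))) (hasGradientAt_const _ _)
    · by_cases hj' : j' = i
      · have hfun : (fun x =>
            a i' * a j' * h (Function.update θ i x i' - Function.update θ i x j')
              + 2 * (a i' * b j') * h (Function.update θ i x i' - w j')
              + b i' * b j' * h (w i' - w j'))
            = fun x : EuclideanSpace ℝ (Fin d) =>
              a i' * a i * h (θ i' - x) + 2 * (a i' * b i) * h (θ i' - w i)
                + b i' * b i * h (w i' - w i) := by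
          funext x
          rw [hj', Function.update_of_ne hi', Function.update_self]
        have hGv : G i' j' = (((a i' * a i) • gradient h (θ i - θ i')) + 0) + 0 := by
          simp [hGdef, hi', hj']
        rw [hfun, hGv]
        exact sg_add (sg_add (sg_const_mul _ (sg_sub_left hdiff heven (θ i') (θ i)))
          (hasGradientAt_const _ _)) (hasGradientAt_const _ _)
      · have hfun : (fun x =>
            a i' * a j' * h (Function.update θ i x i' - Function.update θ i x j')
              + 2 * (a i' * b j') * h (Function.update θ i x i' - w j')
              + b i' * b j' * h (w i' - w j'))
            = fun _ : EuclideanSpace ℝ (Fin d) =>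
              a i' * a j' * h (θ i' - θ j') + 2 * (a i' * b j') * h (θ i' - w j')
                + b i' * b j' * h (w i' - w j') := by
          funext x
          rw [Function.update_of_ne hi', Function.update_of_ne hj']
        have hGv : G i' j' = 0 := by simp [hGdef, hi', hj']
        rw [hfun, hGv]
        exact hasGradientAt_const _ _
  have hsum : HasGradientAt (fun x => ∑ i', ∑ j',
      (a i' * a j' * h (Function.update θ i x i' - Function.update θ i x j')
        + 2 * (a i' * b j') * h (Function.update θ i x i' - w j')
        + b i' * b j' * h (w i' - w j')))
      (∑ i', ∑ j', G i' j') (θ i) :=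
    sg_sum _ fun i' _ => sg_sum _ fun j' _ => hG i' j'
  have hrow : ∀ i', (∑ j', G i' j') =
      if i' = i then (∑ j ∈ Finset.univ.erase i, (a i * a j) • gradient h (θ i - θ j)
          + ∑ j, (2 * (a i * b j)) • gradient h (θ i - w j))
      else (a i' * a i) • gradient h (θ i - θ i') := by
    intro i'
    by_cases hi' : i' = i
    · rw [if_pos hi']
      have hGrow : ∀ j', G i' j' = (if j' ≠ i then (a i * a j') • gradient h (θ i - θ j') else 0)
          + (2 * (a i * b j')) • gradient h (θ i - w j') := by
        intro j'
        by_cases hj' : j' = i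
        · simp [hGdef, hi', hj']
        · simp [hGdef, hi', hj']
      simp only [hGrow]
      rw [Finset.sum_add_distrib]
      congr 1
      rw [← Finset.sum_filter, Finset.filter_ne']
    · rw [if_neg hi']
      have hGrow : ∀ j', G i' j'
          = (if j' = i then (a i' * a i) • gradient h (θ i - θ i') else 0) := by
        intro j'
        by_cases hj' : j' = i
        · simp [hGdef, hi', hj']
        · simp [hGdef, hi', hj']
      simp only [hGrow]
      rw [Finset.sum_ite_eq' Finset.univ i (fun _ => (a i' * a i) • gradient h (θ i - θ i'))]
      simp
  have hGsum : (∑ i', ∑ j', G i' j')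
      = (2:ℝ) • (∑ j ∈ Finset.univ.erase i, (a i * a j) • gradient h (θ i - θ j))
        + (2:ℝ) • ∑ j, (a i * b j) • gradient h (θ i - w j) := by
    simp only [hrow]
    rw [← Finset.add_sum_erase Finset.univ _ (Finset.mem_univ i), if_pos rfl]
    have h2 : ∑ i' ∈ Finset.univ.erase i,
        (if i' = i then (∑ j ∈ Finset.univ.erase i, (a i * a j) • gradient h (θ i - θ j)
          + ∑ j, (2 * (a i * b j)) • gradient h (θ i - w j))
        else (a i' * a i) • gradient h (θ i - θ i'))
        = ∑ j ∈ Finset.univ.erase i, (a i * a j) • gradient h (θ i - θ j) := by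
      refine Finset.sum_congr rfl fun i' hi' => ?_
      rw [if_neg (Finset.ne_of_mem_erase hi'), mul_comm]
    rw [h2]
    have h3 : ∑ j, (2 * (a i * b j)) • gradient h (θ i - w j)
        = (2:ℝ) • ∑ j, (a i * b j) • gradient h (θ i - w j) := by
      rw [Finset.smul_sum]
      exact Finset.sum_congr rfl fun j _ => by rw [smul_smul]
    rw [h3]
    module
  rw [← hGsum]
  exact hsum


/-- For the depth-two loss with translationally invariant potential
`Φ(θ,w) = h(θ - w)` (with `h` differentiable and even), the gradient of `L` with
respect to the block variable `θᵢ` equals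
`2 ∑_{j≠i} aᵢaⱼ ∇h(θᵢ-θⱼ) + 2 ∑_j aᵢbⱼ ∇h(θᵢ-wⱼ)`; consequently, a differentiable
curve follows the gradient flow of `L/2` iff it follows the electron–proton
dynamics with pairwise forces given by the potential `2Φ`. -/
theorem stmt0 {d k : ℕ}
    (h : EuclideanSpace ℝ (Fin d) → ℝ)
    (hdiff : Differentiable ℝ h) (heven : ∀ x, h (-x) = h x)
    (w : Fin k → EuclideanSpace ℝ (Fin d)) (a b : Fin k → ℝ)
    (L : (Fin k → EuclideanSpace ℝ (Fin d)) → ℝ)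
    (hL : L = fun θ => ∑ i, ∑ j,
      (a i * a j * h (θ i - θ j) + 2 * (a i * b j) * h (θ i - w j)
        + b i * b j * h (w i - w j))) :
    (∀ (θ : Fin k → EuclideanSpace ℝ (Fin d)) (i : Fin k),
      gradient (fun x => L (Function.update θ i x)) (θ i)
        = (2:ℝ) • (∑ j ∈ Finset.univ.erase i, (a i * a j) • gradient h (θ i - θ j))
          + (2:ℝ) • ∑ j, (a i * b j) • gradient h (θ i - w j)) ∧
    (∀ θt : ℝ → Fin k → EuclideanSpace ℝ (Fin d),
      (∀ i, Differentiable ℝ (fun t => θt t i)) →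
      ((∀ (t : ℝ) (i : Fin k), HasDerivAt (fun s => θt s i)
          (-gradient (fun x => (1/2 : ℝ) * L (Function.update (θt t) i x)) (θt t i)) t)
        ↔ (∀ (t : ℝ) (i : Fin k), HasDerivAt (fun s => θt s i)
          (-((∑ j ∈ Finset.univ.erase i, (a i * a j) • gradient h (θt t i - θt t j))
            + ∑ j, (a i * b j) • gradient h (θt t i - w j))) t))) := by
  constructor
  · intro θ i
    have hkey := (sg_key h hdiff heven w a b θ i).gradient
    rw [hL]
    exact hkey
  · intro θt _
    have hval : ∀ (t : ℝ) (i : Fin k),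
        gradient (fun x => (1/2 : ℝ) * L (Function.update (θt t) i x)) (θt t i)
          = (∑ j ∈ Finset.univ.erase i, (a i * a j) • gradient h (θt t i - θt t j))
            + ∑ j, (a i * b j) • gradient h (θt t i - w j) := by
      intro t i
      have h1 := (sg_const_mul (1/2 : ℝ) (sg_key h hdiff heven w a b (θt t) i)).gradient
      have h2 : gradient (fun x => (1/2 : ℝ) * L (Function.update (θt t) i x)) (θt t i)
          = (1/2 : ℝ) • ((2:ℝ) • (∑ j ∈ Finset.univ.erase i,
              (a i * a j) • gradient h (θt t i - θt t j))
            + (2:ℝ) • ∑ j, (a i * b j) • gradient h (θt t i - w j)) := by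
        rw [hL]; exact h1
      rw [h2]
      module
    constructor
    · intro H t i
      have hH := H t i
      rwa [hval] at hH
    · intro H t i
      have hH := H t i
      rwa [hval]
end

section
/- Let f(ρ) = Σ_{i=0}^n c_i ρ^i be a real polynomial with nonnegative coefficients c_i ≥ 0, and define the activation σ(z) = Σ_{i=0}^n √(c_i) · He_i(z)/√(i!), where He_i is the i-th probabilists' Hermite polynomial. Then for all unit vectors u, v ∈ ℝ^d, ∫_{ℝ^d} σ(⟨u, x⟩) σ(⟨v, x⟩) dμ_d(x) = f(⟨u, v⟩). That is, every polynomial with nonnegative Taylor coefficients is a realizable rotationally invariant potential on the unit sphere under standard Gaussian inputs. -/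
open MeasureTheory ProbabilityTheory RealInnerProductSpace Finset
open scoped ENNReal NNReal

/-- The standard Gaussian measure `N(0, I_d)` on `ℝ^d`. -/
noncomputable def stdGaussian (d : ℕ) : Measure (EuclideanSpace ℝ (Fin d)) :=
  (Measure.pi fun _ : Fin d => gaussianReal 0 1).map (WithLp.toLp 2)

/-- The `i`-th probabilists' Hermite polynomial evaluated at `z : ℝ`. -/
noncomputable def He (i : ℕ) (z : ℝ) : ℝ := Polynomial.aeval z (Polynomial.hermite i)

section Aux
open Real MvPolynomial

noncomputable abbrev γ1 : Measure ℝ := gaussianReal 0 1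


noncomputable def gPdf (x : ℝ) : ℝ := (Real.sqrt (2 * π))⁻¹ * Real.exp (-x ^ 2 / 2)

lemma gPdf_eq (x : ℝ) : gaussianPDFReal 0 1 x = gPdf x := by
  simp [gaussianPDFReal, gPdf]

lemma integral_gaussianReal_eq (f : ℝ → ℝ) :
    ∫ x, f x ∂(gaussianReal 0 1) = ∫ x, gPdf x * f x := by
  rw [gaussianReal_of_var_ne_zero 0 one_ne_zero]
  unfold gaussianPDF
  have : ∀ x, ENNReal.ofReal (gaussianPDFReal 0 1 x)
      = ((gaussianPDFReal 0 1 x).toNNReal : ℝ≥0∞) := fun x => rfl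
  simp_rw [this]
  rw [integral_withDensity_eq_integral_smul]
  · apply integral_congr_ae; filter_upwards with x
    rw [NNReal.smul_def, Real.coe_toNNReal _ (gaussianPDFReal_nonneg 0 1 x), gPdf_eq,
      smul_eq_mul]
  · exact (measurable_gaussianPDFReal 0 1).real_toNNReal

lemma integrable_pow_mul_gauss (b : ℝ) (hb : 0 < b) (n : ℕ) :
    Integrable fun x : ℝ => x ^ n * Real.exp (-b * x ^ 2) := by
  have := integrable_rpow_mul_exp_neg_mul_sq hb (s := n) (neg_one_lt_zero.trans_le (Nat.cast_nonneg n))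
  simpa [Real.rpow_natCast] using this

noncomputable def gexp (x : ℝ) : ℝ := Real.exp (-x ^ 2 / 2)

lemma integrable_pow_gexp (n : ℕ) : Integrable fun x : ℝ => x ^ n * gexp x := by
  have := integrable_pow_mul_gauss (1/2) (by norm_num) n
  refine this.congr ?_
  filter_upwards with x
  unfold gexp; ring_nf

lemma hasDerivAt_pow_gexp (k : ℕ) (x : ℝ) :
    HasDerivAt (fun x => x ^ k * gexp x)
      ((k : ℝ) * x ^ (k - 1) * gexp x - x ^ (k + 1) * gexp x) x := by
  have h1 : HasDerivAt (fun x : ℝ => -x ^ 2 / 2) (-x) x := by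
    have := ((hasDerivAt_pow 2 x).neg.div_const 2)
    refine this.congr_deriv ?_; norm_num; ring
  have h2 : HasDerivAt (fun x => gexp x) (gexp x * -x) x := h1.exp
  have := (hasDerivAt_pow k x).mul h2
  refine this.congr_deriv ?_
  unfold gexp; ring

lemma norm_pow_gexp (k : ℕ) (x : ℝ) :
    ‖x ^ k * gexp x‖ = |x| ^ (k : ℝ) * Real.exp (-(1/2) * x ^ 2) := by
  unfold gexp
  rw [norm_mul, norm_pow, Real.norm_eq_abs, Real.norm_eq_abs, Real.abs_exp,
    Real.rpow_natCast]
  congr 1; ring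

lemma tendsto_pow_gexp_atTop (k : ℕ) :
    Filter.Tendsto (fun x => x ^ k * gexp x) Filter.atTop (nhds 0) := by
  have h := tendsto_rpow_abs_mul_exp_neg_mul_sq_cocompact (a := 1/2) (by norm_num) k
  rw [cocompact_eq_atBot_atTop] at h
  exact squeeze_zero_norm (fun x => (norm_pow_gexp k x).le) (h.mono_left le_sup_right)

lemma tendsto_pow_gexp_atBot (k : ℕ) :
    Filter.Tendsto (fun x => x ^ k * gexp x) Filter.atBot (nhds 0) := by
  have h := tendsto_rpow_abs_mul_exp_neg_mul_sq_cocompact (a := 1/2) (by norm_num) k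
  rw [cocompact_eq_atBot_atTop] at h
  exact squeeze_zero_norm (fun x => (norm_pow_gexp k x).le) (h.mono_left le_sup_left)

lemma integral_deriv_pow_gexp (k : ℕ) :
    ∫ x, ((k : ℝ) * x ^ (k - 1) * gexp x - x ^ (k + 1) * gexp x) = 0 := by
  have hint : Integrable fun x : ℝ => (k : ℝ) * x ^ (k - 1) * gexp x - x ^ (k + 1) * gexp x := by
    have h1 := (integrable_pow_gexp (k - 1)).const_mul (k : ℝ)
    have h2 := integrable_pow_gexp (k + 1)
    refine (h1.sub h2).congr ?_
    filter_upwards with x; simp only [Pi.sub_apply]; ring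
  rw [← intervalIntegral.integral_Iic_add_Ioi (b := 0) hint.integrableOn hint.integrableOn]
  have hIoi : ∫ x in Set.Ioi 0, ((k : ℝ) * x ^ (k - 1) * gexp x - x ^ (k + 1) * gexp x)
      = 0 - (0 : ℝ) ^ k * gexp 0 :=
    MeasureTheory.integral_Ioi_of_hasDerivAt_of_tendsto' (m := 0)
      (fun x _ => hasDerivAt_pow_gexp k x) hint.integrableOn (tendsto_pow_gexp_atTop k)
  have hIic : ∫ x in Set.Iic 0, ((k : ℝ) * x ^ (k - 1) * gexp x - x ^ (k + 1) * gexp x)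
      = (0 : ℝ) ^ k * gexp 0 - 0 :=
    MeasureTheory.integral_Iic_of_hasDerivAt_of_tendsto' (m := 0)
      (fun x _ => hasDerivAt_pow_gexp k x) hint.integrableOn (tendsto_pow_gexp_atBot k)
  rw [hIoi, hIic]; ring

lemma integral_pow_gexp_rec (k : ℕ) :
    ∫ x, x ^ (k + 1) * gexp x = (k : ℝ) * ∫ x, x ^ (k - 1) * gexp x := by
  have h0 := integral_deriv_pow_gexp k
  have h1 := (integrable_pow_gexp (k - 1)).const_mul (k : ℝ)
  have h2 := integrable_pow_gexp (k + 1)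
  have h3 : (∫ x, (k : ℝ) * (x ^ (k - 1) * gexp x)) - ∫ x, x ^ (k + 1) * gexp x = 0 := by
    rw [← integral_sub h1 h2]
    rw [← h0]; congr 1; funext a; ring
  rw [integral_const_mul] at h3
  linarith

lemma stein_pow (k : ℕ) :
    ∫ x, x ^ (k + 1) ∂(gaussianReal 0 1) = (k : ℝ) * ∫ x, x ^ (k - 1) ∂(gaussianReal 0 1) := by
  rw [integral_gaussianReal_eq, integral_gaussianReal_eq, ← integral_const_mul]
  have hc : ∀ (m : ℕ), (fun x => gPdf x * x ^ m) = fun x => (Real.sqrt (2 * Real.pi))⁻¹ * (x ^ m * gexp x) := by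
    intro m; funext x; unfold gPdf gexp; ring
  calc ∫ x, gPdf x * x ^ (k + 1)
      = (Real.sqrt (2 * Real.pi))⁻¹ * ∫ x, x ^ (k + 1) * gexp x := by
        rw [hc, integral_const_mul]
    _ = (Real.sqrt (2 * Real.pi))⁻¹ * ((k : ℝ) * ∫ x, x ^ (k - 1) * gexp x) := by
        rw [integral_pow_gexp_rec]
    _ = ∫ x, (k : ℝ) * (gPdf x * x ^ (k - 1)) := by
        rw [integral_const_mul, hc, integral_const_mul]; ring

lemma integrable_pow_gaussianReal (n : ℕ) :
    Integrable (fun x : ℝ => x ^ n) (gaussianReal 0 1) := by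
  rw [gaussianReal_of_var_ne_zero 0 one_ne_zero]
  unfold gaussianPDF
  have hrw : ∀ x : ℝ, ENNReal.ofReal (gaussianPDFReal 0 1 x)
      = ((gaussianPDFReal 0 1 x).toNNReal : ℝ≥0∞) := fun x => rfl
  simp_rw [hrw]
  rw [integrable_withDensity_iff_integrable_smul
    ((measurable_gaussianPDFReal 0 1).real_toNNReal)]
  have : Integrable fun x : ℝ => (Real.sqrt (2 * Real.pi))⁻¹ * (x ^ n * gexp x) :=
    (integrable_pow_gexp n).const_mul _
  refine this.congr ?_
  filter_upwards with x
  rw [NNReal.smul_def, Real.coe_toNNReal _ (gaussianPDFReal_nonneg 0 1 x), gPdf_eq,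
    smul_eq_mul]
  unfold gPdf gexp; ring




lemma integrable_pi_prod {d : ℕ} (f : Fin d → ℝ → ℝ) (hf : ∀ i, Integrable (f i) γ1) :
    Integrable (fun x : Fin d → ℝ => ∏ i, f i (x i)) (Measure.pi fun _ => γ1) := by
  induction d with
  | zero => simp only [Finset.univ_eq_empty, Finset.prod_empty]
            exact integrable_const 1
  | succ n ih =>
      have h := ((measurePreserving_piFinSuccAbove (fun _ : Fin (n+1) => γ1) 0).symm)
      rw [← h.integrable_comp_emb (MeasurableEquiv.measurableEmbedding _)]
      simp_rw [MeasurableEquiv.piFinSuccAbove_symm_apply, Fin.insertNthEquiv,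
        Fin.prod_univ_succ, Fin.insertNth_zero]
      simp only [Fin.zero_succAbove, Function.comp_def, Fin.cons_zero, Fin.cons_succ,
        Equiv.coe_fn_mk]
      exact Integrable.mul_prod (hf 0) (ih (fun i => f i.succ) (fun i => hf _))
  
lemma integral_pi_prod {d : ℕ} (f : Fin d → ℝ → ℝ) :
    ∫ x : Fin d → ℝ, (∏ i, f i (x i)) ∂(Measure.pi fun _ => γ1)
      = ∏ i, ∫ x, f i x ∂γ1 := by
  induction d with
  | zero => simp
  | succ n ih =>
      calc ∫ x : Fin (n+1) → ℝ, (∏ i, f i (x i)) ∂(Measure.pi fun _ => γ1)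
          = ∫ x : ℝ × (Fin n → ℝ),
              f 0 x.1 * ∏ i : Fin n, f i.succ (x.2 i)
              ∂(γ1.prod (Measure.pi fun _ => γ1)) := by
            rw [← ((measurePreserving_piFinSuccAbove (fun _ : Fin (n+1) => γ1) 0).symm).integral_comp']
            congr 1
            funext x
            simp [MeasurableEquiv.piFinSuccAbove_symm_apply, Fin.insertNthEquiv,
              Fin.prod_univ_succ, Fin.insertNth_zero, Fin.zero_succAbove]
        _ = (∫ x, f 0 x ∂γ1) * ∏ i : Fin n, ∫ x, f i.succ x ∂γ1 := by
            rw [← ih (fun i => f i.succ), ← integral_prod_mul]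
        _ = ∏ i, ∫ x, f i x ∂γ1 := by rw [Fin.prod_univ_succ]


noncomputable def mom (j : ℕ) : ℝ := ∫ x, x ^ j ∂γ1

variable {d : ℕ}

noncomputable abbrev piG (d : ℕ) : Measure (Fin d → ℝ) := Measure.pi fun _ => γ1

lemma eval_monomial_eq (u : Fin d →₀ ℕ) (a : ℝ) (x : Fin d → ℝ) :
    eval x (monomial u a) = a * ∏ i, x i ^ u i := by
  rw [eval_monomial]; congr 1; exact Finsupp.prod_pow u _

lemma integrable_eval (P : MvPolynomial (Fin d) ℝ) :
    Integrable (fun x : Fin d → ℝ => eval x P) (piG d) := by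
  refine induction_on' P (fun u a => ?_) (fun p q hp hq => ?_)
  · simp_rw [eval_monomial_eq]
    exact (integrable_pi_prod (fun i y => y ^ u i)
      (fun i => integrable_pow_gaussianReal (u i))).const_mul a
  · simp_rw [eval_add]; exact hp.add hq

lemma integral_eval_monomial (u : Fin d →₀ ℕ) (a : ℝ) :
    ∫ x, eval x (monomial u a) ∂(piG d) = a * ∏ i, mom (u i) := by
  simp_rw [eval_monomial_eq]
  rw [integral_const_mul, integral_pi_prod (fun i y => y ^ u i)]
  rfl

lemma prod_mom_single (u : Fin d →₀ ℕ) (k : Fin d) :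
    ∏ j : Fin d, mom ((u + Finsupp.single k 1 : Fin d →₀ ℕ) j)
      = (u k : ℝ) * ∏ j : Fin d, mom ((u - Finsupp.single k 1 : Fin d →₀ ℕ) j) := by
  set s1 : Fin d →₀ ℕ := u + Finsupp.single k 1 with hs1
  set s2 : Fin d →₀ ℕ := u - Finsupp.single k 1 with hs2
  rw [← Finset.mul_prod_erase univ (fun j => mom (s1 j)) (mem_univ k),
      ← Finset.mul_prod_erase univ (fun j => mom (s2 j)) (mem_univ k)]
  have h1 : s1 k = u k + 1 := by rw [hs1]; simp
  have h2 : s2 k = u k - 1 := by rw [hs2, Finsupp.tsub_apply]; simp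
  have h3 : mom (u k + 1) = (u k : ℝ) * mom (u k - 1) := stein_pow (u k)
  rw [h1, h2, h3, mul_assoc]
  congr 1
  congr 1
  refine Finset.prod_congr rfl (fun j hj => ?_)
  have hjk : j ≠ k := (Finset.mem_erase.mp hj).1
  rw [hs1, hs2, Finsupp.add_apply, Finsupp.tsub_apply,
    Finsupp.single_eq_of_ne' (Ne.symm hjk)]
  simp

lemma stein_mv (k : Fin d) (P : MvPolynomial (Fin d) ℝ) :
    ∫ x, eval x (X k * P) ∂(piG d) = ∫ x, eval x (pderiv k P) ∂(piG d) := by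
  refine induction_on' P (fun u a => ?_) (fun p q hp hq => ?_)
  · have hX : X k * monomial u a = monomial (u + Finsupp.single k 1) a := by
      rw [add_comm, monomial_single_add, pow_one]
    rw [hX, pderiv_monomial, integral_eval_monomial, integral_eval_monomial,
      prod_mom_single]
    push_cast
    ring
  · rw [mul_add, map_add (pderiv k)]
    simp_rw [eval_add]
    rw [integral_add (_root_.integrable_eval _) (_root_.integrable_eval _),
        integral_add (_root_.integrable_eval _) (_root_.integrable_eval _), hp, hq]

-- Hermite layer


lemma derivative_hermite : ∀ n : ℕ, Polynomial.derivative (Polynomial.hermite n)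
    = (n : Polynomial ℤ) * Polynomial.hermite (n - 1) := by
  intro n
  induction n using Nat.strong_induction_on with
  | _ n ih =>
    match n with
    | 0 => simp [Polynomial.hermite_zero]
    | 1 => simp [Polynomial.hermite_one, Polynomial.hermite_zero]
    | (m+2) =>
      have ih1 := ih (m+1) (by omega)
      have ih0 := ih m (by omega)
      simp only [Nat.add_sub_cancel] at ih1
      rw [show m + 2 - 1 = m + 1 from rfl]
      rw [Polynomial.hermite_succ (m+1), Polynomial.derivative_sub, Polynomial.derivative_mul,
        Polynomial.derivative_X, one_mul, ih1, Polynomial.derivative_mul,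
        Polynomial.derivative_natCast, zero_mul, zero_add, ih0,
        Polynomial.hermite_succ m, ih0]
      push_cast
      ring

noncomputable def hr (m : ℕ) : Polynomial ℝ := (Polynomial.hermite m).map (Int.castRingHom ℝ)

lemma derivative_hr (m : ℕ) :
    Polynomial.derivative (hr m) = (m : Polynomial ℝ) * hr (m - 1) := by
  unfold hr
  rw [Polynomial.derivative_map, derivative_hermite, Polynomial.map_mul, Polynomial.map_natCast]

lemma hr_succ (m : ℕ) :
    hr (m + 1) = Polynomial.X * hr m - (m : Polynomial ℝ) * hr (m - 1) := by
  unfold hr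
  rw [Polynomial.hermite_succ, Polynomial.map_sub, Polynomial.map_mul, Polynomial.map_X,
    ← Polynomial.derivative_map, ← hr, derivative_hr]
  rfl

lemma hr_zero : hr 0 = 1 := by
  unfold hr; rw [Polynomial.hermite_zero, Polynomial.map_C]; norm_num

lemma He_eq (m : ℕ) (z : ℝ) : He m z = (hr m).eval z := by
  unfold He hr
  rw [Polynomial.aeval_def, Polynomial.eval₂_eq_eval_map]
  rfl

-- MvPolynomial Hermite composition
noncomputable def Lw (w : Fin d → ℝ) : MvPolynomial (Fin d) ℝ := ∑ k, C (w k) * X k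

noncomputable def Qp (w : Fin d → ℝ) (m : ℕ) : MvPolynomial (Fin d) ℝ :=
  Polynomial.aeval (Lw w) (hr m)

lemma eval_Lw (w : Fin d → ℝ) (x : Fin d → ℝ) : eval x (Lw w) = ∑ k, w k * x k := by
  unfold Lw; rw [map_sum]; simp

lemma eval_Qp (w : Fin d → ℝ) (x : Fin d → ℝ) (m : ℕ) :
    eval x (Qp w m) = He m (∑ k, w k * x k) := by
  have h := Polynomial.aeval_algHom_apply (MvPolynomial.aeval (R := ℝ) x) (Lw w) (hr m)
  unfold Qp
  have h2 : eval x (Polynomial.aeval (Lw w) (hr m))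
      = Polynomial.aeval (eval x (Lw w)) (hr m) := h.symm
  rw [h2, eval_Lw, He_eq]
  simp [Polynomial.aeval_def, Polynomial.eval₂_eq_eval_map]

lemma pderiv_Lw (k : Fin d) (w : Fin d → ℝ) : pderiv k (Lw w) = C (w k) := by
  unfold Lw
  rw [map_sum, Finset.sum_eq_single k]
  · rw [pderiv_C_mul, pderiv_X_self, mul_one]
  · intro j _ hj
    rw [pderiv_C_mul, pderiv_X_of_ne hj, mul_zero]
  · simp

lemma pderiv_aeval_poly (k : Fin d) (L : MvPolynomial (Fin d) ℝ) (p : Polynomial ℝ) :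
    pderiv k (Polynomial.aeval L p)
      = Polynomial.aeval L (Polynomial.derivative p) * pderiv k L := by
  induction p using Polynomial.induction_on' with
  | add p q hp hq => simp only [map_add, hp, hq]; ring
  | monomial n a =>
    rw [Polynomial.aeval_monomial, Polynomial.derivative_monomial, Polynomial.aeval_monomial,
      MvPolynomial.algebraMap_eq, pderiv_C_mul, pderiv_pow, map_mul, map_natCast C]
    ring

lemma pderiv_Qp (k : Fin d) (w : Fin d → ℝ) (m : ℕ) :
    pderiv k (Qp w m) = C (w k) * ((m : MvPolynomial (Fin d) ℝ) * Qp w (m - 1)) := by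
  unfold Qp
  rw [pderiv_aeval_poly, derivative_hr, pderiv_Lw, map_mul, map_natCast]
  ring

-- integral helper
noncomputable def Jint (d : ℕ) (P : MvPolynomial (Fin d) ℝ) : ℝ := ∫ x, eval x P ∂(piG d)

lemma Jint_sub (P Q : MvPolynomial (Fin d) ℝ) : Jint d (P - Q) = Jint d P - Jint d Q := by
  unfold Jint; simp_rw [eval_sub]
  exact integral_sub (integrable_eval _) (integrable_eval _)

lemma Jint_add (P Q : MvPolynomial (Fin d) ℝ) : Jint d (P + Q) = Jint d P + Jint d Q := by
  unfold Jint; simp_rw [eval_add]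
  exact integral_add (integrable_eval _) (integrable_eval _)

lemma Jint_C_mul (a : ℝ) (P : MvPolynomial (Fin d) ℝ) : Jint d (C a * P) = a * Jint d P := by
  unfold Jint; simp_rw [eval_mul, eval_C]
  exact integral_const_mul a _

lemma Jint_natCast_mul (m : ℕ) (P : MvPolynomial (Fin d) ℝ) :
    Jint d ((m : MvPolynomial (Fin d) ℝ) * P) = (m : ℝ) * Jint d P := by
  have h : (m : MvPolynomial (Fin d) ℝ) = C (m : ℝ) := by simp
  rw [h, Jint_C_mul]

lemma Jint_one : Jint d 1 = 1 := by
  unfold Jint; simp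

lemma stein_J (w : Fin d → ℝ) (P : MvPolynomial (Fin d) ℝ) :
    Jint d (Lw w * P) = ∑ k, w k * Jint d (pderiv k P) := by
  unfold Jint
  have h1 : ∀ x : Fin d → ℝ, eval x (Lw w * P) = ∑ k, w k * eval x (X k * P) := by
    intro x
    rw [eval_mul, eval_Lw, Finset.sum_mul]
    refine Finset.sum_congr rfl fun k _ => ?_
    rw [eval_mul, eval_X]; ring
  simp_rw [h1]
  rw [integral_finset_sum univ (fun k _ => ((integrable_eval (X k * P)).const_mul (w k)))]
  refine Finset.sum_congr rfl fun k _ => ?_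
  rw [integral_const_mul, stein_mv]

noncomputable def II (u v : Fin d → ℝ) (m n : ℕ) : ℝ := Jint d (Qp u m * Qp v n)

lemma II_symm (u v : Fin d → ℝ) (m n : ℕ) : II u v m n = II v u n m := by
  unfold II; rw [mul_comm]

lemma Qp_succ (w : Fin d → ℝ) (m : ℕ) :
    Qp w (m + 1) = Lw w * Qp w m - (m : MvPolynomial (Fin d) ℝ) * Qp w (m - 1) := by
  unfold Qp
  rw [hr_succ, map_sub, map_mul, map_mul, Polynomial.aeval_X, map_natCast]

lemma II_rec (u v : Fin d → ℝ) (hu : ∑ k, u k * u k = 1) (m n : ℕ) :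
    II u v (m + 1) n = (n : ℝ) * (∑ k, u k * v k) * II u v m (n - 1) := by
  have hpd : ∀ k, pderiv k (Qp u m * Qp v n)
      = C (u k) * ((m : MvPolynomial (Fin d) ℝ) * (Qp u (m-1) * Qp v n))
        + C (v k) * ((n : MvPolynomial (Fin d) ℝ) * (Qp u m * Qp v (n-1))) := by
    intro k; rw [pderiv_mul, pderiv_Qp, pderiv_Qp]; ring
  have step1 : II u v (m+1) n
      = Jint d (Lw u * (Qp u m * Qp v n)) - (m : ℝ) * Jint d (Qp u (m-1) * Qp v n) := by
    unfold II
    rw [← Jint_natCast_mul, ← Jint_sub]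
    congr 1
    rw [Qp_succ]; ring
  have step2 : Jint d (Lw u * (Qp u m * Qp v n))
      = ∑ k, u k * (u k * ((m : ℝ) * Jint d (Qp u (m-1) * Qp v n))
          + v k * ((n : ℝ) * Jint d (Qp u m * Qp v (n-1)))) := by
    rw [stein_J]
    refine Finset.sum_congr rfl fun k _ => ?_
    rw [hpd k, Jint_add, Jint_C_mul, Jint_C_mul, Jint_natCast_mul, Jint_natCast_mul]
  have step3 : (∑ k, u k * (u k * ((m : ℝ) * Jint d (Qp u (m-1) * Qp v n))
          + v k * ((n : ℝ) * Jint d (Qp u m * Qp v (n-1)))))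
      = (∑ k, u k * u k) * ((m : ℝ) * Jint d (Qp u (m-1) * Qp v n))
        + (∑ k, u k * v k) * ((n : ℝ) * Jint d (Qp u m * Qp v (n-1))) := by
    simp_rw [mul_add, ← mul_assoc]
    rw [Finset.sum_add_distrib, ← Finset.sum_mul, ← Finset.sum_mul, ← Finset.sum_mul,
      ← Finset.sum_mul]
  rw [step1, step2, step3, hu, one_mul]
  unfold II
  ring

lemma Qp_zero (w : Fin d → ℝ) : Qp w 0 = 1 := by
  unfold Qp; rw [hr_zero, map_one]

lemma II_zero_zero (u v : Fin d → ℝ) : II u v 0 0 = 1 := by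
  unfold II; rw [Qp_zero, Qp_zero, one_mul, Jint_one]

lemma II_ortho (u v : Fin d → ℝ) (hu : ∑ k, u k * u k = 1) (hv : ∑ k, v k * v k = 1) :
    ∀ N m n, m + n = N →
      II u v m n = if m = n then (Nat.factorial m : ℝ) * (∑ k, u k * v k) ^ m else 0 := by
  intro N
  induction N using Nat.strong_induction_on with
  | _ N ih =>
    intro m n hmn
    match m, n with
    | 0, 0 => simp [II_zero_zero]
    | 0, n+1 =>
      rw [II_symm, II_rec v u hv n 0]
      simp
    | m+1, 0 =>
      rw [II_rec u v hu m 0]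
      simp
    | m+1, n+1 =>
      rw [II_rec u v hu m (n+1)]
      have hlt : m + n < N := by omega
      have := ih (m + n) hlt m n rfl
      rw [show n + 1 - 1 = n from rfl, this]
      by_cases h : m = n
      · subst h
        rw [if_pos rfl, if_pos rfl, Nat.factorial_succ]
        push_cast
        ring
      · rw [if_neg h, if_neg (by omega)]
        ring

end Aux

/-- any polynomial `f(ρ) = ∑ cᵢ ρ^i` with nonnegative coefficients is a
realizable rotationally invariant potential on the unit sphere, realized by the
activation `σ(z) = ∑ √cᵢ Heᵢ(z)/√(i!)`. -/
theorem stmt3 {d n : ℕ} (c : ℕ → ℝ) (hc : ∀ i, 0 ≤ c i)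
    (σ : ℝ → ℝ)
    (hσ : ∀ z, σ z = ∑ i ∈ range (n + 1),
      Real.sqrt (c i) * He i z / Real.sqrt (Nat.factorial i)) :
    ∀ u v : EuclideanSpace ℝ (Fin d), ‖u‖ = 1 → ‖v‖ = 1 →
      ∫ x, σ ⟪u, x⟫ * σ ⟪v, x⟫ ∂(stdGaussian d)
        = ∑ i ∈ range (n + 1), c i * ⟪u, v⟫ ^ i := by
  intro u v hu hv
  have hinner : ∀ a b : EuclideanSpace ℝ (Fin d), ⟪a, b⟫ = ∑ k, a k * b k := by
    intro a b
    simp [PiLp.inner_apply, RCLike.inner_apply, conj_trivial]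
    exact Finset.sum_congr rfl fun _ _ => mul_comm _ _
  have hu' : ∑ k, (u : Fin d → ℝ) k * u k = 1 := by
    have h := real_inner_self_eq_norm_sq u
    rw [hu] at h
    have h2 := hinner u u
    rw [h, one_pow] at h2
    exact h2.symm
  have hv' : ∑ k, (v : Fin d → ℝ) k * v k = 1 := by
    have h := real_inner_self_eq_norm_sq v
    rw [hv] at h
    have h2 := hinner v v
    rw [h, one_pow] at h2
    exact h2.symm
  set b : ℕ → ℝ := fun i => Real.sqrt (c i) / Real.sqrt (Nat.factorial i) with hb
  have hexp : ∀ x : Fin d → ℝ, σ (∑ k, (u : Fin d → ℝ) k * x k) * σ (∑ k, (v : Fin d → ℝ) k * x k)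
      = ∑ i ∈ range (n+1), ∑ j ∈ range (n+1),
          (b i * b j) * MvPolynomial.eval x (Qp u i * Qp v j) := by
    intro x
    rw [hσ, hσ, Finset.sum_mul_sum]
    refine Finset.sum_congr rfl fun i _ => Finset.sum_congr rfl fun j _ => ?_
    rw [MvPolynomial.eval_mul, eval_Qp, eval_Qp, hb]
    ring
  have hpt : ∀ x : EuclideanSpace ℝ (Fin d), σ ⟪u, x⟫ * σ ⟪v, x⟫
      = ∑ i ∈ range (n+1), ∑ j ∈ range (n+1),
          (b i * b j) * MvPolynomial.eval (x : Fin d → ℝ) (Qp u i * Qp v j) := by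
    intro x
    rw [hinner u x, hinner v x]
    exact hexp x
  calc ∫ x, σ ⟪u, x⟫ * σ ⟪v, x⟫ ∂(stdGaussian d)
      = ∫ x : Fin d → ℝ, (∑ i ∈ range (n+1), ∑ j ∈ range (n+1),
          (b i * b j) * MvPolynomial.eval x (Qp u i * Qp v j)) ∂(piG d) := by
        exact ((MeasurableEquiv.toLp 2 (Fin d → ℝ)).measurableEmbedding.integral_map _).trans
          (integral_congr_ae (Filter.Eventually.of_forall fun x => hpt (WithLp.toLp 2 x)))
    _ = ∑ i ∈ range (n+1), ∑ j ∈ range (n+1), (b i * b j) * II u v i j := by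
        rw [integral_finset_sum _ (fun i _ => integrable_finset_sum _
          (fun j _ => (_root_.integrable_eval _).const_mul _))]
        refine Finset.sum_congr rfl fun i _ => ?_
        rw [integral_finset_sum _ (fun j _ => (_root_.integrable_eval _).const_mul _)]
        refine Finset.sum_congr rfl fun j _ => ?_
        rw [integral_const_mul]
        rfl
    _ = ∑ i ∈ range (n+1), c i * ⟪u, v⟫ ^ i := by
        refine Finset.sum_congr rfl fun i hi => ?_
        have hcollapse : ∀ j ∈ range (n+1), (b i * b j) * II u v i j
            = if i = j then c i * (∑ k, (u : Fin d → ℝ) k * v k) ^ i else 0 := by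
          intro j _
          rw [II_ortho u v hu' hv' (i + j) i j rfl]
          by_cases h : i = j
          · subst h
            rw [if_pos rfl, if_pos rfl, hb]
            have h1 : Real.sqrt (c i) * Real.sqrt (c i) = c i :=
              Real.mul_self_sqrt (hc i)
            have h2 : Real.sqrt (Nat.factorial i) * Real.sqrt (Nat.factorial i)
                = (Nat.factorial i : ℝ) :=
              Real.mul_self_sqrt (by positivity)
            have h3 : (Nat.factorial i : ℝ) ≠ 0 := by
              exact_mod_cast (Nat.factorial_pos i).ne'
            field_simp
            rw [sq, sq, h1, h2]
            ring
          · rw [if_neg h, if_neg h, mul_zero]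
        rw [Finset.sum_congr rfl hcollapse, Finset.sum_ite_eq (range (n+1)) i
          (fun j => c i * (∑ k, (u : Fin d → ℝ) k * v k) ^ i), if_pos hi, hinner u v]
end

section
/- Define the Gaussian activation σ(x, w) = 2^{d/2} e^{‖x‖²/4} e^{−‖x − w‖²} for x, w ∈ ℝ^d. Then for all θ, w ∈ ℝ^d, ∫_{ℝ^d} σ(x, θ) σ(x, w) dμ_d(x) = e^{−‖θ − w‖²/2}. In particular, the Gaussian potential Φ(θ, w) = e^{−‖θ−w‖²/2} is realizable under standard Gaussian inputs. -/
open MeasureTheory ProbabilityTheory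

open Real

lemma const_fact : (√(2 * π))⁻¹ * 2 * √(π / 2) = 1 := by
  have hπ := Real.pi_pos
  have h2 : √(π / 2) = √π / √2 := Real.sqrt_div pi_pos.le 2
  have h3 : √(2 * π) = √2 * √π := Real.sqrt_mul (by norm_num) π
  have hs2 : √2 * √2 = 2 := Real.mul_self_sqrt (by norm_num)
  have h2p : (0:ℝ) < √2 := Real.sqrt_pos.2 (by norm_num)
  have hπp : (0:ℝ) < √π := Real.sqrt_pos.2 hπ
  rw [h2, h3]
  field_simp
  nlinarith [hs2]

lemma oneDim (a b : ℝ) :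
    ∫ t, 2 * rexp (t ^ 2 / 2) * rexp (-(t - a) ^ 2 - (t - b) ^ 2) ∂(gaussianReal 0 1)
      = rexp (-(a - b) ^ 2 / 2) := by
  rw [gaussianReal_of_var_ne_zero 0 one_ne_zero]
  have hm : Measurable fun x : ℝ => (gaussianPDFReal 0 1 x).toNNReal :=
    (measurable_gaussianPDFReal 0 1).real_toNNReal
  rw [show gaussianPDF 0 1 = fun x => ((gaussianPDFReal 0 1 x).toNNReal : ENNReal) from rfl,
    integral_withDensity_eq_integral_smul hm]
  have h1 : ∀ t : ℝ, (gaussianPDFReal 0 1 t).toNNReal •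
      (2 * rexp (t ^ 2 / 2) * rexp (-(t - a) ^ 2 - (t - b) ^ 2))
      = ((√(2 * π))⁻¹ * 2 * rexp (-(a - b) ^ 2 / 2)) * rexp (-2 * (t - (a + b) / 2) ^ 2) := by
    intro t
    rw [NNReal.smul_def, Real.coe_toNNReal _ (gaussianPDFReal_nonneg 0 1 t), smul_eq_mul]
    simp only [gaussianPDFReal, NNReal.coe_one, mul_one, sub_zero, smul_eq_mul]
    rw [show (√(2*π))⁻¹ * rexp (-t^2/2) * (2 * rexp (t^2/2) * rexp (-(t-a)^2-(t-b)^2))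
        = (√(2*π))⁻¹ * 2 * rexp (-t^2/2 + (t^2/2 + (-(t-a)^2-(t-b)^2))) from by
        rw [Real.exp_add, Real.exp_add]; ring,
      show (√(2*π))⁻¹ * 2 * rexp (-(a-b)^2/2) * rexp (-2*(t-(a+b)/2)^2)
        = (√(2*π))⁻¹ * 2 * rexp (-(a-b)^2/2 + -2*(t-(a+b)/2)^2) from by
        rw [Real.exp_add]; ring]
    congr 1
    ring
  simp_rw [h1]
  rw [integral_const_mul _ _,
    integral_sub_right_eq_self (fun u : ℝ => rexp (-2 * u ^ 2)) ((a + b) / 2),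
    integral_gaussian 2]
  linear_combination rexp (-(a - b) ^ 2 / 2) * const_fact

lemma piProd {d : ℕ} (f : Fin d → ℝ → ℝ) :
    ∫ x : Fin d → ℝ, ∏ i, f i (x i) ∂(Measure.pi fun _ : Fin d => gaussianReal 0 1)
      = ∏ i, ∫ t, f i t ∂(gaussianReal 0 1) := by
  letI : MeasureSpace ℝ := ⟨gaussianReal 0 1⟩
  haveI : SigmaFinite (volume : Measure ℝ) := inferInstanceAs (SigmaFinite (gaussianReal 0 1))
  exact MeasureTheory.integral_fintype_prod_eq_prod f

/-- the Gaussian activation `σ(x,w) = 2^{d/2} e^{‖x‖²/4} e^{-‖x-w‖²}`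
realizes the Gaussian potential `Φ(θ,w) = e^{-‖θ-w‖²/2}` under standard Gaussian
inputs: `∫ σ(x,θ)σ(x,w) dμ_d(x) = e^{-‖θ-w‖²/2}` for all `θ, w`. -/
theorem stmt6 {d : ℕ}
    (σ : EuclideanSpace ℝ (Fin d) → EuclideanSpace ℝ (Fin d) → ℝ)
    (hσ : ∀ x w, σ x w
      = 2 ^ ((d : ℝ) / 2) * Real.exp (‖x‖ ^ 2 / 4) * Real.exp (-‖x - w‖ ^ 2)) :
    ∀ θ w : EuclideanSpace ℝ (Fin d),
      ∫ x, σ x θ * σ x w ∂(stdGaussian d) = Real.exp (-‖θ - w‖ ^ 2 / 2) := by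
  intro θ w
  have hnorm : ∀ y : EuclideanSpace ℝ (Fin d), ‖y‖ ^ 2 = ∑ i, (y i) ^ 2 := by
    intro y
    rw [EuclideanSpace.norm_eq, Real.sq_sqrt (by positivity)]
    simp [sq_abs]
  have h2 : (2:ℝ) ^ ((d:ℝ)/2) * 2 ^ ((d:ℝ)/2) = 2 ^ (d:ℕ) := by
    rw [← Real.rpow_add two_pos, ← Real.rpow_natCast 2 d]
    norm_num
  have key : ∀ x : EuclideanSpace ℝ (Fin d), σ x θ * σ x w
      = ∏ i, (2 * rexp ((x i) ^ 2 / 2) * rexp (-(x i - θ i) ^ 2 - (x i - w i) ^ 2)) := by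
    intro x
    have hR : ∏ i, (2 * rexp ((x i) ^ 2 / 2) * rexp (-(x i - θ i) ^ 2 - (x i - w i) ^ 2))
        = 2 ^ (d:ℕ) * rexp (∑ i, ((x i) ^ 2 / 2 + (-(x i - θ i) ^ 2 - (x i - w i) ^ 2))) := by
      simp_rw [mul_assoc, ← Real.exp_add]
      rw [Finset.prod_mul_distrib, Finset.prod_const, Finset.card_univ, Fintype.card_fin,
        ← Real.exp_sum]
    rw [hσ x θ, hσ x w, hR]
    rw [show (2 ^ ((d:ℝ)/2) * rexp (‖x‖^2/4) * rexp (-‖x - θ‖^2))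
          * (2 ^ ((d:ℝ)/2) * rexp (‖x‖^2/4) * rexp (-‖x - w‖^2))
        = (2 ^ ((d:ℝ)/2) * 2 ^ ((d:ℝ)/2))
          * rexp (‖x‖^2/4 + ‖x‖^2/4 + (-‖x - θ‖^2 + -‖x - w‖^2)) from by
      rw [Real.exp_add, Real.exp_add, Real.exp_add]; ring]
    rw [h2]
    congr 1
    rw [hnorm x, hnorm (x - θ), hnorm (x - w)]
    simp only [PiLp.sub_apply, Finset.sum_add_distrib, Finset.sum_sub_distrib,
      ← Finset.sum_div, Finset.sum_neg_distrib]
    ring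
  simp only [key]
  rw [show (∫ x : EuclideanSpace ℝ (Fin d),
        ∏ i, (2 * rexp ((x i) ^ 2 / 2) * rexp (-(x i - θ i) ^ 2 - (x i - w i) ^ 2))
        ∂(stdGaussian d))
      = ∏ i, ∫ t, (2 * rexp (t ^ 2 / 2) * rexp (-(t - θ i) ^ 2 - (t - w i) ^ 2))
        ∂(gaussianReal 0 1) from
    (integral_map_equiv (MeasurableEquiv.toLp 2 (Fin d → ℝ)) _).trans <| piProd (fun i t => 2 * rexp (t ^ 2 / 2) * rexp (-(t - θ i) ^ 2 - (t - w i) ^ 2))]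
  rw [Finset.prod_congr rfl fun i _ => oneDim (θ i) (w i)]
  rw [← Real.exp_sum]
  congr 1
  rw [hnorm (θ - w)]
  simp only [PiLp.sub_apply, Finset.sum_neg_distrib, ← Finset.sum_div]
end

section
/- Let d ≥ 3 be odd and λ > 0. Then there exists a real polynomial p of degree (d−3)/2 with nonnegative coefficients, p(0) = 1, and 0 ≤ p(r) ≤ (1 + √λ · r)^d for all r ≥ 0, satisfying the ordinary differential equation r p''(r) − (d − 3 + 2√λ r) p'(r) + √λ (d − 3) p(r) = 0, such that the radial potential Φ(x) = p(‖x‖) e^{−√λ ‖x‖} ‖x‖^{2−d} is λ-harmonic on ℝ^d ∖ {0}: ΔΦ(x) = λ Φ(x) for every x ≠ 0. -/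
open Polynomial

open RealInnerProductSpace

/-- The Laplacian of `f : ℝ^d → ℝ` at `x`: the trace of the Hessian, i.e. the sum of
the second derivatives in the coordinate directions. -/
noncomputable def laplacian {d : ℕ} (f : EuclideanSpace ℝ (Fin d) → ℝ)
    (x : EuclideanSpace ℝ (Fin d)) : ℝ :=
  ∑ i : Fin d, iteratedFDeriv ℝ 2 f x ![EuclideanSpace.single i 1, EuclideanSpace.single i 1]

/-! ### Auxiliary: the coefficient sequence and polynomial -/

noncomputable def aSeq (s : ℝ) (n : ℕ) : ℕ → ℝ
  | 0 => 1
  | k + 1 =>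
    if k < n then
      2 * s * ((n : ℝ) - k) / (((k : ℝ) + 1) * (2 * (n : ℝ) - k)) * aSeq s n k
    else 0

noncomputable def pPoly (s : ℝ) (n : ℕ) : Polynomial ℝ :=
  ∑ k ∈ Finset.range (n + 1), Polynomial.C (aSeq s n k) * Polynomial.X ^ k

lemma aSeq_eq_zero {s : ℝ} {n m : ℕ} (h : n < m) : aSeq s n m = 0 := by
  cases m with
  | zero => omega
  | succ k => simp [aSeq, show ¬ k < n by omega]

lemma coeff_pPoly (s : ℝ) (n m : ℕ) : (pPoly s n).coeff m = aSeq s n m := by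
  rw [pPoly, Polynomial.finset_sum_coeff]
  simp only [Polynomial.coeff_C_mul, Polynomial.coeff_X_pow, mul_ite, mul_one, mul_zero]
  rw [Finset.sum_ite_eq (Finset.range (n + 1)) m (aSeq s n)]
  by_cases h : m ∈ Finset.range (n + 1)
  · rw [if_pos h]
  · rw [if_neg h, aSeq_eq_zero (by simpa [Nat.lt_succ_iff] using h)]

lemma aSeq_nonneg {s : ℝ} (hs : 0 ≤ s) (n : ℕ) : ∀ m, 0 ≤ aSeq s n m := by
  intro m
  induction m with
  | zero => norm_num [aSeq]
  | succ k ih =>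
    rw [aSeq]
    split
    · next h =>
      have hk : (k:ℝ) < n := by exact_mod_cast h
      have hk0 : (0:ℝ) ≤ (k:ℝ) := by positivity
      refine mul_nonneg (div_nonneg ?_ ?_) ih
      · nlinarith
      · nlinarith
    · exact le_refl 0

lemma aSeq_pos {s : ℝ} (hs : 0 < s) (n : ℕ) : ∀ m, m ≤ n → 0 < aSeq s n m := by
  intro m
  induction m with
  | zero => intro _; norm_num [aSeq]
  | succ k ih =>
    intro hm
    have h : k < n := by omega
    rw [aSeq, if_pos h]
    have hk : (k:ℝ) < n := by exact_mod_cast h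
    have hk0 : (0:ℝ) ≤ (k:ℝ) := by positivity
    refine mul_pos (div_pos (by nlinarith) (by nlinarith)) (ih (by omega))

lemma natDegree_pPoly {s : ℝ} (hs : 0 < s) (n : ℕ) : (pPoly s n).natDegree = n := by
  refine le_antisymm (Polynomial.natDegree_le_iff_coeff_eq_zero.mpr fun m hm => ?_)
    (Polynomial.le_natDegree_of_ne_zero ?_)
  · rw [coeff_pPoly]; exact aSeq_eq_zero hm
  · rw [coeff_pPoly]; exact (aSeq_pos hs n n le_rfl).ne'

lemma aSeq_key (s : ℝ) (n : ℕ) (m : ℕ) :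
    ((m : ℝ) + 1) * ((m : ℝ) - 2 * n) * aSeq s n (m + 1)
      = 2 * s * ((m : ℝ) - n) * aSeq s n m := by
  rcases lt_trichotomy m n with h | h | h
  · rw [aSeq, if_pos h]
    have hm : (m:ℝ) < n := by exact_mod_cast h
    have hm0 : (0:ℝ) ≤ (m:ℝ) := by positivity
    have h1 : ((m:ℝ) + 1) ≠ 0 := by nlinarith
    have h2 : (2 * (n:ℝ) - m) ≠ 0 := by nlinarith
    field_simp
    ring
  · subst h
    rw [aSeq, if_neg (lt_irrefl m)]
    simp
  · rw [aSeq_eq_zero h, aSeq_eq_zero (by omega : n < m + 1)]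
    simp

lemma pPoly_ode (s : ℝ) (n : ℕ) (r : ℝ) :
    r * ((pPoly s n).derivative.derivative).eval r
      - (2 * (n : ℝ) + 2 * s * r) * (pPoly s n).derivative.eval r
      + s * (2 * (n : ℝ)) * (pPoly s n).eval r = 0 := by
  have hQ : Polynomial.X * (pPoly s n).derivative.derivative
      - Polynomial.C (2 * (n:ℝ)) * (pPoly s n).derivative
      - Polynomial.C (2 * s) * (Polynomial.X * (pPoly s n).derivative)
      + Polynomial.C (s * (2 * (n:ℝ))) * (pPoly s n) = 0 := by
    ext m
    simp only [Polynomial.coeff_add, Polynomial.coeff_sub, Polynomial.coeff_C_mul,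
      Polynomial.coeff_zero]
    cases m with
    | zero =>
      simp only [Polynomial.mul_coeff_zero, Polynomial.coeff_X_zero, zero_mul,
        Polynomial.coeff_derivative, coeff_pPoly]
      have h0 := aSeq_key s n 0
      push_cast at h0 ⊢
      linear_combination h0
    | succ j =>
      simp only [Polynomial.coeff_X_mul, Polynomial.coeff_derivative, coeff_pPoly]
      have h1 := aSeq_key s n (j + 1)
      push_cast at h1 ⊢
      linear_combination h1
  have h2 := congrArg (Polynomial.eval r) hQ
  simp only [Polynomial.eval_add, Polynomial.eval_sub, Polynomial.eval_mul, Polynomial.eval_C,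
    Polynomial.eval_X, Polynomial.eval_zero] at h2
  linarith

lemma aSeq_le {s : ℝ} (hs : 0 < s) (n : ℕ) :
    ∀ k, aSeq s n k ≤ s ^ k * ((2 * n + 3).choose k) := by
  intro k
  induction k with
  | zero => norm_num [aSeq]
  | succ k ih =>
    rw [aSeq]
    split
    · next h =>
      have hk : (k:ℝ) < n := by exact_mod_cast h
      have hk0 : (0:ℝ) ≤ (k:ℝ) := by positivity
      have hden : (0:ℝ) < ((k : ℝ) + 1) * (2 * (n : ℝ) - k) := by nlinarith
      have hratio : 0 ≤ 2 * s * ((n : ℝ) - k) / (((k : ℝ) + 1) * (2 * (n : ℝ) - k)) := by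
        apply div_nonneg _ hden.le; nlinarith
      calc 2 * s * ((n : ℝ) - k) / (((k : ℝ) + 1) * (2 * (n : ℝ) - k)) * aSeq s n k
          ≤ 2 * s * ((n : ℝ) - k) / (((k : ℝ) + 1) * (2 * (n : ℝ) - k)) *
            (s ^ k * ((2 * n + 3).choose k)) := by
            exact mul_le_mul_of_nonneg_left ih hratio
        _ ≤ s ^ (k + 1) * ((2 * n + 3).choose (k + 1)) := by
            have hch : ((2 * n + 3).choose (k+1) : ℝ) * ((k:ℝ) + 1)
                = ((2 * n + 3).choose k : ℝ) * ((2 * (n:ℝ) + 3) - k) := by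
              have hk3 : k ≤ 2 * n + 3 := by omega
              have hnat := Nat.choose_succ_right_eq (2 * n + 3) k
              have hcast : (((2*n+3).choose (k+1) * (k+1) : ℕ) : ℝ)
                  = (((2*n+3).choose k * (2*n+3-k) : ℕ) : ℝ) := by
                exact_mod_cast congrArg Nat.cast hnat
              push_cast [Nat.cast_sub hk3] at hcast
              linear_combination hcast
            rw [div_mul_eq_mul_div, div_le_iff₀ hden]
            have hsk : (0:ℝ) < s ^ k := pow_pos hs k
            have hge : (0:ℝ) ≤ ((2 * n + 3).choose k : ℝ) := by positivity
            have key2 : 2 * ((n:ℝ) - k) ≤ ((2 * (n:ℝ) + 3) - k) * (2 * (n:ℝ) - k) := by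
              nlinarith
            calc 2 * s * ((n:ℝ) - k) * (s ^ k * ((2 * n + 3).choose k))
                = (s ^ (k+1) * ((2 * n + 3).choose k)) * (2 * ((n:ℝ) - k)) := by ring
              _ ≤ (s ^ (k+1) * ((2 * n + 3).choose k)) *
                  (((2 * (n:ℝ) + 3) - k) * (2 * (n:ℝ) - k)) := by
                  apply mul_le_mul_of_nonneg_left key2; positivity
              _ = s ^ (k+1) * (((2 * n + 3).choose k : ℝ) * ((2 * (n:ℝ) + 3) - k))
                  * (2 * (n:ℝ) - k) := by ring
              _ = s ^ (k+1) * (((2 * n + 3).choose (k+1) : ℝ) * ((k:ℝ) + 1))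
                  * (2 * (n:ℝ) - k) := by rw [hch]
              _ = s ^ (k+1) * ((2 * n + 3).choose (k+1)) * (((k:ℝ) + 1) * (2 * (n:ℝ) - k)) := by
                  ring
    · positivity

lemma pPoly_eval_le {s : ℝ} (hs : 0 < s) (n : ℕ) {r : ℝ} (hr : 0 ≤ r) :
    (pPoly s n).eval r ≤ (1 + s * r) ^ (2 * n + 3) := by
  rw [pPoly, Polynomial.eval_finset_sum]
  simp only [Polynomial.eval_mul, Polynomial.eval_C, Polynomial.eval_pow, Polynomial.eval_X]
  have h1 : ∑ k ∈ Finset.range (n + 1), aSeq s n k * r ^ k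
      ≤ ∑ k ∈ Finset.range (n + 1), (s * r) ^ k * ((2 * n + 3).choose k) := by
    apply Finset.sum_le_sum
    intro k _
    have := aSeq_le hs n k
    have hrk : (0:ℝ) ≤ r ^ k := by positivity
    calc aSeq s n k * r ^ k ≤ s ^ k * ((2 * n + 3).choose k) * r ^ k := by
          exact mul_le_mul_of_nonneg_right this hrk
      _ = (s * r) ^ k * ((2 * n + 3).choose k) := by rw [mul_pow]; ring
  have h2 : ∑ k ∈ Finset.range (n + 1), (s * r) ^ k * ((2 * n + 3).choose k)
      ≤ ∑ k ∈ Finset.range (2 * n + 3 + 1), (s * r) ^ k * ((2 * n + 3).choose k) := by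
    apply Finset.sum_le_sum_of_subset_of_nonneg
    · apply Finset.range_subset_range.mpr; omega
    · intro k _ _; positivity
  have h3 : ∑ k ∈ Finset.range (2 * n + 3 + 1), (s * r) ^ k * ((2 * n + 3).choose k)
      = (1 + s * r) ^ (2 * n + 3) := by
    rw [add_comm (1:ℝ) (s*r), add_pow]
    simp [one_pow]
  linarith

lemma pPoly_eval_nonneg {s : ℝ} (hs : 0 ≤ s) (n : ℕ) {r : ℝ} (hr : 0 ≤ r) :
    0 ≤ (pPoly s n).eval r := by
  rw [pPoly, Polynomial.eval_finset_sum]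
  apply Finset.sum_nonneg
  intro k _
  simp only [Polynomial.eval_mul, Polynomial.eval_C, Polynomial.eval_pow, Polynomial.eval_X]
  exact mul_nonneg (aSeq_nonneg hs n k) (by positivity)

/-! ### The radial function and its derivatives -/


noncomputable def QFun (P : Polynomial ℝ) (s : ℝ) (d : ℕ) (r : ℝ) : ℝ :=
  r * P.derivative.eval r + ((2 : ℝ) - d - s * r) * P.eval r

noncomputable def Q1Fun (P : Polynomial ℝ) (s : ℝ) (d : ℕ) (r : ℝ) : ℝ :=
  r * P.derivative.derivative.eval r + (1 + ((2 : ℝ) - d) - s * r) * P.derivative.eval r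
    - s * P.eval r

noncomputable def gFun (P : Polynomial ℝ) (s : ℝ) (d : ℕ) (r : ℝ) : ℝ :=
  P.eval r * Real.exp (-s * r) * r ^ (2 - (d : ℤ))

noncomputable def g1Fun (P : Polynomial ℝ) (s : ℝ) (d : ℕ) (r : ℝ) : ℝ :=
  Real.exp (-s * r) * r ^ (2 - (d : ℤ) - 1) * QFun P s d r

noncomputable def g2Fun (P : Polynomial ℝ) (s : ℝ) (d : ℕ) (r : ℝ) : ℝ :=
  Real.exp (-s * r) * r ^ (2 - (d : ℤ) - 2) *
    (r * Q1Fun P s d r + ((2 : ℝ) - d - 1 - s * r) * QFun P s d r)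

lemma hasDerivAt_exp_neg (s r : ℝ) :
    HasDerivAt (fun r : ℝ => Real.exp (-s * r)) (-s * Real.exp (-s * r)) r := by
  have h := ((hasDerivAt_id r).const_mul (-s)).exp
  simpa [mul_comm] using h

lemma hasDerivAt_gFun (P : Polynomial ℝ) (s : ℝ) (d : ℕ) {r : ℝ} (hr : r ≠ 0) :
    HasDerivAt (gFun P s d) (g1Fun P s d r) r := by
  have h1 := (P.hasDerivAt r).mul (hasDerivAt_exp_neg s r)
  have h2 := h1.mul (hasDerivAt_zpow (2 - (d : ℤ)) r (Or.inl hr))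
  have hz : r ^ (2 - (d : ℤ)) = r ^ (2 - (d : ℤ) - 1) * r := by
    rw [← zpow_add_one₀ hr]; congr 1; ring
  refine h2.congr_deriv ?_
  unfold g1Fun QFun
  rw [hz]
  push_cast
  simp only [Pi.mul_apply]
  ring

lemma hasDerivAt_QFun (P : Polynomial ℝ) (s : ℝ) (d : ℕ) (r : ℝ) :
    HasDerivAt (QFun P s d) (Q1Fun P s d r) r := by
  have h1 := (hasDerivAt_id r).mul (P.derivative.hasDerivAt r)
  have h2 := ((hasDerivAt_const r ((2:ℝ) - d)).sub ((hasDerivAt_id r).const_mul s)).mul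
    (P.hasDerivAt r)
  have := h1.add h2
  refine this.congr_deriv ?_
  unfold Q1Fun
  simp only [id_eq]
  simp only [Pi.sub_apply]
  ring

lemma hasDerivAt_g1Fun (P : Polynomial ℝ) (s : ℝ) (d : ℕ) {r : ℝ} (hr : r ≠ 0) :
    HasDerivAt (g1Fun P s d) (g2Fun P s d r) r := by
  have h1 := (hasDerivAt_exp_neg s r).mul (hasDerivAt_zpow (2 - (d : ℤ) - 1) r (Or.inl hr))
  have h2 := h1.mul (hasDerivAt_QFun P s d r)
  have hz : r ^ (2 - (d : ℤ) - 1) = r ^ (2 - (d : ℤ) - 2) * r := by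
    rw [← zpow_add_one₀ hr]; congr 1; ring
  refine h2.congr_deriv ?_
  unfold g2Fun
  simp only [Pi.mul_apply]
  rw [hz]
  push_cast
  ring

lemma radial_identity (P : Polynomial ℝ) (s : ℝ) (d : ℕ) (lam : ℝ) (hs2 : s ^ 2 = lam)
    (hode : ∀ r : ℝ, r * (P.derivative.derivative).eval r
      - ((d : ℝ) - 3 + 2 * s * r) * P.derivative.eval r
      + s * ((d : ℝ) - 3) * P.eval r = 0)
    {r : ℝ} (hr : r ≠ 0) :
    g2Fun P s d r + ((d : ℝ) - 1) * (g1Fun P s d r / r) = lam * gFun P s d r := by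
  have e1 : r ^ (2 - (d : ℤ) - 1) = r ^ (2 - (d : ℤ) - 2) * r := by
    rw [← zpow_add_one₀ hr]; congr 1; ring
  have e2 : r ^ (2 - (d : ℤ)) = r ^ (2 - (d : ℤ) - 2) * r ^ 2 := by
    rw [← zpow_natCast r 2, ← zpow_add₀ hr]; congr 1; ring
  unfold g2Fun g1Fun gFun
  rw [e1, e2]
  have hdiv : Real.exp (-s * r) * (r ^ (2 - (d : ℤ) - 2) * r) * QFun P s d r / r
      = Real.exp (-s * r) * r ^ (2 - (d : ℤ) - 2) * QFun P s d r := by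
    field_simp
  rw [hdiv]
  have h := hode r
  unfold QFun Q1Fun
  linear_combination (Real.exp (-s * r) * r ^ (2 - (d : ℤ) - 2) * r) * h
    + (Real.exp (-s * r) * r ^ (2 - (d : ℤ) - 2) * r ^ 2 * P.eval r) * hs2


lemma contDiff_polyEval (q : Polynomial ℝ) {n : WithTop ℕ∞} :
    ContDiff ℝ n fun t : ℝ => q.eval t := by
  induction q using Polynomial.induction_on' with
  | add p q hp hq => simpa [Polynomial.eval_add] using hp.add hq
  | monomial k a =>
    simpa [Polynomial.eval_monomial] using (contDiff_const (c := a)).mul (contDiff_id.pow k)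

lemma contDiffAt_gFun (P : Polynomial ℝ) (s : ℝ) {d : ℕ} (hd3 : 3 ≤ d) {r : ℝ} (hr : r ≠ 0) :
    ContDiffAt ℝ 2 (gFun P s d) r := by
  have h1 : ContDiff ℝ 2 fun t : ℝ => P.eval t * Real.exp (-s * t) :=
    (contDiff_polyEval P).mul (Real.contDiff_exp.comp (contDiff_const.mul contDiff_id))
  have h2 : ContDiffAt ℝ 2 (fun t : ℝ => t ^ (2 - (d : ℤ))) r := by
    have hzf : (fun t : ℝ => t ^ (2 - (d : ℤ))) = fun t : ℝ => (t ^ (d - 2)) ⁻¹ := by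
      funext t
      rw [← zpow_natCast t (d - 2), ← zpow_neg]
      congr 1
      omega
    rw [hzf]
    exact (contDiff_id.pow (d - 2)).contDiffAt.inv (pow_ne_zero _ hr)
  exact h1.contDiffAt.mul h2

section NormDeriv

variable {d : ℕ}

noncomputable def Nmap (y : EuclideanSpace ℝ (Fin d)) : EuclideanSpace ℝ (Fin d) →L[ℝ] ℝ :=
  (2 * ‖y‖)⁻¹ • ((fderivInnerCLM ℝ (y, y)).comp
    ((ContinuousLinearMap.id ℝ (EuclideanSpace ℝ (Fin d))).prod
      (ContinuousLinearMap.id ℝ (EuclideanSpace ℝ (Fin d)))))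

lemma Nmap_apply (y u : EuclideanSpace ℝ (Fin d)) (hy : y ≠ 0) :
    Nmap y u = ⟪y, u⟫ / ‖y‖ := by
  have hny : ‖y‖ ≠ 0 := norm_ne_zero_iff.mpr hy
  simp only [Nmap, ContinuousLinearMap.smul_apply, ContinuousLinearMap.comp_apply,
    ContinuousLinearMap.prod_apply, ContinuousLinearMap.id_apply, fderivInnerCLM_apply,
    smul_eq_mul]
  rw [real_inner_comm u y]
  field_simp
  ring

lemma hasFDerivAt_norm' (y : EuclideanSpace ℝ (Fin d)) (hy : y ≠ 0) :
    HasFDerivAt (fun z : EuclideanSpace ℝ (Fin d) => ‖z‖) (Nmap y) y := by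
  have hinner : HasFDerivAt (fun z : EuclideanSpace ℝ (Fin d) => ⟪z, z⟫)
      ((fderivInnerCLM ℝ (y, y)).comp
        ((ContinuousLinearMap.id ℝ (EuclideanSpace ℝ (Fin d))).prod
          (ContinuousLinearMap.id ℝ (EuclideanSpace ℝ (Fin d))))) y :=
    (hasFDerivAt_id y).inner ℝ (hasFDerivAt_id y)
  have hq : ⟪y, y⟫ ≠ 0 := inner_self_ne_zero.mpr hy
  have hsq := Real.hasDerivAt_sqrt hq
  have h := hsq.comp_hasFDerivAt (f := fun z : EuclideanSpace ℝ (Fin d) => (⟪z, z⟫ : ℝ)) y hinner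
  have hfun : (fun z : EuclideanSpace ℝ (Fin d) => Real.sqrt ⟪z, z⟫)
      = fun z : EuclideanSpace ℝ (Fin d) => ‖z‖ := by
    funext z
    rw [real_inner_self_eq_norm_sq, Real.sqrt_sq (norm_nonneg z)]
  have hscal : (1 / (2 * Real.sqrt ⟪y, y⟫)) = (2 * ‖y‖)⁻¹ := by
    rw [real_inner_self_eq_norm_sq, Real.sqrt_sq (norm_nonneg y), one_div]
  rw [Function.comp_def, hfun, hscal] at h
  exact h

end NormDeriv

lemma laplacian_radial (P : Polynomial ℝ) (s lam : ℝ) (hs2 : s ^ 2 = lam) {d : ℕ} (hd3 : 3 ≤ d)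
    (hode : ∀ r : ℝ, r * (P.derivative.derivative).eval r
      - ((d : ℝ) - 3 + 2 * s * r) * P.derivative.eval r
      + s * ((d : ℝ) - 3) * P.eval r = 0)
    {x : EuclideanSpace ℝ (Fin d)} (hx : x ≠ 0) :
    laplacian (fun y => gFun P s d ‖y‖) x = lam * gFun P s d ‖x‖ := by
  have hr0 : (0:ℝ) < ‖x‖ := norm_pos_iff.mpr hx
  have hr0' : ‖x‖ ≠ 0 := hr0.ne'
  set f : EuclideanSpace ℝ (Fin d) → ℝ := fun y => gFun P s d ‖y‖ with hf_def
  have hf' : ∀ y : EuclideanSpace ℝ (Fin d), y ≠ 0 →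
      HasFDerivAt f (g1Fun P s d ‖y‖ • Nmap y) y := fun y hy =>
    (hasDerivAt_gFun P s d (norm_ne_zero_iff.mpr hy)).comp_hasFDerivAt y (hasFDerivAt_norm' y hy)
  have hne : ∀ᶠ y in nhds x, y ≠ 0 := isOpen_ne.mem_nhds hx
  -- C² smoothness
  have hnormC : ContDiffAt ℝ 2 (fun y : EuclideanSpace ℝ (Fin d) => ‖y‖) x :=
    contDiffAt_norm ℝ hx
  have hfC : ContDiffAt ℝ 2 f x := (contDiffAt_gFun P s hd3 hr0').comp x hnormC
  have hdF : DifferentiableAt ℝ (fderiv ℝ f) x :=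
    (hfC.fderiv_right (m := 1) (by norm_num)).differentiableAt one_ne_zero
  -- derivative of k ∘ norm
  set k1 : ℝ := (g2Fun P s d ‖x‖ * ‖x‖ - g1Fun P s d ‖x‖ * 1) / ‖x‖ ^ 2 with hk1_def
  have hA : HasFDerivAt (fun y : EuclideanSpace ℝ (Fin d) => g1Fun P s d ‖y‖ / ‖y‖)
      (k1 • Nmap x) x := by
    have hk : HasDerivAt (fun r : ℝ => g1Fun P s d r / r) k1 ‖x‖ :=
      (hasDerivAt_g1Fun P s d hr0').div (hasDerivAt_id ‖x‖) hr0'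
    exact hk.comp_hasFDerivAt x (hasFDerivAt_norm' x hx)
  -- per-direction computation
  have key : ∀ v : EuclideanSpace ℝ (Fin d),
      fderiv ℝ (fderiv ℝ f) x v v
        = g1Fun P s d ‖x‖ / ‖x‖ * ⟪v, v⟫ + ⟪x, v⟫ * (k1 * (⟪x, v⟫ / ‖x‖)) := by
    intro v
    have hB : HasFDerivAt (fun y : EuclideanSpace ℝ (Fin d) => ⟪y, v⟫)
        (innerSL ℝ v) x := by
      have : (fun y : EuclideanSpace ℝ (Fin d) => ⟪y, v⟫)
          = fun y : EuclideanSpace ℝ (Fin d) => innerSL ℝ v y := by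
        funext y
        simp [real_inner_comm y v]
      rw [this]
      exact (innerSL ℝ v).hasFDerivAt
    have hAB : HasFDerivAt (fun y : EuclideanSpace ℝ (Fin d) => g1Fun P s d ‖y‖ / ‖y‖ * ⟪y, v⟫) _ x :=
      hA.mul hB
    have heq : (fun y => fderiv ℝ f y v)
        =ᶠ[nhds x] fun y => g1Fun P s d ‖y‖ / ‖y‖ * ⟪y, v⟫ := by
      filter_upwards [hne] with y hy
      rw [(hf' y hy).fderiv]
      simp only [ContinuousLinearMap.smul_apply, smul_eq_mul]
      rw [Nmap_apply y v hy]
      ring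
    have hflip := fderiv_clm_apply hdF (differentiableAt_const v)
    simp only [fderiv_fun_const, Pi.zero_apply, ContinuousLinearMap.comp_zero, zero_add] at hflip
    have h1 : fderiv ℝ (fun y => fderiv ℝ f y v) x v
        = fderiv ℝ (fderiv ℝ f) x v v := by
      rw [hflip, ContinuousLinearMap.flip_apply]
    rw [← h1, heq.fderiv_eq, hAB.fderiv]
    simp only [ContinuousLinearMap.add_apply, ContinuousLinearMap.smul_apply,
      ContinuousLinearMap.coe_smul', Pi.smul_apply, smul_eq_mul, innerSL_apply_apply]
    rw [Nmap_apply x v hx, real_inner_comm v x]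
  -- assemble
  unfold laplacian
  have hterm : ∀ i : Fin d,
      iteratedFDeriv ℝ 2 f x ![EuclideanSpace.single i 1, EuclideanSpace.single i 1]
        = g1Fun P s d ‖x‖ / ‖x‖ + x i * (k1 * (x i / ‖x‖)) := by
    intro i
    rw [iteratedFDeriv_two_apply]
    simp only [Matrix.cons_val_zero, Matrix.cons_val_one, Matrix.head_cons]
    rw [key (EuclideanSpace.single i 1)]
    have h1 : ⟪(EuclideanSpace.single i (1:ℝ)), (EuclideanSpace.single i (1:ℝ))⟫ = (1:ℝ) := by
      rw [EuclideanSpace.inner_single_left]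
      simp [EuclideanSpace.single_apply]
    have h2 : ⟪x, EuclideanSpace.single i (1:ℝ)⟫ = x i := by
      rw [EuclideanSpace.inner_single_right]
      simp
    rw [h1, h2]
    ring
  rw [Finset.sum_congr rfl fun i _ => hterm i]
  rw [Finset.sum_add_distrib, Finset.sum_const, Finset.card_univ, Fintype.card_fin]
  have hsum : ∑ i : Fin d, x i * (k1 * (x i / ‖x‖)) = k1 * ‖x‖ := by
    have h3 : ∑ i : Fin d, x i * x i = ‖x‖ ^ 2 := by
      rw [← real_inner_self_eq_norm_sq]
      rw [PiLp.inner_apply]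
      simp [RCLike.inner_apply, conj_trivial]
      exact Finset.sum_congr rfl fun i _ => (sq _).symm
    calc ∑ i : Fin d, x i * (k1 * (x i / ‖x‖)) = (k1 / ‖x‖) * ∑ i : Fin d, x i * x i := by
          rw [Finset.mul_sum]; congr 1; funext i; ring
      _ = (k1 / ‖x‖) * ‖x‖ ^ 2 := by rw [h3]
      _ = k1 * ‖x‖ := by field_simp
  rw [hsum]
  have hrad := radial_identity P s d lam hs2 hode hr0'
  have hk1r : k1 * ‖x‖ = g2Fun P s d ‖x‖ - g1Fun P s d ‖x‖ / ‖x‖ := by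
    rw [hk1_def]
    field_simp
  rw [hk1r, nsmul_eq_mul]
  linarith [hrad]


/-- for odd `d ≥ 3` and `λ > 0`, there is a polynomial `p` of degree
`(d-3)/2` with nonnegative coefficients, `p(0) = 1`, `0 ≤ p(r) ≤ (1+√λ r)^d` for
`r ≥ 0`, satisfying `r p'' - (d-3+2√λ r) p' + √λ (d-3) p = 0`, such that
`Φ(x) = p(‖x‖) e^{-√λ ‖x‖} ‖x‖^{2-d}` is `λ`-harmonic on `ℝ^d ∖ {0}`. -/
theorem stmt10 (d : ℕ) (hd3 : 3 ≤ d) (hodd : Odd d) (lam : ℝ) (hlam : 0 < lam) :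
    ∃ p : Polynomial ℝ,
      p.natDegree = (d - 3) / 2 ∧
      (∀ i, 0 ≤ p.coeff i) ∧
      p.eval 0 = 1 ∧
      (∀ r : ℝ, 0 ≤ r →
        0 ≤ p.eval r ∧ p.eval r ≤ (1 + Real.sqrt lam * r) ^ d) ∧
      (∀ r : ℝ,
        r * (p.derivative.derivative).eval r
          - ((d : ℝ) - 3 + 2 * Real.sqrt lam * r) * p.derivative.eval r
          + Real.sqrt lam * ((d : ℝ) - 3) * p.eval r = 0) ∧
      (∀ x : EuclideanSpace ℝ (Fin d), x ≠ 0 →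
        laplacian (fun y => p.eval ‖y‖ * Real.exp (-Real.sqrt lam * ‖y‖)
            * ‖y‖ ^ ((2 : ℝ) - d)) x
          = lam * (p.eval ‖x‖ * Real.exp (-Real.sqrt lam * ‖x‖) * ‖x‖ ^ ((2 : ℝ) - d))) := by
  obtain ⟨t, ht⟩ := hodd
  set s := Real.sqrt lam with hs_def
  have hs : 0 < s := Real.sqrt_pos.mpr hlam
  set n := (d - 3) / 2 with hn
  have hd : d = 2 * n + 3 := by omega
  have hdc : (d : ℝ) - 3 = 2 * (n : ℝ) := by rw [hd]; push_cast; ring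
  refine ⟨pPoly s n, natDegree_pPoly hs n, ?_, ?_, ?_, ?_, ?_⟩
  · intro i; rw [coeff_pPoly]; exact aSeq_nonneg hs.le n i
  · rw [← Polynomial.coeff_zero_eq_eval_zero, coeff_pPoly]; rfl
  · intro r hr
    refine ⟨pPoly_eval_nonneg hs.le n hr, ?_⟩
    rw [hd]
    exact pPoly_eval_le hs n hr
  · intro r
    rw [hdc]
    have := pPoly_ode s n r
    linarith
  · intro x hx
    have hs2 : s ^ 2 = lam := Real.sq_sqrt hlam.le
    have hode : ∀ r : ℝ, r * ((pPoly s n).derivative.derivative).eval r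
        - ((d : ℝ) - 3 + 2 * s * r) * (pPoly s n).derivative.eval r
        + s * ((d : ℝ) - 3) * (pPoly s n).eval r = 0 := by
      intro r
      rw [hdc]
      have := pPoly_ode s n r
      linarith
    have hfeq : (fun y : EuclideanSpace ℝ (Fin d) =>
        (pPoly s n).eval ‖y‖ * Real.exp (-s * ‖y‖) * ‖y‖ ^ ((2 : ℝ) - d))
        = fun y => gFun (pPoly s n) s d ‖y‖ := by
      funext y
      unfold gFun
      congr 1
      rw [show ((2 : ℝ) - d) = ((2 - (d : ℤ) : ℤ) : ℝ) by push_cast; ring, Real.rpow_intCast]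
    rw [hfeq, show (pPoly s n).eval ‖x‖ * Real.exp (-s * ‖x‖) * ‖x‖ ^ ((2 : ℝ) - d)
      = gFun (pPoly s n) s d ‖x‖ from congrFun hfeq x]
    exact laplacian_radial (pPoly s n) s lam hs2 hd3 hode hx
end

section
/- Let λ > 0, let k < l be natural numbers, and let p be a real polynomial of degree k all of whose coefficients are nonnegative. Define Φ(r) = p(r) e^{−√λ r} / r^l for r > 0. Then Φ'(r) = −q(r) e^{−√λ r} / r^{l+1} for all r > 0, where q(r) = (l + √λ r) p(r) − r p'(r) is a polynomial of degree k + 1 all of whose coefficients are nonnegative. Consequently Φ is nonnegative and nonincreasing on (0, ∞), and iterating, the j-th derivative Φ^{(j)} is nonnegative on (0,∞) for j even and nonpositive for j odd. -/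
open Polynomial

lemma evalNonneg (p : Polynomial ℝ) (hc : ∀ i, 0 ≤ p.coeff i) (r : ℝ) (hr : 0 ≤ r) :
    0 ≤ p.eval r := by
  rw [eval_eq_sum_range]
  exact Finset.sum_nonneg fun i _ => mul_nonneg (hc i) (pow_nonneg hr i)

noncomputable def qp (s : ℝ) (l : ℕ) (p : Polynomial ℝ) : Polynomial ℝ :=
  (C (l : ℝ) + C s * X) * p - X * p.derivative

lemma qp_coeff_nonneg (s : ℝ) (hs : 0 ≤ s) (l : ℕ) (p : Polynomial ℝ)
    (hd : p.natDegree < l) (hc : ∀ i, 0 ≤ p.coeff i) (i : ℕ) : 0 ≤ (qp s l p).coeff i := by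
  unfold qp
  rcases i with _ | n
  · simp only [coeff_sub, mul_coeff_zero, coeff_add, coeff_C_zero, coeff_C_mul, coeff_X_zero,
      mul_zero, add_zero, coeff_X_mul_zero, zero_mul, sub_zero]
    exact mul_nonneg (Nat.cast_nonneg l) (hc 0)
  · have h1 : ((C (l : ℝ) + C s * X) * p).coeff (n + 1)
        = (l : ℝ) * p.coeff (n + 1) + s * p.coeff n := by
      rw [add_mul, mul_assoc, coeff_add, C_mul', coeff_smul, C_mul', coeff_smul, coeff_X_mul]
      simp [smul_eq_mul]
    have h2 : (X * p.derivative).coeff (n + 1) = p.coeff (n + 1) * (n + 1) := by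
      rw [coeff_X_mul, coeff_derivative]
    rw [coeff_sub, h1, h2]
    rcases eq_or_ne (p.coeff (n + 1)) 0 with h | h
    · rw [h]; simpa using mul_nonneg hs (hc n)
    · have hn : n + 1 ≤ p.natDegree := le_natDegree_of_ne_zero h
      have : ((n : ℝ) + 1) ≤ (l : ℝ) := by exact_mod_cast (hn.trans hd.le)
      nlinarith [hc (n + 1), hc n, mul_nonneg hs (hc n)]

lemma qp_natDegree_le (s : ℝ) (l : ℕ) (p : Polynomial ℝ) :
    (qp s l p).natDegree ≤ p.natDegree + 1 := by
  unfold qp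
  refine (natDegree_sub_le _ _).trans (max_le ?_ ?_)
  · refine (natDegree_mul_le).trans ?_
    have : (C (l : ℝ) + C s * X).natDegree ≤ 1 := by
      refine (natDegree_add_le _ _).trans (max_le ?_ ?_)
      · simp
      · exact (natDegree_mul_le).trans (by simp)
    omega
  · refine (natDegree_mul_le).trans ?_
    have := natDegree_derivative_le p
    simp only [natDegree_X]
    omega

lemma qp_natDegree (s : ℝ) (hs : 0 < s) (l : ℕ) (p : Polynomial ℝ) (hp : p ≠ 0)
    (hc : ∀ i, 0 ≤ p.coeff i) : (qp s l p).natDegree = p.natDegree + 1 := by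
  refine le_antisymm (qp_natDegree_le s l p) (le_natDegree_of_ne_zero ?_)
  set k := p.natDegree
  have h1 : ((C (l : ℝ) + C s * X) * p).coeff (k + 1)
      = (l : ℝ) * p.coeff (k + 1) + s * p.coeff k := by
    rw [add_mul, mul_assoc, coeff_add, C_mul', coeff_smul, C_mul', coeff_smul, coeff_X_mul]
    simp [smul_eq_mul]
  have h2 : (X * p.derivative).coeff (k + 1) = p.coeff (k + 1) * (k + 1) :=  by
    rw [coeff_X_mul, coeff_derivative]
  unfold qp
  rw [coeff_sub, h1, h2, coeff_natDegree_succ_eq_zero]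
  have hk : p.coeff k ≠ 0 := mt leadingCoeff_eq_zero.mp hp
  simp only [zero_mul, mul_zero, add_zero, zero_add, sub_zero]
  exact mul_ne_zero hs.ne' hk

lemma hasDerivAt_F (s : ℝ) (m : ℕ) (p : Polynomial ℝ) (r : ℝ) (hr : 0 < r) :
    HasDerivAt (fun r : ℝ => p.eval r * Real.exp (-s * r) / r ^ (m + 1))
      (-((qp s (m + 1) p).eval r) * Real.exp (-s * r) / r ^ (m + 1 + 1)) r := by
  have h1 : HasDerivAt (fun r : ℝ => p.eval r) (p.derivative.eval r) r := p.hasDerivAt r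
  have h2 : HasDerivAt (fun r : ℝ => Real.exp (-s * r)) (Real.exp (-s * r) * (-s)) r := by
    have h0 : HasDerivAt (fun r : ℝ => -s * r) (-s) r := by
      simpa using (hasDerivAt_id r).const_mul (-s)
    exact h0.exp
  have h3 : HasDerivAt (fun r : ℝ => r ^ (m + 1)) ((m + 1 : ℕ) * r ^ m) r := by
    simpa using hasDerivAt_pow (m + 1) r
  have hne : r ^ (m + 1) ≠ 0 := pow_ne_zero _ hr.ne'
  have := (h1.mul h2).div h3 hne
  refine this.congr_deriv ?_
  unfold qp
  have he := (Real.exp_pos (-s * r)).ne'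
  simp only [eval_sub, eval_mul, eval_add, eval_C, eval_X, Pi.mul_apply]
  field_simp
  ring

lemma signIter (s : ℝ) (hs : 0 ≤ s) : ∀ (j m : ℕ) (p : Polynomial ℝ),
    p.natDegree < m + 1 → (∀ i, 0 ≤ p.coeff i) → ∀ r : ℝ, 0 < r →
    (Even j → 0 ≤ iteratedDeriv j (fun r : ℝ => p.eval r * Real.exp (-s * r) / r ^ (m + 1)) r) ∧
    (Odd j → iteratedDeriv j (fun r : ℝ => p.eval r * Real.exp (-s * r) / r ^ (m + 1)) r ≤ 0) := by
  intro j
  induction j with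
  | zero =>
    intro m p hd hc r hr
    constructor
    · intro _
      rw [iteratedDeriv_zero]
      exact div_nonneg (mul_nonneg (evalNonneg p hc r hr.le) (Real.exp_pos _).le)
        (pow_nonneg hr.le _)
    · intro h; simp at h
  | succ j ih =>
    intro m p hd hc r hr
    set G : ℝ → ℝ := fun r : ℝ => (qp s (m + 1) p).eval r * Real.exp (-s * r) / r ^ (m + 1 + 1)
      with hG
    have hEq : deriv (fun r : ℝ => p.eval r * Real.exp (-s * r) / r ^ (m + 1))
        =ᶠ[nhds r] fun x => -(G x) := by
      filter_upwards [Ioi_mem_nhds hr] with x hx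
      rw [(hasDerivAt_F s m p x hx).deriv, hG]
      ring
    have key : iteratedDeriv (j + 1)
        (fun r : ℝ => p.eval r * Real.exp (-s * r) / r ^ (m + 1)) r
        = -(iteratedDeriv j G r) := by
      rw [iteratedDeriv_succ', Filter.EventuallyEq.iteratedDeriv_eq j hEq, iteratedDeriv_fun_neg]
    have hq := ih (m + 1) (qp s (m + 1) p)
      (lt_of_le_of_lt (qp_natDegree_le s (m + 1) p) (by omega))
      (qp_coeff_nonneg s hs (m + 1) p hd hc) r hr
    rw [key]
    constructor
    · intro he
      have : Odd j := by
        rcases Nat.even_or_odd j with h | h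
        · exact absurd he (by simpa [Nat.even_add_one] using h)
        · exact h
      linarith [hq.2 this]
    · intro ho
      have : Even j := by
        rcases Nat.even_or_odd j with h | h
        · exact h
        · rw [Nat.odd_add_one] at ho; exact absurd h ho
      linarith [hq.1 this]

/-- for `Φ(r) = p(r) e^{-√λ r} / r^l` with `p` of degree `k < l` with
nonnegative coefficients, one has `Φ'(r) = -q(r) e^{-√λ r} / r^{l+1}` where
`q = (l + √λ r) p - r p'` has degree `k+1` and nonnegative coefficients; hence `Φ` is
nonnegative and nonincreasing on `(0,∞)`, and iterating, `Φ^{(j)}` is nonnegative on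
`(0,∞)` for `j` even and nonpositive for `j` odd. -/
theorem stmt11 (lam : ℝ) (hlam : 0 < lam) (k l : ℕ) (hkl : k < l)
    (p : Polynomial ℝ) (hp : p ≠ 0) (hdeg : p.natDegree = k)
    (hcoeff : ∀ i, 0 ≤ p.coeff i)
    (Φ : ℝ → ℝ)
    (hΦ : ∀ r : ℝ, Φ r = p.eval r * Real.exp (-Real.sqrt lam * r) / r ^ l) :
    ∃ q : Polynomial ℝ,
      q = (C (l : ℝ) + C (Real.sqrt lam) * X) * p - X * p.derivative ∧
      q.natDegree = k + 1 ∧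
      (∀ i, 0 ≤ q.coeff i) ∧
      (∀ r : ℝ, 0 < r →
        HasDerivAt Φ (-(q.eval r) * Real.exp (-Real.sqrt lam * r) / r ^ (l + 1)) r) ∧
      (∀ r : ℝ, 0 < r → 0 ≤ Φ r) ∧
      (∀ r s : ℝ, 0 < r → r ≤ s → Φ s ≤ Φ r) ∧
      (∀ j : ℕ, ∀ r : ℝ, 0 < r →
        (Even j → 0 ≤ iteratedDeriv j Φ r) ∧ (Odd j → iteratedDeriv j Φ r ≤ 0)) := by
  obtain ⟨m, rfl⟩ : ∃ m, l = m + 1 := ⟨l - 1, by omega⟩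
  set s : ℝ := Real.sqrt lam with hsdef
  have hs : 0 < s := Real.sqrt_pos.mpr hlam
  have hΦfun : Φ = fun r : ℝ => p.eval r * Real.exp (-s * r) / r ^ (m + 1) := funext hΦ
  subst hΦfun
  have hdlt : p.natDegree < m + 1 := hdeg ▸ hkl
  have hqc := qp_coeff_nonneg s hs.le (m + 1) p hdlt hcoeff
  refine ⟨qp s (m + 1) p, rfl, ?_, hqc, ?_, ?_, ?_, ?_⟩
  · rw [qp_natDegree s hs (m + 1) p hp hcoeff, hdeg]
  · intro r hr
    exact hasDerivAt_F s m p r hr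
  · intro r hr
    exact div_nonneg (mul_nonneg (evalNonneg p hcoeff r hr.le) (Real.exp_pos _).le)
      (pow_nonneg hr.le _)
  · intro r t hr hrt
    have hdiff : ∀ x ∈ Set.Ioi (0 : ℝ),
        HasDerivAt (fun r : ℝ => p.eval r * Real.exp (-s * r) / r ^ (m + 1))
          (-((qp s (m + 1) p).eval x) * Real.exp (-s * x) / x ^ (m + 1 + 1)) x :=
      fun x hx => hasDerivAt_F s m p x hx
    have hanti : AntitoneOn (fun r : ℝ => p.eval r * Real.exp (-s * r) / r ^ (m + 1))
        (Set.Ioi 0) := by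
      have hint : interior (Set.Ioi (0 : ℝ)) = Set.Ioi 0 := interior_Ioi
      refine antitoneOn_of_deriv_nonpos (convex_Ioi 0) ?_ ?_ ?_
      · exact fun x hx => ((hdiff x hx).differentiableAt).continuousAt.continuousWithinAt
      · rw [hint]; exact fun x hx => ((hdiff x hx).differentiableAt).differentiableWithinAt
      · rw [hint]
        intro x hx
        rw [(hdiff x hx).deriv]
        have h1 : 0 ≤ ((qp s (m + 1) p)).eval x := evalNonneg _ hqc x (le_of_lt hx)
        have h2 : (0:ℝ) < x ^ (m + 1 + 1) := pow_pos hx _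
        have h3 := (Real.exp_pos (-s * x)).le
        apply div_nonpos_of_nonpos_of_nonneg _ h2.le
        nlinarith
    exact hanti hr (lt_of_lt_of_le hr hrt) hrt
  · intro j r hr
    exact signIter s hs.le j m p hdlt hcoeff r hr
end

section
/- Let h : ℝ^d ∖ {0} → ℝ be twice continuously differentiable, even, and harmonic (Δh(x) = 0 for all x ≠ 0), and set Φ(θ, w) = h(θ − w). Fix w₁,…,w_k ∈ ℝ^d, a ∈ ℝ^k, b ∈ ℝ^k, and let L be the loss. Then for every configuration θ = (θ₁,…,θ_k) such that for each i, θ_i ∉ {θ_j : j ≠ i} ∪ {w₁,…,w_k}, and for every i, the trace of the Hessian of L with respect to the block variable θ_i vanishes: Δ_{θ_i} L(θ) = 2 Σ_{j≠i} a_i a_j Δh(θ_i − θ_j) + 2 Σ_{j=1}^k a_i b_j Δh(θ_i − w_j) = 0. In particular, at no such configuration is the Hessian ∇²_{θ_i} L(θ) positive definite, so L has no strict local minimum among such configurations at which some block Hessian is positive definite (Earnshaw-type theorem). -/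
open Finset Topology Filter

section aux

variable {E F : Type*} [NormedAddCommGroup E] [NormedSpace ℝ E]
  [NormedAddCommGroup F] [NormedSpace ℝ F]

lemma fderiv_comp_sub' (g : E → F) (c x : E) :
    fderiv ℝ (fun y => g (y - c)) x = fderiv ℝ g (x - c) := by
  by_cases hg : DifferentiableAt ℝ g (x - c)
  · have h1 : HasFDerivAt (fun y : E => y - c) (ContinuousLinearMap.id ℝ E) x := by
      simpa using (hasFDerivAt_id x).sub_const c
    have h2 := (hg.hasFDerivAt.comp x h1)
    have : HasFDerivAt (fun y => g (y - c)) (fderiv ℝ g (x - c)) x := by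
      simpa [Function.comp_def] using h2
    exact this.fderiv
  · have h2 : ¬ DifferentiableAt ℝ (fun y => g (y - c)) x := by
      intro hcon
      apply hg
      have h3 : DifferentiableAt ℝ ((fun y => g (y - c)) ∘ (fun z : E => z + c)) (x - c) := by
        apply DifferentiableAt.comp
        · simpa using hcon
        · exact differentiableAt_id.add_const c
      simpa [Function.comp_def, add_sub_cancel_right] using h3
    rw [fderiv_zero_of_not_differentiableAt hg, fderiv_zero_of_not_differentiableAt h2]

lemma iteratedFDeriv_comp_sub_aux (g : E → F) (c : E) (n : ℕ) :
    iteratedFDeriv ℝ n (fun y => g (y - c))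
      = fun x => iteratedFDeriv ℝ n g (x - c) := by
  induction n with
  | zero => funext x; ext m; simp
  | succ n IH =>
    funext x
    ext m
    rw [iteratedFDeriv_succ_apply_left, iteratedFDeriv_succ_apply_left]
    rw [IH, fderiv_comp_sub']

lemma iteratedFDeriv_congr_nhds {n : ℕ} {f g : E → F} {x : E} (hfg : f =ᶠ[𝓝 x] g) :
    iteratedFDeriv ℝ n f x = iteratedFDeriv ℝ n g x := by
  simp only [← iteratedFDerivWithin_univ]
  exact Filter.EventuallyEq.iteratedFDerivWithin_eq
    (by simpa [nhdsWithin_univ] using hfg) hfg.self_of_nhds n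

end aux

lemma lap_sum {d : ℕ} (h : EuclideanSpace ℝ (Fin d) → ℝ)
    (hC2 : ContDiffOn ℝ 2 h {(0 : EuclideanSpace ℝ (Fin d))}ᶜ)
    {ι : Type*} (s : Finset ι) (c : ι → ℝ) (p : ι → EuclideanSpace ℝ (Fin d)) (C : ℝ)
    (x : EuclideanSpace ℝ (Fin d)) (hx : ∀ j ∈ s, x ≠ p j) :
    laplacian (fun y => C + ∑ j ∈ s, c j * h (y - p j)) x
      = ∑ j ∈ s, c j * laplacian h (x - p j) := by
  classical
  obtain ⟨ε, hε, hεlt⟩ : ∃ ε > 0, ∀ j ∈ s, ε < ‖x - p j‖ := by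
    rcases s.eq_empty_or_nonempty with rfl | hs
    · exact ⟨1, one_pos, by simp⟩
    · refine ⟨s.inf' hs (fun j => ‖x - p j‖) / 2, ?_, ?_⟩
      · have : (0:ℝ) < s.inf' hs (fun j => ‖x - p j‖) := by
          rw [Finset.lt_inf'_iff]
          intro j hj
          exact norm_pos_iff.2 (sub_ne_zero_of_ne (hx j hj))
        linarith
      · intro j hj
        have h1 := Finset.inf'_le (fun j => ‖x - p j‖) hj
        have : (0:ℝ) < s.inf' hs (fun j => ‖x - p j‖) := by
          rw [Finset.lt_inf'_iff]
          intro j hj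
          exact norm_pos_iff.2 (sub_ne_zero_of_ne (hx j hj))
        linarith
  set B : ContDiffBump (0 : EuclideanSpace ℝ (Fin d)) :=
    ⟨ε/2, 3*ε/4, by positivity, by linarith⟩ with hB
  set h' : EuclideanSpace ℝ (Fin d) → ℝ := fun y => (1 - B y) * h y with hh'def
  have hh'_eq : ∀ z : EuclideanSpace ℝ (Fin d), 3*ε/4 < ‖z‖ → h' z = h z := by
    intro z hz
    have hz0 : B z = 0 := B.zero_of_le_dist (by simpa [dist_zero_right] using hz.le)
    simp [hh'def, hz0]
  have hh' : ContDiff ℝ 2 h' := by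
    rw [contDiff_iff_contDiffAt]
    intro z
    by_cases hz : z = 0
    · subst hz
      have hev : h' =ᶠ[𝓝 (0 : EuclideanSpace ℝ (Fin d))] fun _ => (0:ℝ) := by
        filter_upwards [Metric.closedBall_mem_nhds (0 : EuclideanSpace ℝ (Fin d))
          (by positivity : (0:ℝ) < ε/2)] with y hy
        have : B y = 1 := B.one_of_mem_closedBall hy
        simp [hh'def, this]
      exact contDiffAt_const.congr_of_eventuallyEq hev
    · exact ((contDiff_const.sub B.contDiff).contDiffAt).mul
        (hC2.contDiffAt (isOpen_compl_singleton.mem_nhds hz))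
  have hgj : ∀ j : ι, ContDiff ℝ 2 (fun y => c j * h' (y - p j)) :=
    fun j => contDiff_const.mul (hh'.comp (contDiff_id.sub contDiff_const))
  -- the nearby points are in the region where h' = h
  have hnear : ∀ j ∈ s, ∀ᶠ z in 𝓝 (x - p j), h' z = h z := by
    intro j hj
    have hopen : IsOpen {z : EuclideanSpace ℝ (Fin d) | 3*ε/4 < ‖z‖} :=
      isOpen_lt continuous_const continuous_norm
    filter_upwards [hopen.mem_nhds (show 3*ε/4 < ‖x - p j‖ by
      have := hεlt j hj; linarith)] with z hz
    exact hh'_eq z hz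
  have key : iteratedFDeriv ℝ 2 (fun y => C + ∑ j ∈ s, c j * h (y - p j)) x
      = ∑ j ∈ s, c j • iteratedFDeriv ℝ 2 h (x - p j) := by
    have hev : (fun y => C + ∑ j ∈ s, c j * h (y - p j))
        =ᶠ[𝓝 x] (fun y => C + ∑ j ∈ s, c j * h' (y - p j)) := by
      have hU : ∀ᶠ y in 𝓝 x, ∀ j ∈ s, 3*ε/4 < ‖y - p j‖ := by
        rw [Filter.eventually_all_finset]
        intro j hj
        have hopen : IsOpen {y : EuclideanSpace ℝ (Fin d) | 3*ε/4 < ‖y - p j‖} :=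
          isOpen_lt continuous_const ((continuous_id.sub continuous_const).norm)
        exact hopen.mem_nhds (show 3*ε/4 < ‖x - p j‖ by have := hεlt j hj; linarith)
      filter_upwards [hU] with y hy
      congr 1
      exact Finset.sum_congr rfl fun j hj => by rw [hh'_eq _ (hy j hj)]
    rw [iteratedFDeriv_congr_nhds hev]
    have hadd : iteratedFDeriv ℝ 2 (fun y => C + ∑ j ∈ s, c j * h' (y - p j)) x
        = iteratedFDeriv ℝ 2 (fun _ => C) x
          + iteratedFDeriv ℝ 2 (fun y => ∑ j ∈ s, c j * h' (y - p j)) x :=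
      iteratedFDeriv_add_apply contDiff_const.contDiffAt (ContDiff.sum fun j _ => hgj j).contDiffAt
    rw [hadd, iteratedFDeriv_const_of_ne (by norm_num : (2:ℕ) ≠ 0)]
    have hsum : iteratedFDeriv ℝ 2 (fun y => ∑ j ∈ s, c j * h' (y - p j)) x
        = ∑ j ∈ s, iteratedFDeriv ℝ 2 (fun y => c j * h' (y - p j)) x := by
      have := iteratedFDeriv_sum (u := s) (f := fun j y => c j * h' (y - p j))
        (i := 2) (fun j _ => hgj j)
      have h2 := congrFun this x
      simpa using h2
    rw [hsum]
    simp only [Pi.zero_apply, zero_add]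
    refine Finset.sum_congr rfl fun j hj => ?_
    have hsmul : iteratedFDeriv ℝ 2 (fun y => c j * h' (y - p j)) x
        = c j • iteratedFDeriv ℝ 2 (fun y => h' (y - p j)) x := by
      have := iteratedFDeriv_const_smul_apply' (f := fun y => h' (y - p j)) (x := x)
        (a := c j) (hh'.comp (contDiff_id.sub contDiff_const)).contDiffAt
      simpa [smul_eq_mul] using this
    rw [hsmul, iteratedFDeriv_comp_sub_aux]
    congr 1
    exact iteratedFDeriv_congr_nhds ((hnear j hj).mono fun z hz => hz)
  simp only [laplacian, key, ContinuousMultilinearMap.sum_apply,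
    ContinuousMultilinearMap.smul_apply, smul_eq_mul]
  rw [Finset.sum_comm]
  exact Finset.sum_congr rfl fun j _ => by rw [Finset.mul_sum]

/-- Earnshaw-type theorem: if `h` is C², even and harmonic away from
`0`, and `L` is the depth-two loss for `Φ(θ,w) = h(θ-w)`, then at every configuration
avoiding collisions, each block Laplacian of `L` equals
`2 ∑_{j≠i} aᵢaⱼ Δh(θᵢ-θⱼ) + 2 ∑_j aᵢbⱼ Δh(θᵢ-wⱼ) = 0`; in particular no block Hessian
is positive definite there. -/
theorem stmt13 {d k : ℕ} (hd : 0 < d)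
    (h : EuclideanSpace ℝ (Fin d) → ℝ)
    (hC2 : ContDiffOn ℝ 2 h {(0 : EuclideanSpace ℝ (Fin d))}ᶜ)
    (heven : ∀ x, h (-x) = h x)
    (hharm : ∀ x : EuclideanSpace ℝ (Fin d), x ≠ 0 → laplacian h x = 0)
    (w : Fin k → EuclideanSpace ℝ (Fin d)) (a b : Fin k → ℝ)
    (L : (Fin k → EuclideanSpace ℝ (Fin d)) → ℝ)
    (hL : L = fun θ => ∑ i, ∑ j,
      (a i * a j * h (θ i - θ j) + 2 * (a i * b j) * h (θ i - w j)
        + b i * b j * h (w i - w j))) :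
    ∀ θ : Fin k → EuclideanSpace ℝ (Fin d),
      (∀ i : Fin k, (∀ j, j ≠ i → θ i ≠ θ j) ∧ (∀ j, θ i ≠ w j)) →
      ∀ i : Fin k,
        laplacian (fun x => L (Function.update θ i x)) (θ i)
            = 2 * ∑ j ∈ Finset.univ.erase i, a i * a j * laplacian h (θ i - θ j)
              + 2 * ∑ j, a i * b j * laplacian h (θ i - w j) ∧
        laplacian (fun x => L (Function.update θ i x)) (θ i) = 0 ∧
        ¬ (∀ v : EuclideanSpace ℝ (Fin d), v ≠ 0 →
            0 < iteratedFDeriv ℝ 2 (fun x => L (Function.update θ i x)) (θ i) ![v, v]) := by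
  classical
  intro θ hθ i
  have split : ∀ f : Fin k → ℝ, ∑ p, f p = f i + ∑ p ∈ Finset.univ.erase i, f p :=
    fun f => (Finset.add_sum_erase _ f (Finset.mem_univ i)).symm
  set s : Finset (Fin k ⊕ Fin k) := (Finset.univ.erase i).disjSum Finset.univ with hs
  set c : Fin k ⊕ Fin k → ℝ :=
    Sum.elim (fun j => 2*(a i * a j)) (fun j => 2*(a i * b j)) with hc
  set pts : Fin k ⊕ Fin k → EuclideanSpace ℝ (Fin d) := Sum.elim θ w with hpts
  set C : ℝ := a i * a i * h 0 + b i * b i * h (w i - w i)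
    + (∑ q ∈ Finset.univ.erase i, b i * b q * h (w i - w q))
    + (∑ p ∈ Finset.univ.erase i, 2*(a p * b i) * h (θ p - w i))
    + (∑ p ∈ Finset.univ.erase i, b p * b i * h (w p - w i))
    + (∑ p ∈ Finset.univ.erase i, ∑ q ∈ Finset.univ.erase i,
        (a p * a q * h (θ p - θ q) + 2*(a p * b q) * h (θ p - w q)
          + b p * b q * h (w p - w q))) with hC
  have key : (fun x => L (Function.update θ i x))
      = fun x => C + ∑ j ∈ s, c j * h (x - pts j) := by
    funext x
    have hui : Function.update θ i x i = x := Function.update_self i x θ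
    have hup : ∀ p, p ≠ i → Function.update θ i x p = θ p :=
      fun p hp => Function.update_of_ne hp x θ
    set T : Fin k → Fin k → ℝ := fun p q =>
      a p * a q * h (Function.update θ i x p - Function.update θ i x q)
        + 2*(a p * b q) * h (Function.update θ i x p - w q)
        + b p * b q * h (w p - w q) with hT
    have hLval : L (Function.update θ i x) = ∑ p, ∑ q, T p q := by
      rw [hL]
    have e1 : ∑ p : Fin k, (∑ q, T p q)
        = (∑ q, T i q) + ∑ p ∈ Finset.univ.erase i, ∑ q, T p q := split _
    have e2 : ∑ q : Fin k, T i q = T i i + ∑ q ∈ Finset.univ.erase i, T i q := split _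
    have e3 : T i i = a i * a i * h 0 + 2*(a i * b i) * h (x - w i)
        + b i * b i * h (w i - w i) := by
      simp only [hT, hui, sub_self]
    have e4 : ∑ q ∈ Finset.univ.erase i, T i q
        = (∑ q ∈ Finset.univ.erase i, a i * a q * h (x - θ q))
          + ((∑ q ∈ Finset.univ.erase i, 2*(a i * b q) * h (x - w q))
            + ∑ q ∈ Finset.univ.erase i, b i * b q * h (w i - w q)) := by
      rw [← Finset.sum_add_distrib, ← Finset.sum_add_distrib]
      refine Finset.sum_congr rfl fun q hq => ?_
      simp only [hT, hui, hup q (Finset.ne_of_mem_erase hq)]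
      ring
    have e5 : ∑ p ∈ Finset.univ.erase i, ∑ q, T p q
        = ((∑ p ∈ Finset.univ.erase i, a i * a p * h (x - θ p))
            + ((∑ p ∈ Finset.univ.erase i, 2*(a p * b i) * h (θ p - w i))
              + ∑ p ∈ Finset.univ.erase i, b p * b i * h (w p - w i)))
          + ∑ p ∈ Finset.univ.erase i, ∑ q ∈ Finset.univ.erase i,
              (a p * a q * h (θ p - θ q) + 2*(a p * b q) * h (θ p - w q)
                + b p * b q * h (w p - w q)) := by
      rw [← Finset.sum_add_distrib, ← Finset.sum_add_distrib, ← Finset.sum_add_distrib]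
      refine Finset.sum_congr rfl fun p hp => ?_
      have hpne : p ≠ i := Finset.ne_of_mem_erase hp
      rw [split]
      congr 1
      · simp only [hT, hui, hup p hpne]
        have hev : h (θ p - x) = h (x - θ p) := by
          rw [← neg_sub x (θ p), heven]
        rw [hev]; ring
      · refine Finset.sum_congr rfl fun q hq => ?_
        simp only [hT, hup p hpne, hup q (Finset.ne_of_mem_erase hq)]
    have e6 : ∑ j ∈ s, c j * h (x - pts j)
        = (∑ j ∈ Finset.univ.erase i, 2*(a i * a j) * h (x - θ j))
          + ∑ j : Fin k, 2*(a i * b j) * h (x - w j) := by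
      rw [hs, Finset.sum_disjSum]
      simp only [hc, hpts, Sum.elim_inl, Sum.elim_inr]
    have e7 : ∑ j ∈ Finset.univ.erase i, 2*(a i * a j) * h (x - θ j)
        = (∑ q ∈ Finset.univ.erase i, a i * a q * h (x - θ q))
          + ∑ q ∈ Finset.univ.erase i, a i * a q * h (x - θ q) := by
      rw [← Finset.sum_add_distrib]
      exact Finset.sum_congr rfl fun q _ => by ring
    have e8 : ∑ j : Fin k, 2*(a i * b j) * h (x - w j)
        = 2*(a i * b i) * h (x - w i)
          + ∑ q ∈ Finset.univ.erase i, 2*(a i * b q) * h (x - w q) := split _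
    rw [hLval, e1, e2, e3, e4, e5, e6, e7, e8, hC]
    ring
  have hx' : ∀ j ∈ s, θ i ≠ pts j := by
    intro j hj
    rcases j with j | j
    · have hj' : j ∈ Finset.univ.erase i := by
        simpa [hs] using hj
      exact (hθ i).1 j (Finset.ne_of_mem_erase hj')
    · exact (hθ i).2 j
  have part1 : laplacian (fun x => L (Function.update θ i x)) (θ i)
      = 2 * ∑ j ∈ Finset.univ.erase i, a i * a j * laplacian h (θ i - θ j)
        + 2 * ∑ j, a i * b j * laplacian h (θ i - w j) := by
    rw [key, lap_sum h hC2 s c pts C (θ i) hx', hs, Finset.sum_disjSum]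
    simp only [hc, hpts, Sum.elim_inl, Sum.elim_inr]
    rw [Finset.mul_sum, Finset.mul_sum]
    congr 1
    · exact Finset.sum_congr rfl fun j _ => by ring
    · exact Finset.sum_congr rfl fun j _ => by ring
  have part2 : laplacian (fun x => L (Function.update θ i x)) (θ i) = 0 := by
    rw [part1]
    have z1 : ∑ j ∈ Finset.univ.erase i, a i * a j * laplacian h (θ i - θ j) = 0 :=
      Finset.sum_eq_zero fun j hj => by
        rw [hharm _ (sub_ne_zero_of_ne ((hθ i).1 j (Finset.ne_of_mem_erase hj)))]; ring
    have z2 : ∑ j, a i * b j * laplacian h (θ i - w j) = 0 :=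
      Finset.sum_eq_zero fun j _ => by
        rw [hharm _ (sub_ne_zero_of_ne ((hθ i).2 j))]; ring
    rw [z1, z2]; ring
  refine ⟨part1, part2, ?_⟩
  intro hpos
  have hne : ∀ i' : Fin d, (EuclideanSpace.single i' (1:ℝ)) ≠ 0 := by
    intro i' hcon
    have := congrArg (fun v => v i') hcon
    simp [EuclideanSpace.single_apply] at this
  have hsumpos : 0 < ∑ i' : Fin d,
      iteratedFDeriv ℝ 2 (fun x => L (Function.update θ i x)) (θ i)
        ![EuclideanSpace.single i' 1, EuclideanSpace.single i' 1] := by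
    refine Finset.sum_pos (fun i' _ => hpos _ (hne i')) ?_
    have : Nonempty (Fin d) := ⟨⟨0, hd⟩⟩
    exact Finset.univ_nonempty
  rw [show (∑ i' : Fin d, iteratedFDeriv ℝ 2 (fun x => L (Function.update θ i x)) (θ i)
        ![EuclideanSpace.single i' 1, EuclideanSpace.single i' 1])
      = laplacian (fun x => L (Function.update θ i x)) (θ i) from rfl, part2] at hsumpos
  exact lt_irrefl 0 hsumpos
end

section
/- Let h : ℝ^d ∖ {0} → ℝ be twice continuously differentiable, even, and strictly subharmonic: Δh(x) > 0 for all x ≠ 0. Fix w₁,…,w_k ∈ ℝ^d and define the fixed-charge loss L(θ₁,…,θ_k) = 2 Σ_{1≤i<j≤k} h(θ_i − θ_j) − 2 Σ_{i=1}^k Σ_{j=1}^k h(θ_i − w_j). Suppose θ = (θ₁,…,θ_k) satisfies θ_i ≠ θ_j for i ≠ j and θ_i ≠ w_j for all i, j. Then the correlated-translation function H(v) = L(θ₁ + v, …, θ_k + v), v ∈ ℝ^d, satisfies ΔH(0) = −2 Σ_{i=1}^k Σ_{j=1}^k Δh(θ_i − w_j) < 0. Consequently v = 0 is not a local minimum of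 H, and θ is not a local minimum of L. -/
open Finset

section AuxStmt14

open Filter Set

variable {E : Type*} [NormedAddCommGroup E] [NormedSpace ℝ E]

lemma aux_fderiv_comp_const_add {F' : Type*} [NormedAddCommGroup F'] [NormedSpace ℝ F']
    (g : E → F') (c v : E)
    (hg : DifferentiableAt ℝ g (c + v)) :
    fderiv ℝ (fun w => g (c + w)) v = fderiv ℝ g (c + v) := by
  have h1 : HasFDerivAt (fun w : E => c + w) (ContinuousLinearMap.id ℝ E) v :=
    (hasFDerivAt_id v).const_add c
  have h2 := (hg.hasFDerivAt.comp v h1).fderiv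
  simpa [Function.comp_def] using h2

lemma aux_iteratedFDeriv_two_comp_const_add (g : E → ℝ) (c : E)
    (hg : ∀ᶠ w in nhds c, ContDiffAt ℝ 2 g w) (m : Fin 2 → E) :
    iteratedFDeriv ℝ 2 (fun v => g (c + v)) 0 m = iteratedFDeriv ℝ 2 g c m := by
  rw [iteratedFDeriv_two_apply, iteratedFDeriv_two_apply]
  have hdiff : ∀ᶠ w in nhds c, DifferentiableAt ℝ g w :=
    hg.mono fun w hw => hw.differentiableAt two_ne_zero
  have h0 : Filter.Tendsto (fun v : E => c + v) (nhds 0) (nhds c) := by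
    have : Continuous (fun v : E => c + v) := continuous_const.add continuous_id
    simpa using this.tendsto (0 : E)
  have e1 : fderiv ℝ (fun v => g (c + v)) =ᶠ[nhds (0 : E)] fun v => fderiv ℝ g (c + v) := by
    filter_upwards [h0.eventually hdiff] with v hv
    exact aux_fderiv_comp_const_add g c v hv
  rw [Filter.EventuallyEq.fderiv_eq e1]
  have hfd : DifferentiableAt ℝ (fderiv ℝ g) (c + 0) := by
    rw [add_zero]
    exact ((hg.self_of_nhds).fderiv_right (m := 1) (by norm_num)).differentiableAt one_ne_zero
  rw [aux_fderiv_comp_const_add (fderiv ℝ g) c 0 hfd, add_zero]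

lemma aux_lap {ι : Type*} [Fintype ι] (h : E → ℝ)
    (hC2 : ContDiffOn ℝ 2 h {(0 : E)}ᶜ) (c : ι → E) (hc0 : ∀ p, c p ≠ 0)
    (C a : ℝ) (m : Fin 2 → E) :
    iteratedFDeriv ℝ 2 (fun v => C + a • ∑ p : ι, h (c p + v)) 0 m
      = a * ∑ p : ι, iteratedFDeriv ℝ 2 h (c p) m := by
  set S : Set E := ⋂ p : ι, {v | c p + v ≠ 0} with hSdef
  have hSopen : IsOpen S :=
    isOpen_iInter_of_finite fun p =>
      isOpen_compl_singleton.preimage (continuous_const.add continuous_id)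
  have h0S : (0 : E) ∈ S := Set.mem_iInter.2 fun p => by simpa using hc0 p
  have hSu : UniqueDiffOn ℝ S := hSopen.uniqueDiffOn
  have hφ : ∀ p : ι, ContDiffOn ℝ 2 (fun v => h (c p + v)) S := fun p =>
    hC2.comp (contDiff_const.add contDiff_id).contDiffOn
      (fun v hv => Set.mem_iInter.1 hv p)
  have hsum : ContDiffOn ℝ 2 (fun v => ∑ p : ι, h (c p + v)) S :=
    ContDiffOn.sum fun p _ => hφ p
  have hsplit : (fun v => C + a • ∑ p : ι, h (c p + v))
      = (fun _ : E => C) + (fun v => a • ∑ p : ι, h (c p + v)) := rfl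
  have hsmul : (fun v : E => a • ∑ p : ι, h (c p + v))
      = a • (fun v => ∑ p : ι, h (c p + v)) := rfl
  rw [← iteratedFDerivWithin_of_isOpen 2 hSopen h0S, hsplit,
    iteratedFDerivWithin_add_apply (contDiffOn_const.contDiffWithinAt h0S)
      ((hsum.const_smul a).contDiffWithinAt h0S) hSu h0S,
    iteratedFDerivWithin_const_of_ne two_ne_zero C S, hsmul,
    iteratedFDerivWithin_const_smul_apply (hsum.contDiffWithinAt h0S) hSu h0S,
    iteratedFDerivWithin_fun_sum_apply hSu h0S (fun p _ => (hφ p).contDiffWithinAt h0S)]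
  have hterm : ∀ p : ι,
      iteratedFDerivWithin ℝ 2 (fun v => h (c p + v)) S 0 m
        = iteratedFDeriv ℝ 2 h (c p) m := by
    intro p
    rw [iteratedFDerivWithin_of_isOpen 2 hSopen h0S]
    refine aux_iteratedFDeriv_two_comp_const_add h (c p) ?_ m
    filter_upwards [isOpen_compl_singleton.mem_nhds (hc0 p)] with w hw
    exact hC2.contDiffAt (isOpen_compl_singleton.mem_nhds hw)
  simp only [Pi.zero_apply, zero_add, ContinuousMultilinearMap.smul_apply,
    ContinuousMultilinearMap.sum_apply, smul_eq_mul]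
  exact congrArg (a * ·) (Finset.sum_congr rfl fun p _ => hterm p)

lemma aux_not_isLocalMin_of_neg_second {g : ℝ → ℝ} {q : ℝ}
    (hd : ∀ᶠ t in nhds (0:ℝ), DifferentiableAt ℝ g t)
    (h2 : HasDerivAt (deriv g) q 0) (hq : q < 0) : ¬ IsLocalMin g 0 := by
  intro hmin
  have h10 : deriv g 0 = 0 := hmin.deriv_eq_zero
  have hslope : Filter.Tendsto (slope (deriv g) 0) (nhdsWithin 0 {(0:ℝ)}ᶜ) (nhds q) :=
    hasDerivAt_iff_tendsto_slope.1 h2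
  have hev : ∀ᶠ t in nhdsWithin (0:ℝ) {(0:ℝ)}ᶜ, slope (deriv g) 0 t < 0 :=
    hslope.eventually_lt_const hq
  rw [eventually_nhdsWithin_iff] at hev
  have hboth : ∀ᶠ t in nhds (0:ℝ), DifferentiableAt ℝ g t ∧
      (t ∈ ({(0:ℝ)}ᶜ : Set ℝ) → slope (deriv g) 0 t < 0) := hd.and hev
  rcases Metric.eventually_nhds_iff.1 hboth with ⟨ε, hε, hball⟩
  have hneg : ∀ t : ℝ, 0 < t → t < ε → deriv g t < 0 := by
    intro t ht0 htε
    have hmem : dist t (0:ℝ) < ε := by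
      rw [Real.dist_eq, sub_zero, abs_of_pos ht0]; exact htε
    have := (hball hmem).2 (by simpa using ne_of_gt ht0)
    rw [slope_def_field, h10, sub_zero, sub_zero] at this
    rcases div_neg_iff.1 this with ⟨_, h⟩ | ⟨h, _⟩
    · exact absurd ht0 (not_lt.2 h.le)
    · exact h
  have hanti : StrictAntiOn g (Set.Icc 0 (ε/2)) := by
    apply strictAntiOn_of_deriv_neg (convex_Icc _ _)
    · intro t ht
      refine ((hball ?_).1).continuousAt.continuousWithinAt
      rw [Real.dist_eq, sub_zero, abs_of_nonneg ht.1]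
      exact lt_of_le_of_lt ht.2 (by linarith)
    · intro t ht
      rw [interior_Icc] at ht
      exact hneg t ht.1 (lt_trans ht.2 (by linarith))
  rcases Metric.eventually_nhds_iff.1 hmin with ⟨δ, hδ, hmin'⟩
  set t := min (ε/2) δ / 2 with htdef
  have ht0 : 0 < t := by positivity
  have htε : t ≤ ε/2 := by
    have : min (ε/2) δ ≤ ε/2 := min_le_left _ _
    linarith
  have htδ : t < δ := by
    have : min (ε/2) δ ≤ δ := min_le_right _ _
    linarith
  have h1 : g 0 ≤ g t := by
    apply hmin'
    rw [Real.dist_eq, sub_zero, abs_of_pos ht0]; exact htδ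
  have h2' : g t < g 0 := hanti ⟨le_rfl, by linarith⟩ ⟨ht0.le, htε⟩ ht0
  linarith

lemma aux_slice (H : E → ℝ) (S : Set E) (hSopen : IsOpen S) (h0S : (0:E) ∈ S)
    (hH : ContDiffOn ℝ 2 H S) (hmin : IsLocalMin H 0) (e : E) :
    0 ≤ iteratedFDeriv ℝ 2 H 0 ![e, e] := by
  by_contra hq
  push_neg at hq
  have hHat : ∀ v ∈ S, ContDiffAt ℝ 2 H v := fun v hv => hH.contDiffAt (hSopen.mem_nhds hv)
  have hU : IsOpen ((fun t : ℝ => t • e) ⁻¹' S) :=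
    hSopen.preimage (continuous_id.smul continuous_const)
  have h0U : (0:ℝ) ∈ (fun t : ℝ => t • e) ⁻¹' S := by
    show (0:ℝ) • e ∈ S
    rw [zero_smul]; exact h0S
  set g : ℝ → ℝ := fun t => H (t • e) with hgdef
  have hgmin : IsLocalMin g 0 := by
    have hT : Filter.Tendsto (fun t : ℝ => t • e) (nhds 0) (nhds (0:E)) := by
      have hc : Continuous fun t : ℝ => t • e := continuous_id.smul continuous_const
      simpa [zero_smul] using hc.tendsto (0:ℝ)
    have hmin' : IsMinFilter H (nhds (0:E)) ((fun t : ℝ => t • e) 0) := by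
      show IsMinFilter H (nhds (0:E)) ((0:ℝ) • e)
      rw [zero_smul]; exact hmin
    exact IsMinFilter.comp_tendsto (g := fun t : ℝ => t • e) (b := (0:ℝ)) hmin' hT
  have hue : ∀ t : ℝ, HasDerivAt (fun s : ℝ => s • e) e t := fun t => by
    simpa using (hasDerivAt_id t).smul_const e
  have hdg : ∀ᶠ t in nhds (0:ℝ), DifferentiableAt ℝ g t := by
    filter_upwards [hU.mem_nhds h0U] with t ht
    have hdH : DifferentiableAt ℝ H (t • e) := (hHat _ ht).differentiableAt two_ne_zero
    exact (hdH.hasFDerivAt.comp_hasDerivAt t (hue t)).differentiableAt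
  have heq : deriv g =ᶠ[nhds (0:ℝ)] fun t => fderiv ℝ H (t • e) e := by
    filter_upwards [hU.mem_nhds h0U] with t ht
    have hdH : DifferentiableAt ℝ H (t • e) := (hHat _ ht).differentiableAt two_ne_zero
    exact (hdH.hasFDerivAt.comp_hasDerivAt t (hue t)).deriv
  have hfd : DifferentiableAt ℝ (fderiv ℝ H) ((0:ℝ) • e) := by
    rw [zero_smul]
    exact ((hHat 0 h0S).fderiv_right (m := 1) (by norm_num)).differentiableAt one_ne_zero
  have h1 : HasDerivAt (fun t : ℝ => fderiv ℝ H (t • e))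
      (fderiv ℝ (fderiv ℝ H) ((0:ℝ) • e) e) 0 :=
    hfd.hasFDerivAt.comp_hasDerivAt 0 (hue 0)
  have h2' : HasDerivAt (fun t : ℝ => fderiv ℝ H (t • e) e)
      (fderiv ℝ (fderiv ℝ H) ((0:ℝ) • e) e e) 0 := by
    have := h1.clm_apply (hasDerivAt_const (0:ℝ) e)
    simpa using this
  have hq2 : iteratedFDeriv ℝ 2 H 0 ![e, e] = fderiv ℝ (fderiv ℝ H) ((0:ℝ) • e) e e := by
    rw [iteratedFDeriv_two_apply, zero_smul]
    simp
  have h2 : HasDerivAt (deriv g) (iteratedFDeriv ℝ 2 H 0 ![e, e]) 0 := by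
    rw [hq2]
    exact h2'.congr_of_eventuallyEq heq
  exact aux_not_isLocalMin_of_neg_second hdg h2 hq hgmin

end AuxStmt14

/-- for `h` C², even and strictly subharmonic away from `0`, and the
fixed-charge loss `L(θ) = 2∑_{i<j} h(θᵢ-θⱼ) - 2∑_{i,j} h(θᵢ-wⱼ)`, at any
collision-free configuration `θ` the correlated translation `H(v) = L(θ+v)`
satisfies `ΔH(0) = -2∑_{i,j} Δh(θᵢ-wⱼ) < 0`; hence `0` is not a local minimum of `H`
and `θ` is not a local minimum of `L`. -/
theorem stmt14 {d k : ℕ} (hk : 0 < k)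
    (h : EuclideanSpace ℝ (Fin d) → ℝ)
    (hC2 : ContDiffOn ℝ 2 h {(0 : EuclideanSpace ℝ (Fin d))}ᶜ)
    (heven : ∀ x, h (-x) = h x)
    (hsub : ∀ x : EuclideanSpace ℝ (Fin d), x ≠ 0 → 0 < laplacian h x)
    (w : Fin k → EuclideanSpace ℝ (Fin d))
    (L : (Fin k → EuclideanSpace ℝ (Fin d)) → ℝ)
    (hL : L = fun θ => 2 * ∑ i, ∑ j ∈ Finset.univ.filter (fun j => i < j), h (θ i - θ j)
      - 2 * ∑ i, ∑ j, h (θ i - w j))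
    (θ : Fin k → EuclideanSpace ℝ (Fin d))
    (hsep : ∀ i j, i ≠ j → θ i ≠ θ j)
    (hsepw : ∀ i j, θ i ≠ w j) :
    laplacian (fun v => L (fun i => θ i + v)) 0
        = -2 * ∑ i, ∑ j, laplacian h (θ i - w j) ∧
    laplacian (fun v => L (fun i => θ i + v)) 0 < 0 ∧
    ¬ IsLocalMin (fun v => L (fun i => θ i + v)) 0 ∧
    ¬ IsLocalMin L θ := by
  haveI : Nonempty (Fin k) := ⟨⟨0, hk⟩⟩
  set c : Fin k × Fin k → EuclideanSpace ℝ (Fin d) := fun p => θ p.1 - w p.2 with hcdef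
  have hc0 : ∀ p, c p ≠ 0 := fun p => sub_ne_zero.2 (hsepw p.1 p.2)
  -- rewrite H in the canonical form
  have hHF : (fun v => L (fun i => θ i + v))
      = fun v => (2 * ∑ i, ∑ j ∈ Finset.univ.filter (fun j => i < j), h (θ i - θ j))
          + (-2 : ℝ) • ∑ p : Fin k × Fin k, h (c p + v) := by
    funext v
    simp only [hL]
    have e1 : ∀ i j : Fin k, θ i + v - (θ j + v) = θ i - θ j := fun i j => by abel
    have e2 : ∑ p : Fin k × Fin k, h (c p + v) = ∑ i, ∑ j, h (θ i + v - w j) := by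
      rw [← Finset.univ_product_univ, Finset.sum_product]
      refine Finset.sum_congr rfl fun i _ => Finset.sum_congr rfl fun j _ => ?_
      congr 1
      show θ i - w j + v = θ i + v - w j
      abel
    simp_rw [e1]
    rw [e2, smul_eq_mul]
    ring
  -- the open set where everything is smooth
  set S : Set (EuclideanSpace ℝ (Fin d)) := ⋂ p : Fin k × Fin k, {v | c p + v ≠ 0} with hSdef
  have hSopen : IsOpen S :=
    isOpen_iInter_of_finite fun p =>
      isOpen_compl_singleton.preimage (continuous_const.add continuous_id)
  have h0S : (0 : EuclideanSpace ℝ (Fin d)) ∈ S := Set.mem_iInter.2 fun p => by simpa using hc0 p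
  have hsum : ContDiffOn ℝ 2 (fun v => ∑ p : Fin k × Fin k, h (c p + v)) S :=
    ContDiffOn.sum fun p _ =>
      hC2.comp (contDiff_const.add contDiff_id).contDiffOn
        (fun v hv => Set.mem_iInter.1 hv p)
  have hHS : ContDiffOn ℝ 2 (fun v => L (fun i => θ i + v)) S := by
    rw [hHF]
    exact contDiffOn_const.add (hsum.const_smul _)
  -- pointwise second-derivative identity
  have key : ∀ m : Fin 2 → EuclideanSpace ℝ (Fin d),
      iteratedFDeriv ℝ 2 (fun v => L (fun i => θ i + v)) 0 m
        = (-2 : ℝ) * ∑ p : Fin k × Fin k, iteratedFDeriv ℝ 2 h (c p) m := by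
    intro m
    rw [hHF]
    exact aux_lap h hC2 c hc0 _ _ m
  have eqsum : ∀ f : EuclideanSpace ℝ (Fin d) → ℝ,
      ∑ p : Fin k × Fin k, f (c p) = ∑ i, ∑ j, f (θ i - w j) := by
    intro f
    rw [← Finset.univ_product_univ, Finset.sum_product]
  have eq1 : laplacian (fun v => L (fun i => θ i + v)) 0
      = -2 * ∑ i, ∑ j, laplacian h (θ i - w j) := by
    simp only [laplacian]
    rw [Finset.sum_congr rfl fun e _ =>
      key ![EuclideanSpace.single e 1, EuclideanSpace.single e 1]]
    rw [← Finset.mul_sum, Finset.sum_comm]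
    exact congrArg (fun z => -2 * z)
      (eqsum fun x => ∑ e : Fin d, iteratedFDeriv ℝ 2 h x
        ![EuclideanSpace.single e 1, EuclideanSpace.single e 1])
  have pos : 0 < ∑ i, ∑ j, laplacian h (θ i - w j) :=
    Finset.sum_pos
      (fun i _ => Finset.sum_pos
        (fun j _ => hsub _ (sub_ne_zero.2 (hsepw i j))) Finset.univ_nonempty)
      Finset.univ_nonempty
  have neg : laplacian (fun v => L (fun i => θ i + v)) 0 < 0 := by
    rw [eq1]; nlinarith
  have notminH : ¬ IsLocalMin (fun v => L (fun i => θ i + v)) 0 := by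
    intro hmin
    have hnn : 0 ≤ laplacian (fun v => L (fun i => θ i + v)) 0 :=
      Finset.sum_nonneg fun e _ =>
        aux_slice (fun v => L (fun i => θ i + v)) S hSopen h0S hHS hmin _
    exact absurd neg (not_lt.2 hnn)
  refine ⟨eq1, neg, notminH, ?_⟩
  intro hm
  apply notminH
  have hT : Filter.Tendsto (fun v : EuclideanSpace ℝ (Fin d) => fun i : Fin k => θ i + v)
      (nhds 0) (nhds θ) := by
    have hco : Continuous (fun v : EuclideanSpace ℝ (Fin d) => fun i : Fin k => θ i + v) :=
      continuous_pi fun i => continuous_const.add continuous_id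
    have := hco.tendsto 0
    simpa using this
  have hm' : IsMinFilter L (nhds θ)
      ((fun v : EuclideanSpace ℝ (Fin d) => fun i : Fin k => θ i + v) 0) := by
    show IsMinFilter L (nhds θ) (fun i => θ i + 0)
    simp only [add_zero]; exact hm
  exact IsMinFilter.comp_tendsto
    (g := fun v : EuclideanSpace ℝ (Fin d) => fun i : Fin k => θ i + v) (b := 0) hm' hT
end

section
/- Let c > 0 and define the Gaussian potential h(x) = e^{−c‖x‖²/2} on ℝ^d. Then Δh(x) = c(c‖x‖² − d) e^{−c‖x‖²/2}; in particular h is strictly subharmonic outside the ball of radius √(d/c). Fix w₁,…,w_k ∈ ℝ^d and define L(θ₁,…,θ_k) = 2 Σ_{1≤i<j≤k} h(θ_i − θ_j) − 2 Σ_{i=1}^k Σ_{j=1}^k h(θ_i − w_j). If θ = (θ₁,…,θ_k) satisfies c‖θ_i − w_j‖² > d for all i, j, then H(v) = L(θ₁ + v, …, θ_k + v) satisfies ΔH(0) = −2 Σ_{i,j} Δh(θ_i − w_j) < 0, so θ is not a local minimum of L. Hence at any local minimum of L there exist i, j with ‖θ_i − w_j‖² ≤ d/c. -/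
open Finset

variable {d : ℕ}
local notation "E" => EuclideanSpace ℝ (Fin d)

noncomputable def hg (c : ℝ) {d : ℕ} (x : EuclideanSpace ℝ (Fin d)) : ℝ :=
  Real.exp (-c * ‖x‖ ^ 2 / 2)

noncomputable def Fd (c : ℝ) {d : ℕ} (x : EuclideanSpace ℝ (Fin d)) :
    EuclideanSpace ℝ (Fin d) →L[ℝ] ℝ := (-c * hg c x) • innerSL ℝ x

theorem hasFd (c : ℝ) (x : E) : HasFDerivAt (hg c (d := d)) (Fd c x) x := by
  have h1 : HasFDerivAt (fun y : E => -c * ‖y‖ ^ 2 / 2)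
      ((-c/2) • (2 • (innerSL ℝ x))) x := by
    have := (hasStrictFDerivAt_norm_sq x).hasFDerivAt
    have h2 : HasFDerivAt (fun y : E => -c/2 * ‖y‖ ^ 2) ((-c/2) • (2 • (innerSL ℝ x))) x :=
      this.const_mul (-c/2)
    convert h2 using 2 with y
    ring
  have h3 := (Real.hasDerivAt_exp (-c * ‖x‖ ^ 2 / 2)).comp_hasFDerivAt x h1
  refine h3.congr_fderiv ?_
  unfold Fd hg
  ext v
  simp [smul_smul]
  ring

noncomputable def Bd {d : ℕ} :
    EuclideanSpace ℝ (Fin d) →L[ℝ] EuclideanSpace ℝ (Fin d) →L[ℝ] ℝ := innerSL ℝ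

@[simp] theorem Bd_apply {d : ℕ} (u v : EuclideanSpace ℝ (Fin d)) :
    Bd u v = inner ℝ u v := rfl

noncomputable def Gd (c : ℝ) {d : ℕ} (x : EuclideanSpace ℝ (Fin d)) :
    EuclideanSpace ℝ (Fin d) →L[ℝ] EuclideanSpace ℝ (Fin d) →L[ℝ] ℝ :=
  (-c * hg c x) • Bd +
    ((c ^ 2 * hg c x) • innerSL ℝ x).smulRight (innerSL ℝ x)

theorem hasGd (c : ℝ) (x : E) : HasFDerivAt (fun y => Fd c (d := d) y) (Gd c x) x := by
  have hs : HasFDerivAt (fun y : E => -c * hg c y)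
      ((c ^ 2 * hg c x) • innerSL ℝ x) x := by
    have := (hasFd c x).const_mul (-c)
    refine this.congr_fderiv ?_
    unfold Fd
    rw [smul_smul]
    congr 1
    ring
  have hinner : HasFDerivAt (fun y : E => innerSL ℝ y)
      (Bd (d := d)) x := Bd.hasFDerivAt
  have : HasFDerivAt (fun y => Fd c (d := d) y)
      ((-c * hg c x) • Bd + ((c ^ 2 * hg c x) • innerSL ℝ x).smulRight (innerSL ℝ x)) x :=
    hs.smul hinner
  exact this

theorem Gd_apply (c : ℝ) (x u v : E) :
    Gd c x u v = -c * hg c x * inner ℝ u v + c ^ 2 * hg c x * inner ℝ x u * inner ℝ x v := by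
  unfold Gd
  simp [ContinuousLinearMap.smul_apply, ContinuousLinearMap.add_apply,
    ContinuousLinearMap.smulRight_apply]

theorem lap_eq {d : ℕ} (f : EuclideanSpace ℝ (Fin d) → ℝ)
    (F' : EuclideanSpace ℝ (Fin d) → (EuclideanSpace ℝ (Fin d) →L[ℝ] ℝ))
    (G' : EuclideanSpace ℝ (Fin d) →L[ℝ] EuclideanSpace ℝ (Fin d) →L[ℝ] ℝ)
    (x : EuclideanSpace ℝ (Fin d))
    (hF : ∀ y, HasFDerivAt f (F' y) y) (hG : HasFDerivAt F' G' x) :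
    laplacian f x = ∑ i : Fin d, G' (EuclideanSpace.single i 1) (EuclideanSpace.single i 1) := by
  have hf : fderiv ℝ f = F' := funext fun y => (hF y).fderiv
  unfold laplacian
  congr 1
  ext i
  rw [iteratedFDeriv_two_apply, hf, hG.fderiv]
  simp

theorem sum_Gd (c : ℝ) (x : E) :
    ∑ i : Fin d, Gd c x (EuclideanSpace.single i 1) (EuclideanSpace.single i 1)
      = c * (c * ‖x‖ ^ 2 - d) * Real.exp (-c * ‖x‖ ^ 2 / 2) := by
  have h1 : ∀ i : Fin d, (inner ℝ x (EuclideanSpace.single i (1:ℝ)) : ℝ) = x i := by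
    intro i; simp [EuclideanSpace.inner_single_right]
  have h2 : ∀ i : Fin d,
      (inner ℝ (EuclideanSpace.single i (1:ℝ)) (EuclideanSpace.single i (1:ℝ)) : ℝ) = 1 := by
    intro i; simp [EuclideanSpace.inner_single_right, EuclideanSpace.single_apply]
  have hx : ∑ i : Fin d, x i * x i = ‖x‖ ^ 2 := by
    rw [← real_inner_self_eq_norm_sq, PiLp.inner_apply]
    simp only [RCLike.inner_apply, conj_trivial]
  simp only [Gd_apply, h1, h2]
  rw [Finset.sum_add_distrib, Finset.sum_const]
  have : ∑ i : Fin d, c ^ 2 * hg c x * x i * x i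
      = c ^ 2 * hg c x * ∑ i : Fin d, x i * x i := by
    rw [Finset.mul_sum]; congr 1; ext i; ring
  rw [this, hx]
  simp only [Finset.card_univ, Fintype.card_fin, nsmul_eq_mul, hg]
  ring

theorem lap_hg (c : ℝ) (x : E) :
    laplacian (hg c) x = c * (c * ‖x‖ ^ 2 - d) * Real.exp (-c * ‖x‖ ^ 2 / 2) := by
  rw [lap_eq (hg c) (Fd c) (Gd c x) x (hasFd c) (hasGd c x), sum_Gd]

theorem hasFd_trans (c : ℝ) (z v : E) :
    HasFDerivAt (fun y : E => hg c (z + y)) (Fd c (z + v)) v := by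
  have := (hasFd c (z + v)).comp v ((hasFDerivAt_id v).const_add z)
  simp at this
  exact this

theorem hasGd_trans (c : ℝ) (z v : E) :
    HasFDerivAt (fun y : E => Fd c (z + y)) (Gd c (z + v)) v := by
  have := (hasGd c (z + v)).comp v ((hasFDerivAt_id v).const_add z)
  simp at this
  exact this


noncomputable def Hd' {d k : ℕ} (c : ℝ) (z : Fin k → Fin k → EuclideanSpace ℝ (Fin d))
    (v : EuclideanSpace ℝ (Fin d)) : EuclideanSpace ℝ (Fin d) →L[ℝ] ℝ :=
  (-2 : ℝ) • ∑ i, ∑ j, Fd c (z i j + v)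

noncomputable def Hd'' {d k : ℕ} (c : ℝ) (z : Fin k → Fin k → EuclideanSpace ℝ (Fin d))
    (v : EuclideanSpace ℝ (Fin d)) :
    EuclideanSpace ℝ (Fin d) →L[ℝ] EuclideanSpace ℝ (Fin d) →L[ℝ] ℝ :=
  (-2 : ℝ) • ∑ i, ∑ j, Gd c (z i j + v)

theorem hasHd' {d k : ℕ} (c A : ℝ) (z : Fin k → Fin k → EuclideanSpace ℝ (Fin d))
    (v : EuclideanSpace ℝ (Fin d)) :
    HasFDerivAt (fun v => A - 2 * ∑ i, ∑ j, hg c (z i j + v)) (Hd' c z v) v := by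
  have hs : HasFDerivAt (fun v => ∑ i, ∑ j, hg c (z i j + v))
      (∑ i, ∑ j, Fd c (z i j + v)) v :=
    HasFDerivAt.fun_sum fun i _ => HasFDerivAt.fun_sum fun j _ => hasFd_trans c (z i j) v
  have := (hs.const_mul (2 : ℝ)).const_sub A
  refine this.congr_fderiv ?_
  unfold Hd'
  ext u
  simp

theorem hasHd'' {d k : ℕ} (c : ℝ) (z : Fin k → Fin k → EuclideanSpace ℝ (Fin d))
    (v : EuclideanSpace ℝ (Fin d)) :
    HasFDerivAt (Hd' c z) (Hd'' c z v) v :=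
  (HasFDerivAt.fun_sum fun i _ => HasFDerivAt.fun_sum fun j _ =>
    hasGd_trans c (z i j) v).const_smul (-2 : ℝ)

theorem key {d k : ℕ} (c : ℝ) (A : ℝ) (z : Fin k → Fin k → EuclideanSpace ℝ (Fin d)) :
    laplacian (fun v => A - 2 * ∑ i, ∑ j, hg c (z i j + v)) 0
      = -2 * ∑ i, ∑ j, laplacian (hg c) (z i j) := by
  rw [lap_eq _ (Hd' c z) _ 0 (hasHd' c A z) (hasHd'' c z 0)]
  have hlap : ∀ i j, laplacian (hg c) (z i j)
      = ∑ l : Fin d, Gd c (z i j) (EuclideanSpace.single l 1) (EuclideanSpace.single l 1) :=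
    fun i j => lap_eq _ (Fd c) _ _ (hasFd c) (hasGd c (z i j))
  simp only [hlap, Hd'', add_zero, ContinuousLinearMap.smul_apply,
    ContinuousLinearMap.sum_apply, smul_eq_mul, ← Finset.mul_sum]
  congr 1
  rw [Finset.sum_comm]
  exact Finset.sum_congr rfl fun i _ => Finset.sum_comm

theorem not_isLocalMin_1d {g g₁ : ℝ → ℝ} {a : ℝ}
    (hgd : ∀ t, HasDerivAt g (g₁ t) t) (hg₁ : HasDerivAt g₁ a 0)
    (ha : a < 0) : ¬ IsLocalMin g 0 := by
  intro hmin
  have h0 : g₁ 0 = 0 := by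
    have := hmin.deriv_eq_zero
    rwa [(hgd 0).deriv] at this
  have hslope : Filter.Tendsto (slope g₁ 0) (nhdsWithin 0 {(0:ℝ)}ᶜ) (nhds a) :=
    hasDerivAt_iff_tendsto_slope.mp hg₁
  have hev : ∀ᶠ t in nhdsWithin 0 (Set.Ioi (0:ℝ)), g₁ t < 0 := by
    have h1 : ∀ᶠ t in nhdsWithin 0 {(0:ℝ)}ᶜ, slope g₁ 0 t < 0 :=
      hslope.eventually (eventually_lt_nhds ha)
    have h2 : ∀ᶠ t in nhdsWithin 0 (Set.Ioi (0:ℝ)), slope g₁ 0 t < 0 :=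
      h1.filter_mono (nhdsWithin_mono 0 fun t ht => ne_of_gt ht)
    filter_upwards [h2, eventually_mem_nhdsWithin] with t h3 h4
    have h5 : slope g₁ 0 t = g₁ t / t := by simp [slope_def_field, h0]
    rw [h5] at h3
    rcases div_neg_iff.mp h3 with ⟨_, h6⟩ | ⟨h6, _⟩
    · exact absurd h4 (not_lt.mpr h6.le)
    · exact h6
  obtain ⟨u, hu, hsub⟩ := mem_nhdsGT_iff_exists_Ioo_subset.mp hev
  have hanti : StrictAntiOn g (Set.Icc 0 u) := by
    apply strictAntiOn_of_deriv_neg (convex_Icc 0 u)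
    · exact fun t _ => ((hgd t).differentiableAt.continuousAt).continuousWithinAt
    · intro t ht
      rw [interior_Icc] at ht
      rw [(hgd t).deriv]
      exact hsub ht
  have hev2 : ∀ᶠ t in nhdsWithin 0 (Set.Ioi (0:ℝ)), g t < g 0 := by
    have hIoo : Set.Ioo (0:ℝ) u ∈ nhdsWithin 0 (Set.Ioi (0:ℝ)) :=
      Ioo_mem_nhdsGT_of_mem ⟨le_refl 0, hu⟩
    filter_upwards [hIoo] with t ht
    exact hanti ⟨le_refl 0, hu.le⟩ ⟨ht.1.le, ht.2.le⟩ ht.1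
  have hev3 : ∀ᶠ t in nhdsWithin 0 (Set.Ioi (0:ℝ)), g 0 ≤ g t :=
    hmin.filter_mono nhdsWithin_le_nhds
  obtain ⟨t, h5, h6⟩ := (hev2.and hev3).exists
  exact absurd h6 (not_le.mpr h5)

theorem not_min_key {d k : ℕ} (c A : ℝ) (z : Fin k → Fin k → EuclideanSpace ℝ (Fin d))
    (hneg : laplacian (fun v => A - 2 * ∑ i, ∑ j, hg c (z i j + v)) 0 < 0) :
    ¬ IsLocalMin (fun v => A - 2 * ∑ i, ∑ j, hg c (z i j + v)) 0 := by
  intro hmin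
  have hlap : laplacian (fun v => A - 2 * ∑ i, ∑ j, hg c (z i j + v)) 0
      = ∑ l : Fin d, Hd'' c z 0 (EuclideanSpace.single l 1) (EuclideanSpace.single l 1) :=
    lap_eq _ (Hd' c z) _ 0 (hasHd' c A z) (hasHd'' c z 0)
  rw [hlap] at hneg
  obtain ⟨l, hl⟩ : ∃ l : Fin d,
      Hd'' c z 0 (EuclideanSpace.single l 1) (EuclideanSpace.single l 1) < 0 := by
    by_contra hcon
    push_neg at hcon
    have : (0:ℝ) ≤ ∑ l : Fin d, Hd'' c z 0 (EuclideanSpace.single l 1)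
        (EuclideanSpace.single l 1) := Finset.sum_nonneg fun l _ => hcon l
    linarith
  set e := EuclideanSpace.single (𝕜 := ℝ) l 1 with he
  have hline : ∀ t : ℝ, HasDerivAt (fun t : ℝ => t • e) e t := fun t => by
    simpa using (hasDerivAt_id t).smul_const e
  have hgd : ∀ t : ℝ, HasDerivAt (fun t : ℝ => A - 2 * ∑ i, ∑ j, hg c (z i j + t • e))
      (Hd' c z (t • e) e) t :=
    fun t => by have := (hasHd' c A z (t • e)).comp_hasDerivAt t (hline t); exact this
  have hg1 : HasDerivAt (fun t : ℝ => Hd' c z (t • e) e) (Hd'' c z 0 e e) 0 := by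
    have h1 := (ContinuousLinearMap.apply ℝ ℝ e).hasFDerivAt.comp
      ((0:ℝ) • e) (hasHd'' c z ((0:ℝ) • e))
    have h2 := h1.comp_hasDerivAt 0 (hline 0)
    simp at h2
    exact h2
  have hmin' : IsLocalMin (fun t : ℝ => A - 2 * ∑ i, ∑ j, hg c (z i j + t • e)) 0 := by
    have hmin0 : IsLocalMin (fun v => A - 2 * ∑ i, ∑ j, hg c (z i j + v)) ((0:ℝ) • e) := by
      rwa [zero_smul]
    exact IsLocalMin.comp_continuous (g := fun t : ℝ => t • e) (b := 0) hmin0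
      ((continuous_id.smul continuous_const : Continuous fun t : ℝ => t • e)).continuousAt
  exact not_isLocalMin_1d hgd hg1 hl hmin'


set_option maxHeartbeats 1000000

/-- for the Gaussian potential `h(x) = e^{-c‖x‖²/2}` one has
`Δh(x) = c(c‖x‖² - d) e^{-c‖x‖²/2}`, so `h` is strictly subharmonic outside the ball
of radius `√(d/c)`. For the fixed-charge loss `L`, if `c‖θᵢ-wⱼ‖² > d` for all `i,j`
then the correlated translation `H(v) = L(θ+v)` has `ΔH(0) = -2∑ Δh(θᵢ-wⱼ) < 0` and
`θ` is not a local minimum of `L`; hence at any local minimum there are `i, j` with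
`‖θᵢ-wⱼ‖² ≤ d/c`. -/
theorem stmt15 {d k : ℕ} (hk : 0 < k) (c : ℝ) (hc : 0 < c)
    (h : EuclideanSpace ℝ (Fin d) → ℝ)
    (hdef : ∀ x, h x = Real.exp (-c * ‖x‖ ^ 2 / 2))
    (w : Fin k → EuclideanSpace ℝ (Fin d))
    (L : (Fin k → EuclideanSpace ℝ (Fin d)) → ℝ)
    (hL : L = fun θ => 2 * ∑ i, ∑ j ∈ Finset.univ.filter (fun j => i < j), h (θ i - θ j)
      - 2 * ∑ i, ∑ j, h (θ i - w j)) :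
    (∀ x : EuclideanSpace ℝ (Fin d),
      laplacian h x = c * (c * ‖x‖ ^ 2 - d) * Real.exp (-c * ‖x‖ ^ 2 / 2)) ∧
    (∀ θ : Fin k → EuclideanSpace ℝ (Fin d),
      (∀ i j, (d : ℝ) < c * ‖θ i - w j‖ ^ 2) →
        laplacian (fun v => L (fun i => θ i + v)) 0
            = -2 * ∑ i, ∑ j, laplacian h (θ i - w j) ∧
        laplacian (fun v => L (fun i => θ i + v)) 0 < 0 ∧
        ¬ IsLocalMin L θ) ∧
    (∀ θ : Fin k → EuclideanSpace ℝ (Fin d),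
      IsLocalMin L θ → ∃ i j, ‖θ i - w j‖ ^ 2 ≤ (d : ℝ) / c) := by
  have hh : h = hg c := funext fun x => (hdef x).trans rfl
  subst hh
  subst hL
  have part2 : ∀ θ : Fin k → EuclideanSpace ℝ (Fin d),
      (∀ i j, (d : ℝ) < c * ‖θ i - w j‖ ^ 2) →
        laplacian (fun v => (fun θ : Fin k → EuclideanSpace ℝ (Fin d) =>
            2 * ∑ i, ∑ j ∈ Finset.univ.filter (fun j => i < j), hg c (θ i - θ j)
              - 2 * ∑ i, ∑ j, hg c (θ i - w j)) (fun i => θ i + v)) 0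
            = -2 * ∑ i, ∑ j, laplacian (hg c) (θ i - w j) ∧
        laplacian (fun v => (fun θ : Fin k → EuclideanSpace ℝ (Fin d) =>
            2 * ∑ i, ∑ j ∈ Finset.univ.filter (fun j => i < j), hg c (θ i - θ j)
              - 2 * ∑ i, ∑ j, hg c (θ i - w j)) (fun i => θ i + v)) 0 < 0 ∧
        ¬ IsLocalMin (fun θ : Fin k → EuclideanSpace ℝ (Fin d) =>
            2 * ∑ i, ∑ j ∈ Finset.univ.filter (fun j => i < j), hg c (θ i - θ j)
              - 2 * ∑ i, ∑ j, hg c (θ i - w j)) θ := by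
    intro θ hfar
    set z : Fin k → Fin k → EuclideanSpace ℝ (Fin d) := fun i j => θ i - w j with hz
    set A : ℝ := 2 * ∑ i, ∑ j ∈ Finset.univ.filter (fun j => i < j), hg c (θ i - θ j)
      with hA
    have hEq : (fun v => (fun θ : Fin k → EuclideanSpace ℝ (Fin d) =>
        2 * ∑ i, ∑ j ∈ Finset.univ.filter (fun j => i < j), hg c (θ i - θ j)
          - 2 * ∑ i, ∑ j, hg c (θ i - w j)) (fun i => θ i + v))
        = fun v => A - 2 * ∑ i, ∑ j, hg c (z i j + v) := by
      funext v
      simp only [hA, hz, add_sub_add_right_eq_sub, add_sub_right_comm, sub_add_eq_sub_sub, sub_add_cancel]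
    have hneg : laplacian (fun v => A - 2 * ∑ i, ∑ j, hg c (z i j + v)) 0 < 0 := by
      rw [key]
      have hpos : (0:ℝ) < ∑ i, ∑ j, laplacian (hg c) (z i j) := by
        apply Finset.sum_pos _ (Finset.univ_nonempty_iff.mpr ⟨⟨0, hk⟩⟩)
        intro i _
        apply Finset.sum_pos _ (Finset.univ_nonempty_iff.mpr ⟨⟨0, hk⟩⟩)
        intro j _
        rw [lap_hg]
        exact mul_pos (mul_pos hc (sub_pos.mpr (hfar i j))) (Real.exp_pos _)
      linarith
    refine ⟨by rw [hEq, key], by rw [hEq]; exact hneg, ?_⟩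
    intro hmin
    have hT : Continuous (fun v : EuclideanSpace ℝ (Fin d) => fun i => θ i + v) :=
      continuous_pi fun i => continuous_const.add continuous_id
    have h0 : (fun i => θ i + (0 : EuclideanSpace ℝ (Fin d))) = θ :=
      funext fun i => add_zero _
    have hmin0 : IsLocalMin (fun θ' : Fin k → EuclideanSpace ℝ (Fin d) =>
        2 * ∑ i, ∑ j ∈ Finset.univ.filter (fun j => i < j), hg c (θ' i - θ' j)
          - 2 * ∑ i, ∑ j, hg c (θ' i - w j))
        ((fun v : EuclideanSpace ℝ (Fin d) => fun i => θ i + v) 0) := by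
      simpa [h0] using hmin
    have hmin' := IsLocalMin.comp_continuous
      (g := fun v : EuclideanSpace ℝ (Fin d) => fun i => θ i + v) (b := 0)
      hmin0 hT.continuousAt
    have : IsLocalMin (fun v => A - 2 * ∑ i, ∑ j, hg c (z i j + v)) 0 := by
      rw [← hEq]; exact hmin'
    exact not_min_key c A z hneg this
  refine ⟨lap_hg c, part2, ?_⟩
  intro θ hmin
  by_contra hcon
  push_neg at hcon
  have hfar : ∀ i j, (d : ℝ) < c * ‖θ i - w j‖ ^ 2 := by
    intro i j
    have := hcon i j
    rw [div_lt_iff₀ hc] at this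
    linarith [this]
  exact (part2 θ hfar).2.2 hmin
end

section
/- Let d ≥ 2, let l ≥ 3 be an integer, let w₁,…,w_d be an orthonormal basis of ℝ^d, and let b ∈ ℝ^d. Define L : ℝ × S^{d−1} → ℝ by L(a, θ) = a² + 2a Σ_{j=1}^d b_j ⟨θ, w_j⟩^l (the single-node loss for the polynomial potential Φ(θ, w) = (θᵀw)^l on the unit sphere). If (a, θ) is a local minimum of L on ℝ × S^{d−1} with a ≠ 0, then θ = w_j or θ = −w_j for some j. Equivalently, every critical point of L with a ≠ 0 at which θ has at least two nonzero coordinates ⟨θ, w_i⟩, ⟨θ, w_j⟩ (i ≠ j) has a direction of strictly negative curvature in the tangent space and so is not a local minimum. -/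
open Finset RealInnerProductSpace
open Filter Set Topology

lemma aux_snd_deriv_nonneg {φ φ' : ℝ → ℝ} {q : ℝ}
    (h1 : ∀ t, HasDerivAt φ (φ' t) t) (h2 : HasDerivAt φ' q 0)
    (hmin : IsLocalMin φ 0) : 0 ≤ q := by
  by_contra hq
  push_neg at hq
  have h0 : φ' 0 = 0 := by
    rw [← (h1 0).deriv]; exact hmin.deriv_eq_zero
  have hs : Tendsto (fun t => φ' t / t) (𝓝[≠] 0) (𝓝 q) := by
    have := hasDerivAt_iff_tendsto_slope.mp h2
    simpa [slope_fun_def, h0, div_eq_inv_mul] using this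
  have hev : ∀ᶠ t in 𝓝[≠] (0:ℝ), φ' t / t < 0 := hs.eventually (gt_mem_nhds hq)
  have hev' : ∀ᶠ t in 𝓝[>] (0:ℝ), φ' t / t < 0 :=
    hev.filter_mono (nhdsWithin_mono _ (fun x hx => ne_of_gt hx))
  obtain ⟨u, hu, hsub⟩ := mem_nhdsGT_iff_exists_Ioo_subset.mp hev'
  have hu0 : (0:ℝ) < u := hu
  have hneg : ∀ x ∈ Ioo (0:ℝ) u, φ' x < 0 := by
    intro x hx
    have h := hsub hx
    have hx0 : 0 < x := hx.1
    exact (div_neg_iff.mp h).resolve_left (fun ⟨_, h'⟩ => absurd hx0 (not_lt.mpr h'.le)) |>.1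
  have hanti : StrictAntiOn φ (Icc 0 u) := by
    apply strictAntiOn_of_deriv_neg (convex_Icc 0 u)
    · exact fun x _ => (h1 x).continuousAt.continuousWithinAt
    · intro x hx
      rw [interior_Icc] at hx
      rw [(h1 x).deriv]
      exact hneg x hx
  obtain ⟨ε, hε, hball⟩ := Metric.eventually_nhds_iff.mp hmin
  set t0 := min (u / 2) (ε / 2) with ht0
  have ht0pos : 0 < t0 := lt_min (by linarith) (by linarith)
  have hlt : φ t0 < φ 0 :=
    hanti (left_mem_Icc.mpr hu0.le)
      ⟨ht0pos.le, le_trans (min_le_left _ _) (by linarith)⟩ ht0pos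
  have hge : φ 0 ≤ φ t0 := by
    apply hball
    simp only [Real.dist_eq, sub_zero]
    rw [abs_of_pos ht0pos]
    exact lt_of_le_of_lt (min_le_right _ _) (by linarith)
  linarith

lemma aux_pullback {X : Type*} [TopologicalSpace X] {L : X → ℝ} {s : Set X} {p : X}
    (h : IsLocalMinOn L s p) {γ : ℝ → X} {t0 : ℝ} (hc : ContinuousAt γ t0)
    (hmem : ∀ t, γ t ∈ s) (hp : γ t0 = p) : IsLocalMin (L ∘ γ) t0 := by
  subst hp
  have ht : Tendsto γ (𝓝 t0) (𝓝[s] (γ t0)) := by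
    rw [tendsto_nhdsWithin_iff]
    exact ⟨hc, Eventually.of_forall hmem⟩
  exact IsMinFilter.comp_tendsto h ht

set_option maxHeartbeats 1000000 in
/-- for the single-node loss `L(a,θ) = a² + 2a ∑ⱼ bⱼ ⟨θ,wⱼ⟩^l` on
`ℝ × S^{d-1}` with orthonormal basis `w₁,…,w_d` and integer `l ≥ 3`, every local
minimum with `a ≠ 0` has `θ = ±wⱼ` for some `j`. -/
theorem stmt16 {d : ℕ} (hd : 2 ≤ d) (l : ℕ) (hl : 3 ≤ l)
    (w : Fin d → EuclideanSpace ℝ (Fin d)) (hw : Orthonormal ℝ w)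
    (b : Fin d → ℝ)
    (L : ℝ × EuclideanSpace ℝ (Fin d) → ℝ)
    (hL : L = fun p => p.1 ^ 2 + 2 * p.1 * ∑ j, b j * ⟪p.2, w j⟫ ^ l) :
    ∀ (a : ℝ) (θ : EuclideanSpace ℝ (Fin d)), ‖θ‖ = 1 → a ≠ 0 →
      IsLocalMinOn L {p : ℝ × EuclideanSpace ℝ (Fin d) | ‖p.2‖ = 1} (a, θ) →
      ∃ j, θ = w j ∨ θ = -w j := by
  intro a θ hθ ha hmin
  obtain ⟨k, rfl⟩ := Nat.exists_eq_add_of_le hl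
  subst hL
  haveI : Nonempty (Fin d) := ⟨⟨0, by omega⟩⟩
  set c : Fin d → ℝ := fun m => ⟪θ, w m⟫ with hc
  have hcard : Fintype.card (Fin d) = Module.finrank ℝ (EuclideanSpace ℝ (Fin d)) := by simp
  set B := (basisOfOrthonormalOfCardEqFinrank hw hcard).toOrthonormalBasis
      (by rwa [coe_basisOfOrthonormalOfCardEqFinrank]) with hBdef
  have hB : ⇑B = w := by
    rw [hBdef, Module.Basis.coe_toOrthonormalBasis, coe_basisOfOrthonormalOfCardEqFinrank]
  have hθθ : ⟪θ, θ⟫ = 1 := by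
    rw [real_inner_self_eq_norm_sq, hθ]; norm_num
  have hpar : ∑ m, c m ^ 2 = 1 := by
    have h2 := B.sum_inner_mul_inner θ θ
    rw [hB] at h2
    calc ∑ m, c m ^ 2 = ∑ m, ⟪θ, w m⟫ * ⟪w m, θ⟫ := by
          refine Finset.sum_congr rfl fun m _ => ?_
          rw [real_inner_comm θ (w m)]
          exact pow_two (c m)
    _ = ⟪θ, θ⟫ := h2
    _ = 1 := hθθ
  have hrep : ∑ m, c m • w m = θ := by
    have h2 := B.sum_repr' θ
    rw [hB] at h2
    calc (∑ m, c m • w m) = ∑ m, ⟪w m, θ⟫ • w m := by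
          refine Finset.sum_congr rfl fun m _ => ?_
          rw [real_inner_comm θ (w m)]
    _ = θ := h2
  have hite : ∀ p q : Fin d, ⟪w p, w q⟫ = if p = q then 1 else 0 :=
    fun p q => orthonormal_iff_ite.mp hw p q
  -- Step 1: stationarity in a
  set f := ∑ m, b m * c m ^ (3 + k) with hfdef
  have hstep1 : a + f = 0 := by
    have hloc : IsLocalMin (fun t : ℝ => t ^ 2 + 2 * t * f) a := by
      have h := aux_pullback hmin (γ := fun t : ℝ => (t, θ)) (t0 := a)
        (by fun_prop) (fun t => hθ) rfl
      have heq : ((fun p : ℝ × EuclideanSpace ℝ (Fin d) =>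
          p.1 ^ 2 + 2 * p.1 * ∑ j, b j * ⟪p.2, w j⟫ ^ (3 + k)) ∘ (fun t : ℝ => (t, θ)))
          = fun t : ℝ => t ^ 2 + 2 * t * f := by
        funext t; rfl
      exact heq ▸ h
    have hD : HasDerivAt (fun t : ℝ => t ^ 2 + 2 * t * f) (2 * a + 2 * f) a := by
      have h2 : HasDerivAt (fun t : ℝ => 2 * t * f) (2 * f) a := by
        simpa using (((hasDerivAt_id a).const_mul 2).mul_const f)
      have h1 := hasDerivAt_pow 2 a
      refine (h1.add h2).congr_deriv (Eq.symm ?_)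
      push_cast; ring
    have h0 := hloc.hasDerivAt_eq_zero hD
    linarith

  -- Key: second-order analysis along rotations in coordinate 2-planes
  have key : ∀ p q : Fin d, p ≠ q → c p ≠ 0 → c q ≠ 0 →
      b p * c p ^ (k + 1) = b q * c q ^ (k + 1) ∧ 0 ≤ a * (b p * c p ^ (k + 1)) := by
    intro p q hpq hcp hcq
    set x : ℝ → EuclideanSpace ℝ (Fin d) := fun t =>
      θ + ((Real.cos t - 1) * c p - Real.sin t * c q) • w p
        + ((Real.cos t - 1) * c q + Real.sin t * c p) • w q with hx
    have hinner : ∀ (t : ℝ) (m : Fin d), ⟪x t, w m⟫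
        = c m + ((Real.cos t - 1) * c p - Real.sin t * c q) * (if p = m then 1 else 0)
              + ((Real.cos t - 1) * c q + Real.sin t * c p) * (if q = m then 1 else 0) := by
      intro t m
      rw [hx]
      simp only [inner_add_left, real_inner_smul_left, hite]
      rfl
    have hup : ∀ t, ⟪x t, w p⟫ = c p * Real.cos t - c q * Real.sin t := by
      intro t; rw [hinner t p, if_pos rfl, if_neg (Ne.symm hpq)]; ring
    have hvq : ∀ t, ⟪x t, w q⟫ = c q * Real.cos t + c p * Real.sin t := by
      intro t; rw [hinner t q, if_neg hpq, if_pos rfl]; ring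
    have hom : ∀ (t : ℝ) (m : Fin d), m ≠ p → m ≠ q → ⟪x t, w m⟫ = c m := by
      intro t m h1 h2
      rw [hinner t m, if_neg (fun h => h1 h.symm), if_neg (fun h => h2 h.symm)]; ring
    have hnorm : ∀ t, ‖x t‖ = 1 := by
      intro t
      have hxx : ⟪x t, x t⟫ = 1 := by
        rw [hx]
        simp only [inner_add_left, inner_add_right, real_inner_smul_left,
          real_inner_smul_right, hite, hθθ, hpq, Ne.symm hpq, if_true, if_false,
          eq_self_iff_true, ite_true, ite_false]
        rw [real_inner_comm θ (w p), real_inner_comm θ (w q)]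
        rw [show (⟪θ, w p⟫ : ℝ) = c p from rfl, show (⟪θ, w q⟫ : ℝ) = c q from rfl]
        linear_combination (c p ^ 2 + c q ^ 2) * (Real.sin_sq_add_cos_sq t)
      have hmul : ‖x t‖ * ‖x t‖ = 1 := by
        rw [← real_inner_self_eq_norm_mul_norm]; exact hxx
      rcases mul_self_eq_one_iff.mp hmul with h | h
      · exact h
      · linarith [norm_nonneg (x t)]
    have hx0 : x 0 = θ := by
      rw [hx]; simp
    have hcx : Continuous x := by
      rw [hx]; fun_prop
    have hlocF := aux_pullback hmin (γ := fun t : ℝ => (a, x t)) (t0 := 0)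
      (continuous_const.prodMk hcx).continuousAt (fun t => hnorm t) (by simp [hx0])
    set S := ∑ m ∈ (univ.erase p).erase q, b m * c m ^ (3 + k) with hS
    have hLF : ((fun p' : ℝ × EuclideanSpace ℝ (Fin d) =>
          p'.1 ^ 2 + 2 * p'.1 * ∑ j, b j * ⟪p'.2, w j⟫ ^ (3 + k)) ∘ (fun t : ℝ => (a, x t)))
        = fun t : ℝ => a ^ 2 + 2 * a * (S + (b p * (c p * Real.cos t - c q * Real.sin t) ^ (3 + k)
            + b q * (c q * Real.cos t + c p * Real.sin t) ^ (3 + k))) := by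
      funext t
      simp only [Function.comp_apply]
      have e1 := Finset.sum_erase_add univ (fun m => b m * ⟪x t, w m⟫ ^ (3 + k)) (Finset.mem_univ p)
      have hqmem : q ∈ univ.erase p := Finset.mem_erase.mpr ⟨Ne.symm hpq, Finset.mem_univ q⟩
      have e2 := Finset.sum_erase_add (univ.erase p) (fun m => b m * ⟪x t, w m⟫ ^ (3 + k)) hqmem
      have e3 : ∑ m ∈ (univ.erase p).erase q, b m * ⟪x t, w m⟫ ^ (3 + k) = S := by
        rw [hS]
        refine Finset.sum_congr rfl fun m hm => ?_
        rw [hom t m (Finset.mem_erase.mp (Finset.mem_erase.mp hm).2).1 (Finset.mem_erase.mp hm).1]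
      rw [← e1, ← e2, e3]
      simp only [hup, hvq]
      ring
    rw [hLF] at hlocF
    have hu : ∀ t : ℝ, HasDerivAt (fun s => c p * Real.cos s - c q * Real.sin s)
        (c p * -Real.sin t - c q * Real.cos t) t :=
      fun t => ((Real.hasDerivAt_cos t).const_mul (c p)).sub ((Real.hasDerivAt_sin t).const_mul (c q))
    have hv : ∀ t : ℝ, HasDerivAt (fun s => c q * Real.cos s + c p * Real.sin s)
        (c q * -Real.sin t + c p * Real.cos t) t :=
      fun t => ((Real.hasDerivAt_cos t).const_mul (c q)).add ((Real.hasDerivAt_sin t).const_mul (c p))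
    have hdF : ∀ t : ℝ, HasDerivAt (fun s : ℝ => a ^ 2 + 2 * a * (S
          + (b p * (c p * Real.cos s - c q * Real.sin s) ^ (3 + k)
            + b q * (c q * Real.cos s + c p * Real.sin s) ^ (3 + k))))
        (2 * a * (b p * (((3 + k : ℕ) : ℝ) * (c p * Real.cos t - c q * Real.sin t) ^ (3 + k - 1)
            * (c p * -Real.sin t - c q * Real.cos t))
          + b q * (((3 + k : ℕ) : ℝ) * (c q * Real.cos t + c p * Real.sin t) ^ (3 + k - 1)
            * (c q * -Real.sin t + c p * Real.cos t)))) t := by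
      intro t
      exact ((((((hu t).pow (3 + k)).const_mul (b p)).add
        (((hv t).pow (3 + k)).const_mul (b q))).const_add S).const_mul (2 * a)).const_add (a ^ 2)
    have hF'0 := hlocF.hasDerivAt_eq_zero (hdF 0)
    have hu' : HasDerivAt (fun s => c p * -Real.sin s - c q * Real.cos s)
        (c p * -Real.cos 0 - c q * -Real.sin 0) 0 :=
      (((Real.hasDerivAt_sin 0).neg.const_mul (c p)).sub ((Real.hasDerivAt_cos 0).const_mul (c q)))
    have hv' : HasDerivAt (fun s => c q * -Real.sin s + c p * Real.cos s)
        (c q * -Real.cos 0 + c p * -Real.sin 0) 0 :=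
      (((Real.hasDerivAt_sin 0).neg.const_mul (c q)).add ((Real.hasDerivAt_cos 0).const_mul (c p)))
    have h5 : b p * c p ^ (k + 1) = b q * c q ^ (k + 1) := by
      simp only [Real.cos_zero, Real.sin_zero,
        show (3:ℕ) + k - 1 = 2 + k from by omega] at hF'0
      push_cast at hF'0
      have hM : (2 * a * ((3:ℝ) + (k:ℝ)) * (c p * c q)) ≠ 0 :=
        mul_ne_zero (mul_ne_zero (mul_ne_zero two_ne_zero ha) (by positivity))
          (mul_ne_zero hcp hcq)
      apply mul_left_cancel₀ hM
      linear_combination (-1 : ℝ) * hF'0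
    have hd2 : HasDerivAt (fun t : ℝ =>
        2 * a * (b p * (((3 + k : ℕ) : ℝ) * (c p * Real.cos t - c q * Real.sin t) ^ (3 + k - 1)
            * (c p * -Real.sin t - c q * Real.cos t))
          + b q * (((3 + k : ℕ) : ℝ) * (c q * Real.cos t + c p * Real.sin t) ^ (3 + k - 1)
            * (c q * -Real.sin t + c p * Real.cos t))))
        ((2 * (3 + (k:ℝ)) * (1 + (k:ℝ)) * (c p ^ 2 + c q ^ 2)) * (a * (b p * c p ^ (k + 1)))) 0 := by
      have rawp := ((((hu 0).pow (3 + k - 1)).const_mul (((3 + k : ℕ) : ℝ))).mul hu').const_mul (b p)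
      have rawq := ((((hv 0).pow (3 + k - 1)).const_mul (((3 + k : ℕ) : ℝ))).mul hv').const_mul (b q)
      have raw := (rawp.add rawq).const_mul (2 * a)
      refine raw.congr_deriv (Eq.symm ?_)
      simp only [Pi.pow_apply, Real.cos_zero, Real.sin_zero, show (3:ℕ) + k - 1 = 2 + k from by omega,
        show (2:ℕ) + k - 1 = 1 + k from by omega]
      push_cast
      linear_combination (2 * a * (3 + (k:ℝ)) * ((2 + (k:ℝ)) * c p ^ 2 - c q ^ 2)) * h5
    have hQ := aux_snd_deriv_nonneg hdF hd2 hlocF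
    refine ⟨h5, ?_⟩
    have hcp2 : (0:ℝ) < c p ^ 2 := by
      rcases hcp.lt_or_gt with h | h <;> nlinarith
    have hKpos : (0:ℝ) < 2 * (3 + (k:ℝ)) * (1 + (k:ℝ)) * (c p ^ 2 + c q ^ 2) := by
      have h2 : (0:ℝ) ≤ c q ^ 2 := sq_nonneg _
      have hsum : (0:ℝ) < c p ^ 2 + c q ^ 2 := by linarith
      have h3 : (0:ℝ) < 3 + (k:ℝ) := by positivity
      have h4 : (0:ℝ) < 1 + (k:ℝ) := by positivity
      exact mul_pos (mul_pos (mul_pos two_pos h3) h4) hsum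
    by_contra hneg
    push_neg at hneg
    have hprod := mul_pos hKpos (neg_pos.mpr hneg)
    linarith [hQ, hprod]
  by_cases htwo : ∃ i j : Fin d, i ≠ j ∧ c i ≠ 0 ∧ c j ≠ 0
  · exfalso
    obtain ⟨i, j, hij, hci, hcj⟩ := htwo
    have hμm : ∀ m, b m * c m ^ (3 + k) = (b i * c i ^ (k + 1)) * c m ^ 2 := by
      intro m
      by_cases hm : c m = 0
      · rw [hm, zero_pow (by omega : (3:ℕ) + k ≠ 0), zero_pow (by norm_num : (2:ℕ) ≠ 0)]
        ring
      · by_cases hmi : m = i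
        · subst hmi
          rw [show (3:ℕ) + k = (k + 1) + 2 from by omega, pow_add]
          ring
        · have hk2 := (key i m (fun h => hmi h.symm) hci hm).1
          rw [show (3:ℕ) + k = (k + 1) + 2 from by omega, pow_add]
          linear_combination (-(c m ^ 2)) * hk2
    have hfμ : f = b i * c i ^ (k + 1) := by
      rw [hfdef, Finset.sum_congr rfl (fun m _ => hμm m), ← Finset.mul_sum, hpar, mul_one]
    have haμ := (key i j hij hci hcj).2
    have hac : a = -(b i * c i ^ (k + 1)) := by linarith [hstep1, hfμ]
    rw [hac] at haμ
    have hz : b i * c i ^ (k + 1) = 0 := by nlinarith [sq_nonneg (b i * c i ^ (k + 1))]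
    exact ha (by rw [hac, hz, neg_zero])
  · push_neg at htwo
    have hex : ∃ m, c m ≠ 0 := by
      by_contra hno
      push_neg at hno
      have hf0 : f = 0 := by
        rw [hfdef]
        apply Finset.sum_eq_zero
        intro m _
        rw [hno m, zero_pow (by omega : (3:ℕ) + k ≠ 0), mul_zero]
      exact ha (by linarith [hstep1, hf0])
    obtain ⟨m, hm⟩ := hex
    have hall : ∀ n, n ≠ m → c n = 0 := fun n hn => htwo m n (fun h => hn h.symm) hm
    have hθm : θ = c m • w m := by
      rw [← hrep]
      rw [Finset.sum_eq_single m (fun n _ hn => by rw [hall n hn, zero_smul])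
        (fun h => absurd (Finset.mem_univ m) h)]
    have hcm1 : c m = 1 ∨ c m = -1 := by
      have hnm : ‖θ‖ = |c m| := by
        rw [hθm, norm_smul]
        simp [hw.1 m, Real.norm_eq_abs]
      rw [hθ] at hnm
      exact (abs_eq zero_le_one).mp hnm.symm
    rcases hcm1 with h | h
    · exact ⟨m, Or.inl (by rw [hθm, h, one_smul])⟩
    · exact ⟨m, Or.inr (by rw [hθm, h]; simp)⟩
end

section
/- Let w₁,…,w_k ∈ S¹ be unit vectors in ℝ², and let b₁,…,b_k ∈ ℝ be such that for every choice of signs ε ∈ {−1, +1}^k one has Σ_{j=1}^k ε_j b_j ≠ 0. Define F : S¹ → ℝ by F(θ) = Σ_{j=1}^k b_j (1 − (2/π) arccos(⟨θ, w_j⟩)), i.e., the interaction of θ with the target nodes under the sign-activation potential Φ(θ, w) = 1 − (2/π) cos⁻¹(θᵀw). Then every local minimum (indeed every local extremum) θ of F on S¹ satisfies θ = w_j or θ = −w_j for some j. In particular, for almost every b ∈ ℝ^k all local minima of the single-node sign-activation loss on S¹ lie at ±w_j. -/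
open Finset RealInnerProductSpace

private lemma key_arccos (c s : ℝ) (h : c ^ 2 + s ^ 2 = 1) (hc : |c| < 1) :
    ∃ σ : ℝ, (σ = 1 ∨ σ = -1) ∧ ∀ᶠ t in nhds (0 : ℝ),
      Real.arccos (c * Real.cos t + s * Real.sin t) = Real.arccos c + σ * t := by
  obtain ⟨hc1, hc2⟩ := abs_lt.1 hc
  set φ := Real.arccos c with hφ
  have hφ0 : 0 < φ := Real.arccos_pos.2 hc2
  have hcos : Real.cos φ = c := Real.cos_arccos (by linarith) (by linarith)
  have hφReal.pi : φ < Real.pi := by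
    rcases lt_or_eq_of_le (Real.arccos_le_pi c) with h' | h'
    · exact h'
    · exfalso; rw [hφ, h'] at hcos; rw [Real.cos_pi] at hcos; linarith
  have hsin : Real.sin φ = |s| := by
    rw [hφ, Real.sin_arccos]
    have : 1 - c ^ 2 = s ^ 2 := by linarith
    rw [this, Real.sqrt_sq_eq_abs]
  have hs0 : s ≠ 0 := by
    intro h0
    rw [h0] at h
    nlinarith
  rcases lt_or_gt_of_ne hs0 with hneg | hpos
  · -- s < 0 : sin φ = -s, expression = cos (φ + t)
    refine ⟨1, Or.inl rfl, ?_⟩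
    have hsin' : Real.sin φ = -s := by rw [hsin, abs_of_neg hneg]
    rw [Metric.eventually_nhds_iff]
    refine ⟨min φ (Real.pi - φ), lt_min hφ0 (by linarith), fun t ht => ?_⟩
    rw [Real.dist_eq, sub_zero] at ht
    have h1 := abs_lt.1 (lt_of_lt_of_le ht (min_le_left _ _))
    have h2 := abs_lt.1 (lt_of_lt_of_le ht (min_le_right _ _))
    have : c * Real.cos t + s * Real.sin t = Real.cos (φ + t) := by
      rw [Real.cos_add, hcos, hsin']; ring
    rw [this, Real.arccos_cos (by linarith) (by linarith)]; ring
  · -- s > 0 : sin φ = s, expression = cos (φ - t)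
    refine ⟨-1, Or.inr rfl, ?_⟩
    have hsin' : Real.sin φ = s := by rw [hsin, abs_of_pos hpos]
    rw [Metric.eventually_nhds_iff]
    refine ⟨min φ (Real.pi - φ), lt_min hφ0 (by linarith), fun t ht => ?_⟩
    rw [Real.dist_eq, sub_zero] at ht
    have h1 := abs_lt.1 (lt_of_lt_of_le ht (min_le_left _ _))
    have h2 := abs_lt.1 (lt_of_lt_of_le ht (min_le_right _ _))
    have : c * Real.cos t + s * Real.sin t = Real.cos (φ - t) := by
      rw [Real.cos_sub, hcos, hsin']
    rw [this, Real.arccos_cos (by linarith) (by linarith)]; ring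

private lemma no_affine_extr (A B : ℝ) (hB : B ≠ 0) (g : ℝ → ℝ)
    (hg : ∀ᶠ t in nhds (0 : ℝ), g t = A + B * t)
    (hext : IsExtrFilter g (nhds 0) 0) : False := by
  have hg0 : g 0 = A := by simpa using hg.self_of_nhds
  rcases hext with hmin | hmax
  · have h : ∀ᶠ t in nhds (0:ℝ), 0 ≤ B * t := by
      filter_upwards [hmin, hg] with t h1 h2
      rw [hg0] at h1; rw [h2] at h1; linarith
    rw [Metric.eventually_nhds_iff] at h
    obtain ⟨ε, hε, hh⟩ := h
    rcases lt_or_gt_of_ne hB with hBneg | hBpos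
    · have := hh (y := ε / 2) (by rw [Real.dist_eq, sub_zero, abs_of_pos (by linarith)]; linarith)
      nlinarith
    · have := hh (y := -(ε / 2)) (by rw [Real.dist_eq, sub_zero, abs_of_neg (by linarith)]; linarith)
      nlinarith
  · have h : ∀ᶠ t in nhds (0:ℝ), B * t ≤ 0 := by
      filter_upwards [hmax, hg] with t h1 h2
      rw [hg0] at h1; rw [h2] at h1; linarith
    rw [Metric.eventually_nhds_iff] at h
    obtain ⟨ε, hε, hh⟩ := h
    rcases lt_or_gt_of_ne hB with hBneg | hBpos
    · have := hh (y := -(ε / 2)) (by rw [Real.dist_eq, sub_zero, abs_of_neg (by linarith)]; linarith)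
      nlinarith
    · have := hh (y := ε / 2) (by rw [Real.dist_eq, sub_zero, abs_of_pos (by linarith)]; linarith)
      nlinarith

/-- for unit vectors `w₁,…,w_k ∈ S¹` and generic weights `b`
(no signed subset sum of the `bⱼ` vanishes), every local extremum on `S¹` of
`F(θ) = ∑ⱼ bⱼ (1 - (2/π) arccos⟨θ,wⱼ⟩)` lies at `±wⱼ` for some `j`. -/
theorem stmt17 {k : ℕ} (w : Fin k → EuclideanSpace ℝ (Fin 2))
    (hw : ∀ j, ‖w j‖ = 1) (b : Fin k → ℝ)
    (hb : ∀ ε : Fin k → ℝ, (∀ j, ε j = 1 ∨ ε j = -1) → ∑ j, ε j * b j ≠ 0)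
    (F : EuclideanSpace ℝ (Fin 2) → ℝ)
    (hF : F = fun θ => ∑ j, b j * (1 - (2 / Real.pi) * Real.arccos ⟪θ, w j⟫)) :
    ∀ θ : EuclideanSpace ℝ (Fin 2), ‖θ‖ = 1 →
      IsLocalExtrOn F (Metric.sphere (0 : EuclideanSpace ℝ (Fin 2)) 1) θ →
      ∃ j, θ = w j ∨ θ = -w j := by
  intro θ hθ hext
  by_contra hne
  push_neg at hne
  -- coordinate facts
  have hcoord : ∀ x : EuclideanSpace ℝ (Fin 2), ‖x‖ = 1 → x 0 ^ 2 + x 1 ^ 2 = 1 := by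
    intro x hx
    rw [EuclideanSpace.norm_eq, Real.sqrt_eq_one, Fin.sum_univ_two] at hx
    simpa [Real.norm_eq_abs, sq_abs] using hx
  have hθc := hcoord θ hθ
  have hwc : ∀ j, w j 0 ^ 2 + w j 1 ^ 2 = 1 := fun j => hcoord (w j) (hw j)
  have hinner : ∀ x y : EuclideanSpace ℝ (Fin 2), ⟪x, y⟫ = x 0 * y 0 + x 1 * y 1 := by
    intro x y
    simp [PiLp.inner_apply, RCLike.inner_apply, Fin.sum_univ_two]; ring
  set cc : Fin k → ℝ := fun j => θ 0 * w j 0 + θ 1 * w j 1 with hccdef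
  set s : Fin k → ℝ := fun j => θ 0 * w j 1 - θ 1 * w j 0 with hsdef
  have hcc : ∀ j, ⟪θ, w j⟫ = cc j := fun j => hinner θ (w j)
  have hcs : ∀ j, cc j ^ 2 + s j ^ 2 = 1 := by
    intro j
    have : cc j ^ 2 + s j ^ 2 = (θ 0 ^ 2 + θ 1 ^ 2) * (w j 0 ^ 2 + w j 1 ^ 2) := by
      simp only [hccdef, hsdef]; ring
    rw [this, hθc, hwc j, one_mul]
  have habs : ∀ j, |cc j| < 1 := by
    intro j
    have h1 : |cc j| ≤ 1 := by
      have := abs_real_inner_le_norm θ (w j)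
      rw [hθ, hw j, one_mul, hcc j] at this
      exact this
    rcases h1.lt_or_eq with h | h
    · exact h
    · exfalso
      rcases (abs_eq (by norm_num : (0:ℝ) ≤ 1)).1 h with h' | h'
      · exact (hne j).1 ((inner_eq_one_iff_of_norm_eq_one (𝕜 := ℝ) hθ (hw j)).mp
          (by rw [hcc j, h']))
      · refine (hne j).2 ?_
        have hn : ‖-w j‖ = 1 := by rw [norm_neg]; exact hw j
        refine (inner_eq_one_iff_of_norm_eq_one (𝕜 := ℝ) hθ hn).mp ?_
        rw [inner_neg_right, hcc j, h']; norm_num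
  -- the rotation curve
  set γ : ℝ → EuclideanSpace ℝ (Fin 2) := fun t => (WithLp.equiv 2 (Fin 2 → ℝ)).symm
      ![θ 0 * Real.cos t - θ 1 * Real.sin t, θ 0 * Real.sin t + θ 1 * Real.cos t] with hγdef
  have hγ0 : ∀ t, γ t 0 = θ 0 * Real.cos t - θ 1 * Real.sin t := by
    intro t; simp [hγdef, WithLp.equiv_symm_apply, PiLp.toLp_apply]
  have hγ1 : ∀ t, γ t 1 = θ 0 * Real.sin t + θ 1 * Real.cos t := by
    intro t; simp [hγdef, WithLp.equiv_symm_apply, PiLp.toLp_apply]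
  have hγz : γ 0 = θ := by
    have h0 : γ 0 0 = θ 0 := by rw [hγ0]; simp
    have h1 : γ 0 1 = θ 1 := by rw [hγ1]; simp
    ext i
    fin_cases i
    · exact h0
    · exact h1
  have hγsph : ∀ t, γ t ∈ Metric.sphere (0 : EuclideanSpace ℝ (Fin 2)) 1 := by
    intro t
    rw [mem_sphere_zero_iff_norm, EuclideanSpace.norm_eq, Fin.sum_univ_two, Real.sqrt_eq_one]
    rw [Real.norm_eq_abs, Real.norm_eq_abs, sq_abs, sq_abs, hγ0, hγ1]
    have : (θ 0 * Real.cos t - θ 1 * Real.sin t) ^ 2 +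
        (θ 0 * Real.sin t + θ 1 * Real.cos t) ^ 2
        = (θ 0 ^ 2 + θ 1 ^ 2) * (Real.cos t ^ 2 + Real.sin t ^ 2) := by ring
    rw [this, hθc, Real.cos_sq_add_sin_sq, one_mul]
  have hcont : Continuous γ := by
    refine (PiLp.continuous_toLp 2 fun _ : Fin 2 => ℝ).comp ?_
    refine continuous_pi fun i => ?_
    fin_cases i <;> simp <;> fun_prop
  have htend : Filter.Tendsto γ (nhds 0)
      (nhdsWithin θ (Metric.sphere (0 : EuclideanSpace ℝ (Fin 2)) 1)) := by
    refine tendsto_nhdsWithin_of_tendsto_nhds_of_eventually_within γ ?_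
      (Filter.Eventually.of_forall hγsph)
    have := hcont.tendsto 0
    rwa [hγz] at this
  have hext' : IsExtrFilter F (nhdsWithin θ (Metric.sphere (0 : EuclideanSpace ℝ (Fin 2)) 1))
      (γ 0) := by rw [hγz]; exact hext
  have hcomp : IsExtrFilter (F ∘ γ) (nhds 0) 0 := hext'.comp_tendsto htend
  -- inner product along the curve
  have hinnγ : ∀ t j, ⟪γ t, w j⟫ = cc j * Real.cos t + s j * Real.sin t := by
    intro t j
    rw [hinner, hγ0, hγ1]
    simp only [hccdef, hsdef]; ring
  -- local slopes
  choose σ hσ1 hσ2 using fun j => key_arccos (cc j) (s j) (hcs j) (habs j)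
  have hall : ∀ᶠ t in nhds (0:ℝ), ∀ j, Real.arccos (cc j * Real.cos t + s j * Real.sin t)
      = Real.arccos (cc j) + σ j * t := Filter.eventually_all.2 hσ2
  set B : ℝ := -(2 / Real.pi) * ∑ j, σ j * b j with hBdef
  have hB : B ≠ 0 := by
    have hπ : Real.pi ≠ 0 := Real.pi_ne_zero
    have h1 : (2 / Real.pi : ℝ) ≠ 0 := div_ne_zero two_ne_zero hπ
    exact mul_ne_zero (neg_ne_zero.2 h1) (hb σ hσ1)
  have hFγ : ∀ᶠ t in nhds (0:ℝ), (F ∘ γ) t = F θ + B * t := by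
    filter_upwards [hall] with t ht
    have hFθ : F θ = ∑ j, b j * (1 - 2 / Real.pi * Real.arccos (cc j)) := by
      simp only [hF]
      exact Finset.sum_congr rfl fun j _ => by rw [hcc j]
    have hFx : F (γ t) = ∑ j, b j * (1 - 2 / Real.pi * Real.arccos ⟪γ t, w j⟫) := by
      simp only [hF]
    show F (γ t) = F θ + B * t
    rw [hFx, hFθ]
    calc ∑ j, b j * (1 - 2 / Real.pi * Real.arccos ⟪γ t, w j⟫)
        = ∑ j, (b j * (1 - 2 / Real.pi * Real.arccos (cc j))
            + -(2 / Real.pi) * (σ j * b j) * t) := by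
          refine Finset.sum_congr rfl fun j _ => ?_
          rw [hinnγ t j, ht j]; ring
      _ = (∑ j, b j * (1 - 2 / Real.pi * Real.arccos (cc j))) + B * t := by
          rw [Finset.sum_add_distrib]
          congr 1
          rw [hBdef, Finset.mul_sum, Finset.sum_mul]
  exact no_affine_extr (F θ) B hB (F ∘ γ) hFγ hcomp
end
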